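/- arXiv:1606.01245 — 5 statements merged into one kernel-verified Lean document; each statement's English description precedes it below -/
import Mathlib

section
/- Let X ∈ ℝ^{m×n} be a real matrix with rank(X) = r, and let d be any integer with d ≥ r. Then the nuclear norm of X satisfies ‖X‖_* = min over all U ∈ ℝ^{m×d}, V ∈ ℝ^{n×d} with X = UVᵀ of ‖U‖_F ‖V‖_F, and also ‖X‖_* = min over all U ∈ ℝ^{m×d}, V ∈ ℝ^{n×d} with X = UVᵀ of (‖U‖_F² + ‖V‖_F²)/2; moreover both minima are attained. -/
open Matrix
open Matrix

lemma svd_data {m n : ℕ} (X : Matrix (Fin m) (Fin n) ℝ) :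
    ∃ (p : Fin n → Fin n → ℝ) (y : Fin n → Fin m → ℝ),
      (∀ i j, ∑ a, p i a * p j a = (if i = j then (1:ℝ) else 0)) ∧
      (∀ a b, ∑ i, p i a * p i b = (if a = b then (1:ℝ) else 0)) ∧
      (∀ a b, X a b = ∑ i, y i a * p i b) ∧
      (∀ i j, ∑ a, y i a * y j a =
        (if i = j then (Matrix.isHermitian_conjTranspose_mul_self X).eigenvalues i else 0)) := by
  set hA := Matrix.isHermitian_conjTranspose_mul_self X with hAdef
  set P : Matrix (Fin n) (Fin n) ℝ := (hA.eigenvectorUnitary : Matrix (Fin n) (Fin n) ℝ) with hP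
  set e : Fin n → ℝ := hA.eigenvalues with he
  have h1 : P * star P = 1 := (Matrix.mem_unitaryGroup_iff).mp hA.eigenvectorUnitary.2
  have h2 : star P * P = 1 := (Matrix.mem_unitaryGroup_iff').mp hA.eigenvectorUnitary.2
  have K1 : ∀ i j, ∑ a, P a i * P a j = (if i = j then (1:ℝ) else 0) := by
    intro i j
    have := congrFun (congrFun h2 i) j
    simpa [Matrix.mul_apply, Matrix.one_apply, Matrix.star_apply, mul_comm] using this
  have K2 : ∀ a b, ∑ i, P a i * P b i = (if a = b then (1:ℝ) else 0) := by
    intro a b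
    have := congrFun (congrFun h1 a) b
    simpa [Matrix.mul_apply, Matrix.one_apply, Matrix.star_apply] using this
  have heig : ∀ j a, ∑ b, (Xᵀ * X) a b * P b j = e j * P a j := by
    intro j a
    have hb : ⇑(hA.eigenvectorBasis j) = (fun a => P a j) := by
      funext a; exact (hA.eigenvectorUnitary_apply a j).symm
    have h3 := congrFun (hA.mulVec_eigenvectorBasis j) a
    rw [hb, ← he] at h3
    simpa [Matrix.mulVec, dotProduct] using h3
  refine ⟨fun i a => P a i, fun i a => ∑ b, X a b * P b i, K1, K2, ?_, ?_⟩
  · intro a b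
    calc X a b = ∑ c, X a c * (if c = b then (1:ℝ) else 0) := by
          simp [mul_ite]
      _ = ∑ c, X a c * ∑ i, P c i * P b i := by
          simp_rw [K2]
      _ = ∑ i, (∑ c, X a c * P c i) * P b i := by
          simp_rw [Finset.mul_sum, Finset.sum_mul]
          rw [Finset.sum_comm]
          ring_nf
  · intro i j
    calc ∑ a, (∑ b, X a b * P b i) * (∑ c, X a c * P c j)
        = ∑ b, P b i * (∑ c, (∑ a, X a b * X a c) * P c j) := by
          simp_rw [Finset.sum_mul, Finset.mul_sum]
          rw [Finset.sum_comm]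
          refine Finset.sum_congr rfl fun b _ => ?_
          rw [Finset.sum_comm]
          refine Finset.sum_congr rfl fun c _ => ?_
          exact Finset.sum_congr rfl fun a _ => by ring
      _ = ∑ b, P b i * (e j * P b j) := by
          refine Finset.sum_congr rfl fun b _ => ?_
          congr 1
          have := heig j b
          simp only [Matrix.mul_apply, Matrix.transpose_apply] at this
          rw [← this]
      _ = (if i = j then e i else 0) := by
          have h4 : ∑ b, P b i * (e j * P b j) = e j * ∑ b, P b i * P b j := by
            rw [Finset.mul_sum]
            exact Finset.sum_congr rfl fun b _ => by ring
          rw [h4, K1 i j]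
          by_cases h : i = j <;> simp [h]

lemma sum_embed_mul {α β : Type*} [Fintype α] [Fintype β] [DecidableEq β] (ι : α ↪ β)
    (f g : α → ℝ) :
    ∑ j : β, (∑ i, if ι i = j then f i else 0) * (∑ i, if ι i = j then g i else 0)
      = ∑ i, f i * g i := by
  classical
  have h : ∀ j : β, (∑ i, if ι i = j then f i else 0) * (∑ i, if ι i = j then g i else 0)
      = ∑ i, ∑ k, if ι i = j then (if ι k = j then f i * g k else 0) else 0 := by
    intro j
    rw [Finset.sum_mul_sum]
    refine Finset.sum_congr rfl fun i _ => Finset.sum_congr rfl fun k _ => ?_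
    by_cases h1 : ι i = j <;> by_cases h2 : ι k = j <;> simp [h1, h2]
  simp_rw [h]
  rw [Finset.sum_comm]
  refine Finset.sum_congr rfl fun i _ => ?_
  rw [Finset.sum_comm]
  have h2 : ∀ k, ∑ j : β, (if ι i = j then (if ι k = j then f i * g k else 0) else 0)
      = if ι k = ι i then f i * g k else 0 := by
    intro k
    rw [Finset.sum_ite_eq]
    simp
  simp_rw [h2, ι.injective.eq_iff]
  simp

lemma sum_sum_mul_expand {m n k : ℕ} (f g : Fin k → Fin m → ℝ) (u v : Fin k → Fin n → ℝ) :
    ∑ a, ∑ b, (∑ i, f i a * u i b) * (∑ j, g j a * v j b)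
      = ∑ i, ∑ j, (∑ a, f i a * g j a) * (∑ b, u i b * v j b) := by
  have lhs : ∑ a, ∑ b, (∑ i, f i a * u i b) * (∑ j, g j a * v j b)
      = ∑ a, ∑ b, ∑ i, ∑ j, f i a * u i b * (g j a * v j b) := by
    refine Finset.sum_congr rfl fun a _ => Finset.sum_congr rfl fun b _ => ?_
    rw [Finset.sum_mul_sum]
  have rhs : ∑ i, ∑ j, (∑ a, f i a * g j a) * (∑ b, u i b * v j b)
      = ∑ i, ∑ j, ∑ a, ∑ b, f i a * g j a * (u i b * v j b) := by
    refine Finset.sum_congr rfl fun i _ => Finset.sum_congr rfl fun j _ => ?_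
    rw [Finset.sum_mul_sum]
  rw [lhs, rhs]
  calc ∑ a, ∑ b, ∑ i, ∑ j, f i a * u i b * (g j a * v j b)
      = ∑ a, ∑ i, ∑ b, ∑ j, f i a * u i b * (g j a * v j b) :=
        Finset.sum_congr rfl fun a _ => Finset.sum_comm
    _ = ∑ i, ∑ a, ∑ b, ∑ j, f i a * u i b * (g j a * v j b) := Finset.sum_comm
    _ = ∑ i, ∑ a, ∑ j, ∑ b, f i a * u i b * (g j a * v j b) :=
        Finset.sum_congr rfl fun i _ => Finset.sum_congr rfl fun a _ => Finset.sum_comm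
    _ = ∑ i, ∑ j, ∑ a, ∑ b, f i a * u i b * (g j a * v j b) :=
        Finset.sum_congr rfl fun i _ => Finset.sum_comm
    _ = ∑ i, ∑ j, ∑ a, ∑ b, f i a * g j a * (u i b * v j b) :=
        Finset.sum_congr rfl fun i _ => Finset.sum_congr rfl fun j _ =>
          Finset.sum_congr rfl fun a _ => Finset.sum_congr rfl fun b _ => by ring

lemma sum_mul_expand {m k : ℕ} (f g : Fin k → Fin m → ℝ) (c d : Fin k → ℝ) :
    ∑ a, (∑ i, c i * f i a) * (∑ j, d j * g j a)
      = ∑ i, ∑ j, c i * d j * (∑ a, f i a * g j a) := by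
  have lhs : ∑ a, (∑ i, c i * f i a) * (∑ j, d j * g j a)
      = ∑ a, ∑ i, ∑ j, c i * f i a * (d j * g j a) := by
    refine Finset.sum_congr rfl fun a _ => ?_
    rw [Finset.sum_mul_sum]
  rw [lhs]
  calc ∑ a, ∑ i, ∑ j, c i * f i a * (d j * g j a)
      = ∑ i, ∑ a, ∑ j, c i * f i a * (d j * g j a) := Finset.sum_comm
    _ = ∑ i, ∑ j, ∑ a, c i * f i a * (d j * g j a) :=
        Finset.sum_congr rfl fun i _ => Finset.sum_comm
    _ = ∑ i, ∑ j, c i * d j * (∑ a, f i a * g j a) := by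
        refine Finset.sum_congr rfl fun i _ => Finset.sum_congr rfl fun j _ => ?_
        rw [Finset.mul_sum]
        exact Finset.sum_congr rfl fun a _ => by ring


/-- The singular values of a real matrix `X`, i.e. the nonnegative square roots of the
eigenvalues of `Xᵀ * X` (zero-padded to `n` values; zero singular values contribute `0`
to all the sums below, so this is harmless). -/
noncomputable def singularValues {m n : ℕ} (X : Matrix (Fin m) (Fin n) ℝ) : Fin n → ℝ :=
  fun i => Real.sqrt ((Matrix.isHermitian_conjTranspose_mul_self X).eigenvalues i)

/-- The nuclear norm `‖X‖_* = Σ_i σ_i(X)`. -/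
noncomputable def nuclearNorm {m n : ℕ} (X : Matrix (Fin m) (Fin n) ℝ) : ℝ :=
  ∑ i, singularValues X i

/-- The Frobenius norm `‖X‖_F = (Σ_{i,j} X_{ij}²)^{1/2}`. -/
noncomputable def frobNorm {m n : ℕ} (X : Matrix (Fin m) (Fin n) ℝ) : ℝ :=
  Real.sqrt (∑ i, ∑ j, (X i j) ^ 2)

/-- For `X` of rank `r ≤ d`, the nuclear norm equals the minimum of
`‖U‖_F ‖V‖_F` and also of `(‖U‖_F² + ‖V‖_F²)/2` over factorizations `X = U Vᵀ` with
`U : m×d`, `V : n×d`, and both minima are attained. -/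
theorem nuclearNorm_eq_min_factorization {m n r d : ℕ} (X : Matrix (Fin m) (Fin n) ℝ)
    (hrank : X.rank = r) (hd : r ≤ d) :
    IsLeast {t : ℝ | ∃ (U : Matrix (Fin m) (Fin d) ℝ) (V : Matrix (Fin n) (Fin d) ℝ),
        X = U * Vᵀ ∧ t = frobNorm U * frobNorm V} (nuclearNorm X) ∧
    IsLeast {t : ℝ | ∃ (U : Matrix (Fin m) (Fin d) ℝ) (V : Matrix (Fin n) (Fin d) ℝ),
        X = U * Vᵀ ∧ t = (frobNorm U ^ 2 + frobNorm V ^ 2) / 2} (nuclearNorm X) := by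
  classical
  obtain ⟨p, y, K1, K2, K5, K3⟩ := svd_data X
  set e : Fin n → ℝ := (Matrix.isHermitian_conjTranspose_mul_self X).eigenvalues with he
  set σ : Fin n → ℝ := fun i => Real.sqrt (e i) with hσ
  have he_nonneg : ∀ i, 0 ≤ e i := fun i =>
    Matrix.eigenvalues_conjTranspose_mul_self_nonneg X i
  have hσ_nonneg : ∀ i, 0 ≤ σ i := fun i => Real.sqrt_nonneg _
  have hσ_sq : ∀ i, σ i ^ 2 = e i := fun i => Real.sq_sqrt (he_nonneg i)
  have hσ_zero : ∀ i, e i = 0 → σ i = 0 := fun i h => by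
    simp only [hσ]; rw [h, Real.sqrt_zero]
  have hσ_ne : ∀ i, e i ≠ 0 → σ i ≠ 0 := by
    intro i h hc
    exact h (by rw [← hσ_sq i, hc]; ring)
  have hy_zero : ∀ i, e i = 0 → ∀ a, y i a = 0 := by
    intro i h a
    have h0 := K3 i i
    rw [if_pos rfl, h] at h0
    have := (Finset.sum_eq_zero_iff_of_nonneg
      (fun a _ => mul_self_nonneg (y i a))).mp h0 a (Finset.mem_univ a)
    exact mul_self_eq_zero.mp this
  have hN : nuclearNorm X = ∑ i, σ i := rfl
  have hN_nonneg : 0 ≤ nuclearNorm X := by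
    rw [hN]; exact Finset.sum_nonneg fun i _ => hσ_nonneg i
  have frob_sq : ∀ {a b : ℕ} (M : Matrix (Fin a) (Fin b) ℝ),
      frobNorm M ^ 2 = ∑ i, ∑ j, M i j ^ 2 := fun M =>
    Real.sq_sqrt (Finset.sum_nonneg fun i _ => Finset.sum_nonneg fun j _ => sq_nonneg _)
  have frob_nonneg : ∀ {a b : ℕ} (M : Matrix (Fin a) (Fin b) ℝ), 0 ≤ frobNorm M :=
    fun _ => Real.sqrt_nonneg _
  -- the lower bound
  have key : ∀ (U : Matrix (Fin m) (Fin d) ℝ) (V : Matrix (Fin n) (Fin d) ℝ),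
      X = U * Vᵀ → nuclearNorm X ≤ frobNorm U * frobNorm V := by
    intro U V hUV
    set w : Fin n → Fin m → ℝ := fun i a => if e i = 0 then 0 else (σ i)⁻¹ * y i a with hw
    set W : Matrix (Fin m) (Fin n) ℝ := fun a b => ∑ i, w i a * p i b with hW
    have hww : ∀ i j, ∑ a, w i a * w j a = if i = j ∧ e i ≠ 0 then 1 else 0 := by
      intro i j
      by_cases hi : e i = 0
      · simp [hw, hi]
      · by_cases hj : e j = 0
        · have hij : i ≠ j := fun hc => hi (hc ▸ hj)
          simp [hw, hi, hj, hij]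
        · simp only [hw, if_neg hi, if_neg hj]
          have : ∑ a, (σ i)⁻¹ * y i a * ((σ j)⁻¹ * y j a)
              = (σ i)⁻¹ * (σ j)⁻¹ * ∑ a, y i a * y j a := by
            rw [Finset.mul_sum]
            exact Finset.sum_congr rfl fun a _ => by ring
          rw [this, K3 i j]
          by_cases hij : i = j
          · subst hij
            simp only [if_pos rfl, hi, ne_eq, not_false_eq_true, and_true]
            have hne := hσ_ne i hi
            rw [← hσ_sq i, sq]
            field_simp
            simp
          · simp [hij]
    have hwy : ∀ i, ∑ a, w i a * y i a = σ i := by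
      intro i
      by_cases hi : e i = 0
      · simp [hw, hi, hσ_zero i hi]
      · simp only [hw, if_neg hi]
        have h1 : ∑ a, (σ i)⁻¹ * y i a * y i a = (σ i)⁻¹ * ∑ a, y i a * y i a := by
          rw [Finset.mul_sum]
          exact Finset.sum_congr rfl fun a _ => by ring
        rw [h1, K3 i i, if_pos rfl, ← hσ_sq i, sq]
        field_simp [hσ_ne i hi]
    -- L1 : the Frobenius pairing of W with X equals the nuclear norm
    have L1 : ∑ a, ∑ b, W a b * X a b = nuclearNorm X := by
      have h1 : ∑ a, ∑ b, W a b * X a b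
          = ∑ i, ∑ j, (∑ a, w i a * y j a) * (∑ b, p i b * p j b) := by
        have := sum_sum_mul_expand (f := w) (g := y) (u := p) (v := p)
        rw [← this]
        refine Finset.sum_congr rfl fun a _ => Finset.sum_congr rfl fun b _ => ?_
        rw [hW, K5 a b]
      rw [h1, hN]
      refine Finset.sum_congr rfl fun i _ => ?_
      have h2 : ∀ j, (∑ a, w i a * y j a) * (∑ b, p i b * p j b)
          = if i = j then (∑ a, w i a * y j a) else 0 := by
        intro j
        rw [K1 i j]
        by_cases hij : i = j <;> simp [hij]
      simp_rw [h2]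
      rw [Finset.sum_ite_eq]
      simp [hwy i]
    -- L2 : rewrite the pairing using the factorization
    have hX' : ∀ a b, X a b = ∑ j, U a j * V b j := by
      intro a b
      rw [hUV]
      simp [Matrix.mul_apply]
    set C : Fin m → Fin d → ℝ := fun a j => ∑ b, W a b * V b j with hC
    have L2 : ∑ a, ∑ b, W a b * X a b = ∑ a, ∑ j, U a j * C a j := by
      refine Finset.sum_congr rfl fun a _ => ?_
      calc ∑ b, W a b * X a b = ∑ b, ∑ j, W a b * (U a j * V b j) := by
            refine Finset.sum_congr rfl fun b _ => ?_
            rw [hX' a b, Finset.mul_sum]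
        _ = ∑ j, ∑ b, W a b * (U a j * V b j) := Finset.sum_comm
        _ = ∑ j, U a j * C a j := by
            refine Finset.sum_congr rfl fun j _ => ?_
            rw [hC, Finset.mul_sum]
            exact Finset.sum_congr rfl fun b _ => by ring
    -- L4 : the squared Frobenius norm of W * V is at most that of V
    have L4 : ∑ j, ∑ a, C a j ^ 2 ≤ frobNorm V ^ 2 := by
      rw [frob_sq V]
      have colbound : ∀ j, ∑ a, C a j ^ 2 ≤ ∑ b, V b j ^ 2 := by
        intro j
        set v : Fin n → ℝ := fun b => V b j with hv
        have hCv : ∀ a, C a j = ∑ i, (∑ b, p i b * v b) * w i a := by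
          intro a
          calc C a j = ∑ b, (∑ i, w i a * p i b) * v b := rfl
            _ = ∑ b, ∑ i, w i a * p i b * v b := by
                refine Finset.sum_congr rfl fun b _ => ?_
                rw [Finset.sum_mul]
            _ = ∑ i, ∑ b, w i a * p i b * v b := Finset.sum_comm
            _ = ∑ i, (∑ b, p i b * v b) * w i a := by
                refine Finset.sum_congr rfl fun i _ => ?_
                rw [Finset.sum_mul]
                exact Finset.sum_congr rfl fun b _ => by ring
        set t : Fin n → ℝ := fun i => ∑ b, p i b * v b with ht
        have expand : ∑ a, C a j ^ 2 = ∑ i, ∑ k, t i * t k * (∑ a, w i a * w k a) := by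
          have h0 : ∀ a, C a j ^ 2 = (∑ i, t i * w i a) * (∑ k, t k * w k a) := by
            intro a
            rw [sq, hCv a]
          simp_rw [h0]
          exact sum_mul_expand w w t t
        have step1 : ∑ a, C a j ^ 2 ≤ ∑ i, t i ^ 2 := by
          rw [expand]
          have h1 : ∀ i : Fin n, ∑ k, t i * t k * (∑ a, w i a * w k a)
              = if e i ≠ 0 then t i ^ 2 else 0 := by
            intro i
            have h2 : ∀ k, t i * t k * (∑ a, w i a * w k a)
                = if i = k then (if e i ≠ 0 then t i ^ 2 else 0) else 0 := by
              intro k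
              rw [hww i k]
              by_cases hik : i = k
              · subst hik
                by_cases hi : e i ≠ 0 <;> simp [hi, sq]
              · simp [hik]
            simp_rw [h2]
            rw [Finset.sum_ite_eq]
            simp
          simp_rw [h1]
          refine Finset.sum_le_sum fun i _ => ?_
          by_cases hi : e i ≠ 0 <;> simp [hi, sq_nonneg]
        have parseval : ∑ i, t i ^ 2 = ∑ b, v b ^ 2 := by
          have h0 : ∀ i, t i ^ 2 = (∑ b, v b * p i b) * (∑ c, v c * p i c) := by
            intro i
            rw [sq, ht]
            simp only []
            congr 1 <;> exact Finset.sum_congr rfl fun b _ => by ring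
          simp_rw [h0]
          rw [sum_mul_expand (fun b i => p i b) (fun b i => p i b) v v]
          have h1 : ∀ b : Fin n, ∑ c, v b * v c * (∑ i, p i b * p i c)
              = v b ^ 2 := by
            intro b
            have h2 : ∀ c, v b * v c * (∑ i, p i b * p i c)
                = if b = c then v b ^ 2 else 0 := by
              intro c
              rw [K2 b c]
              by_cases hbc : b = c
              · subst hbc; simp [sq]
              · simp [hbc]
            simp_rw [h2]
            rw [Finset.sum_ite_eq]
            simp
          exact Finset.sum_congr rfl fun b _ => h1 b
        calc ∑ a, C a j ^ 2 ≤ ∑ i, t i ^ 2 := step1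
          _ = ∑ b, v b ^ 2 := parseval
      calc ∑ j, ∑ a, C a j ^ 2 ≤ ∑ j, ∑ b, V b j ^ 2 :=
            Finset.sum_le_sum fun j _ => colbound j
        _ = ∑ b, ∑ j, V b j ^ 2 := Finset.sum_comm
    -- combine using Cauchy–Schwarz
    have hcs : (∑ x : Fin m × Fin d, U x.1 x.2 * C x.1 x.2) ^ 2
        ≤ (∑ x : Fin m × Fin d, U x.1 x.2 ^ 2) * (∑ x : Fin m × Fin d, C x.1 x.2 ^ 2) :=
      Finset.sum_mul_sq_le_sq_mul_sq Finset.univ _ _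
    have hprod1 : ∑ x : Fin m × Fin d, U x.1 x.2 * C x.1 x.2 = ∑ a, ∑ j, U a j * C a j :=
      Fintype.sum_prod_type _
    have hprod2 : ∑ x : Fin m × Fin d, U x.1 x.2 ^ 2 = ∑ a, ∑ j, U a j ^ 2 :=
      Fintype.sum_prod_type _
    have hprod3 : ∑ x : Fin m × Fin d, C x.1 x.2 ^ 2 = ∑ j, ∑ a, C a j ^ 2 := by
      rw [Fintype.sum_prod_type]
      exact Finset.sum_comm
    have hNeq : nuclearNorm X = ∑ a, ∑ j, U a j * C a j := L1.symm.trans L2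
    have hfinal : nuclearNorm X ^ 2 ≤ (frobNorm U * frobNorm V) ^ 2 := by
      rw [hNeq, ← hprod1]
      calc (∑ x : Fin m × Fin d, U x.1 x.2 * C x.1 x.2) ^ 2
          ≤ (∑ x : Fin m × Fin d, U x.1 x.2 ^ 2) * (∑ x : Fin m × Fin d, C x.1 x.2 ^ 2) := hcs
        _ = (∑ a, ∑ j, U a j ^ 2) * (∑ j, ∑ a, C a j ^ 2) := by rw [hprod2, hprod3]
        _ ≤ frobNorm U ^ 2 * frobNorm V ^ 2 := by
            apply mul_le_mul
            · rw [frob_sq U]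
            · exact L4
            · refine Finset.sum_nonneg fun j _ => Finset.sum_nonneg fun a _ => sq_nonneg _
            · exact sq_nonneg _
        _ = (frobNorm U * frobNorm V) ^ 2 := by ring
    nlinarith [hN_nonneg, mul_nonneg (frob_nonneg U) (frob_nonneg V), hfinal]
  -- membership: construct an optimal factorization
  have hcard : Fintype.card {i // e i ≠ 0} ≤ d := by
    have h1 : (Xᵀ * X).rank = Fintype.card { i // e i ≠ 0 } :=
      (Matrix.isHermitian_conjTranspose_mul_self X).rank_eq_card_non_zero_eigs
    rw [Matrix.rank_transpose_mul_self X, hrank] at h1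
    calc Fintype.card {i // e i ≠ 0} = r := h1.symm
      _ ≤ d := hd
  obtain ⟨ι⟩ : Nonempty ({i // e i ≠ 0} ↪ Fin d) :=
    Function.Embedding.nonempty_iff_card_le.mpr (by simpa using hcard)
  set U₀ : Matrix (Fin m) (Fin d) ℝ := fun a j =>
    ∑ i : {i // e i ≠ 0}, if ι i = j then Real.sqrt (σ i) * (y i a / σ i) else 0 with hU₀
  set V₀ : Matrix (Fin n) (Fin d) ℝ := fun b j =>
    ∑ i : {i // e i ≠ 0}, if ι i = j then Real.sqrt (σ i) * p i b else 0 with hV₀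
  have ext_sum : ∀ (f : Fin n → ℝ), (∀ i, e i = 0 → f i = 0) →
      ∑ i : {i // e i ≠ 0}, f ↑i = ∑ i, f i := by
    intro f hf
    rw [← Finset.sum_subtype (Finset.univ.filter (fun i => e i ≠ 0)) (by simp) f]
    rw [Finset.sum_filter]
    refine Finset.sum_congr rfl fun i _ => ?_
    by_cases h : e i = 0
    · simp [h, hf i h]
    · simp [h]
  have hfact : X = U₀ * V₀ᵀ := by
    ext a b
    rw [Matrix.mul_apply]
    simp only [Matrix.transpose_apply]
    rw [hU₀, hV₀]
    rw [sum_embed_mul ι (fun i => Real.sqrt (σ i) * (y i a / σ i))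
      (fun i => Real.sqrt (σ i) * p i b)]
    have h1 : ∀ i : {i // e i ≠ 0},
        (Real.sqrt (σ ↑i) * (y ↑i a / σ ↑i)) * (Real.sqrt (σ ↑i) * p ↑i b)
          = y ↑i a * p ↑i b := by
      intro i
      have h2 : Real.sqrt (σ ↑i) * Real.sqrt (σ ↑i) = σ ↑i :=
        Real.mul_self_sqrt (hσ_nonneg ↑i)
      have h3 : σ (↑i : Fin n) ≠ 0 := hσ_ne ↑i i.2
      calc Real.sqrt (σ ↑i) * (y ↑i a / σ ↑i) * (Real.sqrt (σ ↑i) * p ↑i b)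
          = (Real.sqrt (σ ↑i) * Real.sqrt (σ ↑i)) * (y ↑i a / σ ↑i) * p ↑i b := by ring
        _ = σ ↑i * (y ↑i a / σ ↑i) * p ↑i b := by rw [h2]
        _ = y ↑i a * p ↑i b := by
            rw [mul_div_assoc']
            rw [mul_comm (σ (↑i : Fin n)) (y ↑i a), mul_div_assoc, div_self h3, mul_one]
    rw [Finset.sum_congr rfl fun i _ => h1 i]
    rw [ext_sum (fun i => y i a * p i b) (fun i h => by simp [hy_zero i h a])]
    exact K5 a b
  have hUsum : ∑ a, ∑ j, U₀ a j ^ 2 = nuclearNorm X := by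
    have h1 : ∀ a, ∑ j, U₀ a j ^ 2
        = ∑ i : {i // e i ≠ 0},
            (Real.sqrt (σ ↑i) * (y ↑i a / σ ↑i)) * (Real.sqrt (σ ↑i) * (y ↑i a / σ ↑i)) := by
      intro a
      simp_rw [sq]
      exact sum_embed_mul ι _ _
    simp_rw [h1]
    rw [Finset.sum_comm]
    have h2 : ∀ i : {i // e i ≠ 0},
        ∑ a, (Real.sqrt (σ ↑i) * (y ↑i a / σ ↑i)) * (Real.sqrt (σ ↑i) * (y ↑i a / σ ↑i))
          = σ ↑i := by
      intro i
      have h3 : ∑ a, (Real.sqrt (σ ↑i) * (y ↑i a / σ ↑i)) * (Real.sqrt (σ ↑i) * (y ↑i a / σ ↑i))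
          = (Real.sqrt (σ ↑i) * Real.sqrt (σ ↑i)) / (σ ↑i * σ ↑i) * ∑ a, y ↑i a * y ↑i a := by
        rw [Finset.mul_sum]
        exact Finset.sum_congr rfl fun a _ => by ring
      rw [h3, K3, if_pos rfl, Real.mul_self_sqrt (hσ_nonneg ↑i), ← hσ_sq ↑i, sq]
      have h4 : σ (↑i : Fin n) ≠ 0 := hσ_ne ↑i i.2
      field_simp
    rw [Finset.sum_congr rfl fun i _ => h2 i]
    rw [ext_sum σ hσ_zero, hN]
  have hVsum : ∑ b, ∑ j, V₀ b j ^ 2 = nuclearNorm X := by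
    have h1 : ∀ b, ∑ j, V₀ b j ^ 2
        = ∑ i : {i // e i ≠ 0},
            (Real.sqrt (σ ↑i) * p ↑i b) * (Real.sqrt (σ ↑i) * p ↑i b) := by
      intro b
      simp_rw [sq]
      exact sum_embed_mul ι _ _
    simp_rw [h1]
    rw [Finset.sum_comm]
    have h2 : ∀ i : {i // e i ≠ 0},
        ∑ b, (Real.sqrt (σ ↑i) * p ↑i b) * (Real.sqrt (σ ↑i) * p ↑i b) = σ ↑i := by
      intro i
      have h3 : ∑ b, (Real.sqrt (σ ↑i) * p ↑i b) * (Real.sqrt (σ ↑i) * p ↑i b)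
          = (Real.sqrt (σ ↑i) * Real.sqrt (σ ↑i)) * ∑ b, p ↑i b * p ↑i b := by
        rw [Finset.mul_sum]
        exact Finset.sum_congr rfl fun b _ => by ring
      rw [h3, K1, if_pos rfl, Real.mul_self_sqrt (hσ_nonneg ↑i), mul_one]
    rw [Finset.sum_congr rfl fun i _ => h2 i]
    rw [ext_sum σ hσ_zero, hN]
  have hfU : frobNorm U₀ = Real.sqrt (nuclearNorm X) := by
    rw [show frobNorm U₀ = Real.sqrt (∑ a, ∑ j, U₀ a j ^ 2) from rfl, hUsum]
  have hfV : frobNorm V₀ = Real.sqrt (nuclearNorm X) := by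
    rw [show frobNorm V₀ = Real.sqrt (∑ b, ∑ j, V₀ b j ^ 2) from rfl, hVsum]
  have hmul : frobNorm U₀ * frobNorm V₀ = nuclearNorm X := by
    rw [hfU, hfV, Real.mul_self_sqrt hN_nonneg]
  have hadd : (frobNorm U₀ ^ 2 + frobNorm V₀ ^ 2) / 2 = nuclearNorm X := by
    rw [hfU, hfV, Real.sq_sqrt hN_nonneg]
    ring
  refine ⟨⟨⟨U₀, V₀, hfact, hmul.symm⟩, ?_⟩, ⟨⟨U₀, V₀, hfact, hadd.symm⟩, ?_⟩⟩
  · rintro t ⟨U, V, hUV, rfl⟩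
    exact key U V hUV
  · rintro t ⟨U, V, hUV, rfl⟩
    have h1 := key U V hUV
    nlinarith [sq_nonneg (frobNorm U - frobNorm V)]
end

section
/- Let X ∈ ℝ^{m×n} be a real matrix and let U ∈ ℝ^{m×d}, V ∈ ℝ^{n×d} be any matrices with X = UVᵀ. Then the Schatten-2/3 quasi-norm of X satisfies (Σ_i σ_i(X)^{2/3})^{3/2} ≤ ‖U‖_* ‖V‖_F. -/
open Matrix

open Finset

private lemma cbrt_hasDerivAt {x δ : ℝ} (hx : 0 < x) (hδ : 0 ≤ δ) :
    HasDerivAt (fun t : ℝ => (t + δ) ^ ((1:ℝ)/3) - t ^ ((1:ℝ)/3))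
      ((1/3) * (x + δ) ^ ((1:ℝ)/3 - 1) - (1/3) * x ^ ((1:ℝ)/3 - 1)) x := by
  have h1 : HasDerivAt (fun t : ℝ => (t + δ) ^ ((1:ℝ)/3))
      (((1:ℝ)/3) * (x + δ) ^ ((1:ℝ)/3 - 1) * 1) x := by
    have hbase : HasDerivAt (fun t : ℝ => t + δ) 1 x := (hasDerivAt_id x).add_const δ
    exact (Real.hasDerivAt_rpow_const (x := x + δ) (p := (1:ℝ)/3)
      (Or.inl (by positivity))).comp x hbase
  have h2 : HasDerivAt (fun t : ℝ => t ^ ((1:ℝ)/3)) (((1:ℝ)/3) * x ^ ((1:ℝ)/3 - 1)) x :=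
    Real.hasDerivAt_rpow_const (Or.inl hx.ne')
  have h12 := h1.sub h2
  simp only [mul_one] at h12
  exact h12

private lemma cbrt_shift_anti {δ : ℝ} (hδ : 0 ≤ δ) :
    AntitoneOn (fun t : ℝ => (t + δ) ^ ((1:ℝ)/3) - t ^ ((1:ℝ)/3)) (Set.Ici 0) := by
  apply antitoneOn_of_deriv_nonpos (convex_Ici 0)
  · apply ContinuousOn.sub
    · intro x hx
      exact (ContinuousAt.rpow_const ((continuous_add_right δ).continuousAt)
        (Or.inr (by norm_num))).continuousWithinAt
    · intro x hx
      exact (Real.continuousAt_rpow_const x _ (Or.inr (by norm_num))).continuousWithinAt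
  · intro x hx
    rw [interior_Ici] at hx
    exact (cbrt_hasDerivAt hx hδ).differentiableAt.differentiableWithinAt
  · intro x hx
    rw [interior_Ici] at hx
    rw [(cbrt_hasDerivAt hx hδ).deriv]
    have : (x + δ) ^ ((1:ℝ)/3 - 1) ≤ x ^ ((1:ℝ)/3 - 1) :=
      Real.rpow_le_rpow_of_nonpos hx (by linarith) (by norm_num)
    nlinarith

/-- concave increment comparison: for `0 ≤ c ≤ a`, `0 ≤ δ`,
`(a+δ)^(1/3) - a^(1/3) ≤ (c+δ)^(1/3) - c^(1/3)`. -/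
private lemma cbrt_shift {c a δ : ℝ} (hc : 0 ≤ c) (hca : c ≤ a) (hδ : 0 ≤ δ) :
    (a + δ) ^ ((1:ℝ)/3) - a ^ ((1:ℝ)/3) ≤ (c + δ) ^ ((1:ℝ)/3) - c ^ ((1:ℝ)/3) :=
  cbrt_shift_anti hδ hc (le_trans hc hca) hca

private lemma packA (a m : ℕ → ℝ) :
    ∀ N, (∀ i, i < N → 0 ≤ a i) → (∀ i, i < N → a i ≤ m i) →
      (∀ i, i + 1 < N → m i ≤ a (i + 1)) → N ≠ 0 →
      ∑ i ∈ range N, (m i - a i) ≤ m (N - 1) := by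
  intro N
  induction N with
  | zero => intro _ _ _ h; exact absurd rfl h
  | succ N ih =>
    intro h0 h1 h2 _
    rcases Nat.eq_zero_or_pos N with rfl | hN
    · simpa using h0 0 (by norm_num)
    · have hA : ∑ i ∈ range N, (m i - a i) ≤ m (N - 1) :=
        ih (fun i hi => h0 i (by omega)) (fun i hi => h1 i (by omega))
          (fun i hi => h2 i (by omega)) (by omega)
      have hm : m (N - 1) ≤ a N := by
        have := h2 (N - 1) (by omega)
        simpa [Nat.sub_add_cancel hN] using this
      rw [Finset.sum_range_succ]
      simp only [Nat.add_sub_cancel]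
      linarith

private lemma packB (a m : ℕ → ℝ) :
    ∀ N, (∀ i, i < N → 0 ≤ a i) → (∀ i, i < N → a i ≤ m i) →
      (∀ i, i + 1 < N → m i ≤ a (i + 1)) →
      ∑ i ∈ range N, (m i ^ ((1:ℝ)/3) - a i ^ ((1:ℝ)/3)) ≤
        (∑ i ∈ range N, (m i - a i)) ^ ((1:ℝ)/3) := by
  intro N
  induction N with
  | zero => simp
  | succ N ih =>
    intro h0 h1 h2
    have hS0 : 0 ≤ ∑ i ∈ range N, (m i - a i) :=
      Finset.sum_nonneg fun i hi => by
        have := h1 i (by simp at hi; omega); linarith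
    have hSa : ∑ i ∈ range N, (m i - a i) ≤ a N := by
      rcases Nat.eq_zero_or_pos N with rfl | hN
      · simpa using h0 0 (by norm_num)
      · have := packA a m N (fun i hi => h0 i (by omega)) (fun i hi => h1 i (by omega))
          (fun i hi => h2 i (by omega)) (by omega)
        have h2' : m (N - 1) ≤ a N := by
          have := h2 (N - 1) (by omega)
          simpa [Nat.sub_add_cancel hN] using this
        linarith
    have ihh := ih (fun i hi => h0 i (by omega)) (fun i hi => h1 i (by omega))
      (fun i hi => h2 i (by omega))
    set S := ∑ i ∈ range N, (m i - a i) with hS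
    have hδ : 0 ≤ m N - a N := by have := h1 N (by omega); linarith
    have key : m N ^ ((1:ℝ)/3) - a N ^ ((1:ℝ)/3) ≤ (S + (m N - a N)) ^ ((1:ℝ)/3) - S ^ ((1:ℝ)/3) := by
      have := cbrt_shift hS0 hSa hδ
      have hmN : a N + (m N - a N) = m N := by ring
      rw [hmN] at this
      linarith
    rw [Finset.sum_range_succ, Finset.sum_range_succ]
    calc ∑ i ∈ range N, (m i ^ ((1:ℝ)/3) - a i ^ ((1:ℝ)/3)) + (m N ^ ((1:ℝ)/3) - a N ^ ((1:ℝ)/3))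
        ≤ S ^ ((1:ℝ)/3) + ((S + (m N - a N)) ^ ((1:ℝ)/3) - S ^ ((1:ℝ)/3)) := by
          exact add_le_add ihh key
      _ = (S + (m N - a N)) ^ ((1:ℝ)/3) := by ring


open Matrix Finset
open scoped RealInnerProductSpace

variable {n : ℕ}

/-- quadratic form of a matrix on Euclidean space -/
noncomputable def qf (A : Matrix (Fin n) (Fin n) ℝ) (x : EuclideanSpace ℝ (Fin n)) : ℝ :=
  ⟪x, Matrix.toEuclideanLin A x⟫

lemma toEuclideanLin_eigenvectorBasis {A : Matrix (Fin n) (Fin n) ℝ} (hA : A.IsHermitian)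
    (j : Fin n) :
    Matrix.toEuclideanLin A (hA.eigenvectorBasis j) =
      hA.eigenvalues j • hA.eigenvectorBasis j := by
  apply PiLp.ext
  intro i
  have h := congr_fun (hA.mulVec_eigenvectorBasis j) i
  simpa [Matrix.toEuclideanLin_apply] using h

noncomputable def eigSpan {A : Matrix (Fin n) (Fin n) ℝ} (hA : A.IsHermitian)
    (I : Finset (Fin n)) : Submodule ℝ (EuclideanSpace ℝ (Fin n)) :=
  Submodule.span ℝ (Set.range fun i : I => hA.eigenvectorBasis i)

lemma finrank_eigSpan {A : Matrix (Fin n) (Fin n) ℝ} (hA : A.IsHermitian)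
    (I : Finset (Fin n)) : Module.finrank ℝ (eigSpan hA I) = I.card := by
  have li : LinearIndependent ℝ (fun i : I => hA.eigenvectorBasis i) :=
    (hA.eigenvectorBasis.orthonormal.comp _ Subtype.val_injective).linearIndependent
  rw [eigSpan, finrank_span_eq_card li, Fintype.card_coe]

private lemma inner_comb {I : Finset (Fin n)} (w : I → EuclideanSpace ℝ (Fin n))
    (hw : Orthonormal ℝ w) (f g : I → ℝ) :
    ⟪∑ i, f i • w i, ∑ i, g i • w i⟫ = ∑ i, f i * g i := by
  classical
  rw [sum_inner]
  simp_rw [inner_sum, real_inner_smul_left, real_inner_smul_right,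
    orthonormal_iff_ite.mp hw]
  simp [Finset.mul_sum]

lemma qf_le_on_eigSpan {A : Matrix (Fin n) (Fin n) ℝ} (hA : A.IsHermitian)
    {I : Finset (Fin n)} {c : ℝ} (hc : ∀ i ∈ I, hA.eigenvalues i ≤ c)
    {x : EuclideanSpace ℝ (Fin n)} (hx : x ∈ eigSpan hA I) :
    qf A x ≤ c * ⟪x, x⟫ := by
  classical
  obtain ⟨f, hf⟩ := Submodule.mem_span_range_iff_exists_fun ℝ |>.mp hx
  set w : I → EuclideanSpace ℝ (Fin n) := fun i => hA.eigenvectorBasis i with hwdef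
  have hw : Orthonormal ℝ w := hA.eigenvectorBasis.orthonormal.comp _ Subtype.val_injective
  have hTx : Matrix.toEuclideanLin A x = ∑ i, (hA.eigenvalues i.1 * f i) • w i := by
    rw [← hf, map_sum]
    congr 1
    funext i
    rw [_root_.map_smul, toEuclideanLin_eigenvectorBasis hA i.1]
    simp [hwdef, smul_smul, mul_comm]
  have hq : qf A x = ∑ i, f i * (hA.eigenvalues i.1 * f i) := by
    rw [qf, hTx, ← hf]
    exact inner_comb w hw f _
  have hxx : ⟪x, x⟫ = ∑ i, f i * f i := by
    rw [← hf]; exact inner_comb w hw f f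
  rw [hq, hxx, Finset.mul_sum]
  apply Finset.sum_le_sum
  intro i _
  have h1 : hA.eigenvalues i.1 ≤ c := hc i.1 i.2
  nlinarith [sq_nonneg (f i)]

lemma qf_ge_on_eigSpan {A : Matrix (Fin n) (Fin n) ℝ} (hA : A.IsHermitian)
    {I : Finset (Fin n)} {c : ℝ} (hc : ∀ i ∈ I, c ≤ hA.eigenvalues i)
    {x : EuclideanSpace ℝ (Fin n)} (hx : x ∈ eigSpan hA I) :
    c * ⟪x, x⟫ ≤ qf A x := by
  classical
  obtain ⟨f, hf⟩ := Submodule.mem_span_range_iff_exists_fun ℝ |>.mp hx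
  set w : I → EuclideanSpace ℝ (Fin n) := fun i => hA.eigenvectorBasis i with hwdef
  have hw : Orthonormal ℝ w := hA.eigenvectorBasis.orthonormal.comp _ Subtype.val_injective
  have hTx : Matrix.toEuclideanLin A x = ∑ i, (hA.eigenvalues i.1 * f i) • w i := by
    rw [← hf, map_sum]
    congr 1
    funext i
    rw [_root_.map_smul, toEuclideanLin_eigenvectorBasis hA i.1]
    simp [hwdef, smul_smul, mul_comm]
  have hq : qf A x = ∑ i, f i * (hA.eigenvalues i.1 * f i) := by
    rw [qf, hTx, ← hf]
    exact inner_comb w hw f _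
  have hxx : ⟪x, x⟫ = ∑ i, f i * f i := by
    rw [← hf]; exact inner_comb w hw f f
  rw [hq, hxx, Finset.mul_sum]
  apply Finset.sum_le_sum
  intro i _
  have h1 : c ≤ hA.eigenvalues i.1 := hc i.1 i.2
  nlinarith [sq_nonneg (f i)]

lemma exists_ne_zero_mem_both {S T : Submodule ℝ (EuclideanSpace ℝ (Fin n))}
    (h : n < Module.finrank ℝ S + Module.finrank ℝ T) :
    ∃ x, x ≠ 0 ∧ x ∈ S ∧ x ∈ T := by
  have h1 := Submodule.finrank_sup_add_finrank_inf_eq S T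
  have h2 : Module.finrank ℝ ↥(S ⊔ T) ≤ n := by
    simpa using Submodule.finrank_le (S ⊔ T)
  have h3 : 0 < Module.finrank ℝ ↥(S ⊓ T) := by omega
  have h4 : S ⊓ T ≠ ⊥ := by
    intro hbot
    rw [hbot] at h3
    simp at h3
  obtain ⟨x, hx, hx0⟩ := Submodule.exists_mem_ne_zero_of_ne_bot h4
  exact ⟨x, hx0, hx.1, hx.2⟩

lemma sqnorm_pos {x : EuclideanSpace ℝ (Fin n)} (hx : x ≠ 0) : 0 < ⟪x, x⟫ := by
  rw [real_inner_self_eq_norm_sq]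
  have : 0 < ‖x‖ := norm_pos_iff.mpr hx
  positivity

/-- eigenvalues sorted in increasing order -/
noncomputable def sortEig {A : Matrix (Fin n) (Fin n) ℝ} (hA : A.IsHermitian) : Fin n → ℝ :=
  hA.eigenvalues ∘ Tuple.sort hA.eigenvalues

lemma sortEig_mono {A : Matrix (Fin n) (Fin n) ℝ} (hA : A.IsHermitian) :
    Monotone (sortEig hA) := Tuple.monotone_sort _

lemma sum_sortEig {A : Matrix (Fin n) (Fin n) ℝ} (hA : A.IsHermitian) (r : ℝ → ℝ) :
    ∑ i, r (sortEig hA i) = ∑ i, r (hA.eigenvalues i) :=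
  Equiv.sum_comp (Tuple.sort hA.eigenvalues) (fun i => r (hA.eigenvalues i))

lemma sorted_le_of_qf_le {A M : Matrix (Fin n) (Fin n) ℝ} (hA : A.IsHermitian)
    (hM : M.IsHermitian) (h : ∀ x, qf A x ≤ qf M x) (k : Fin n) :
    sortEig hA k ≤ sortEig hM k := by
  classical
  set p := Tuple.sort hA.eigenvalues
  set q := Tuple.sort hM.eigenvalues
  set S := eigSpan hA ((Finset.Ici k).image p)
  set T := eigSpan hM ((Finset.Iic k).image q)
  have hdim : n < Module.finrank ℝ S + Module.finrank ℝ T := by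
    rw [finrank_eigSpan, finrank_eigSpan, Finset.card_image_of_injective _ p.injective,
      Finset.card_image_of_injective _ q.injective, Fin.card_Ici, Fin.card_Iic]
    have := k.isLt
    omega
  obtain ⟨x, hx0, hxS, hxT⟩ := exists_ne_zero_mem_both hdim
  have hlow : sortEig hA k * ⟪x, x⟫ ≤ qf A x := by
    apply qf_ge_on_eigSpan hA _ hxS
    intro i hi
    obtain ⟨j, hj, rfl⟩ := Finset.mem_image.mp hi
    exact sortEig_mono hA (Finset.mem_Ici.mp hj)
  have hhigh : qf M x ≤ sortEig hM k * ⟪x, x⟫ := by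
    apply qf_le_on_eigSpan hM _ hxT
    intro i hi
    obtain ⟨j, hj, rfl⟩ := Finset.mem_image.mp hi
    exact sortEig_mono hM (Finset.mem_Iic.mp hj)
  have hxx := sqnorm_pos hx0
  have := le_trans hlow (le_trans (h x) hhigh)
  exact le_of_mul_le_mul_right (by linarith [this]) hxx

lemma sorted_rankone_le {A M : Matrix (Fin n) (Fin n) ℝ} (hA : A.IsHermitian)
    (hM : M.IsHermitian) (v : EuclideanSpace ℝ (Fin n))
    (hq : ∀ x, qf M x = qf A x + ⟪v, x⟫ ^ 2) (k : Fin n) (hk : k.1 + 1 < n) :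
    sortEig hM k ≤ sortEig hA ⟨k.1 + 1, hk⟩ := by
  classical
  set p := Tuple.sort hA.eigenvalues
  set q := Tuple.sort hM.eigenvalues
  set k' : Fin n := ⟨k.1 + 1, hk⟩
  set SA := eigSpan hA ((Finset.Iic k').image p)
  set f := ((innerSL ℝ v : EuclideanSpace ℝ (Fin n) →L[ℝ] ℝ) :
    EuclideanSpace ℝ (Fin n) →ₗ[ℝ] ℝ) with hf
  set K := LinearMap.ker f with hK
  set T := eigSpan hM ((Finset.Ici k).image q)
  have hKdim : n - 1 ≤ Module.finrank ℝ K := by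
    have h1 := LinearMap.finrank_range_add_finrank_ker f
    rw [← hK] at h1
    have h2 : Module.finrank ℝ (LinearMap.range f) ≤ 1 := by
      simpa using Submodule.finrank_le (LinearMap.range f)
    have h3 : Module.finrank ℝ (EuclideanSpace ℝ (Fin n)) = n := by simp
    rw [h3] at h1
    omega
  have hSA : Module.finrank ℝ SA = k.1 + 2 := by
    rw [finrank_eigSpan, Finset.card_image_of_injective _ p.injective, Fin.card_Iic]
  have hW : k.1 + 1 ≤ Module.finrank ℝ (SA ⊓ K : Submodule ℝ (EuclideanSpace ℝ (Fin n))) := by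
    have h1 := Submodule.finrank_sup_add_finrank_inf_eq SA K
    have h2 : Module.finrank ℝ ↥(SA ⊔ K) ≤ n := by
      simpa using Submodule.finrank_le (SA ⊔ K)
    omega
  have hdim : n < Module.finrank ℝ (SA ⊓ K : Submodule ℝ (EuclideanSpace ℝ (Fin n))) +
      Module.finrank ℝ T := by
    have hT : Module.finrank ℝ T = n - k.1 := by
      rw [finrank_eigSpan, Finset.card_image_of_injective _ q.injective, Fin.card_Ici]
    omega
  obtain ⟨x, hx0, hxW, hxT⟩ := exists_ne_zero_mem_both hdim
  have hxSA : x ∈ SA := hxW.1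
  have hxK : ⟪v, x⟫ = 0 := hxW.2
  have hlow : sortEig hM k * ⟪x, x⟫ ≤ qf M x := by
    apply qf_ge_on_eigSpan hM _ hxT
    intro i hi
    obtain ⟨j, hj, rfl⟩ := Finset.mem_image.mp hi
    exact sortEig_mono hM (Finset.mem_Ici.mp hj)
  have hhigh : qf A x ≤ sortEig hA k' * ⟪x, x⟫ := by
    apply qf_le_on_eigSpan hA _ hxSA
    intro i hi
    obtain ⟨j, hj, rfl⟩ := Finset.mem_image.mp hi
    exact sortEig_mono hA (Finset.mem_Iic.mp hj)
  have hqx : qf M x = qf A x := by rw [hq x, hxK]; ring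
  have hxx := sqnorm_pos hx0
  have : sortEig hM k * ⟪x, x⟫ ≤ sortEig hA k' * ⟪x, x⟫ := by
    rw [← hqx] at hhigh
    linarith
  exact le_of_mul_le_mul_right this hxx

section Sec3
variable {n : ℕ}

private lemma double_sum_sq (v x : Fin n → ℝ) :
    ∑ i, x i * (∑ j, v i * v j * x j) = (∑ i, v i * x i) ^ 2 := by
  have h : ∀ i : Fin n, x i * (∑ j, v i * v j * x j) = (v i * x i) * (∑ j, v j * x j) := by
    intro i
    rw [Finset.mul_sum, Finset.mul_sum]
    exact Finset.sum_congr rfl fun j _ => by ring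
  simp_rw [h]
  rw [← Finset.sum_mul, sq]

lemma isHermitian_vecMulVec (v : Fin n → ℝ) : (vecMulVec v v).IsHermitian := by
  show (vecMulVec v v)ᴴ = vecMulVec v v
  ext i j
  simp [conjTranspose_apply, vecMulVec_apply, mul_comm]

lemma posSemidef_vecMulVec' (v : Fin n → ℝ) : (vecMulVec v v).PosSemidef := by
  refine posSemidef_iff_dotProduct_mulVec.mpr ⟨isHermitian_vecMulVec v, fun x => ?_⟩
  have h : dotProduct (star x) (vecMulVec v v *ᵥ x) = (∑ i, v i * x i) ^ 2 := by
    simp only [dotProduct, mulVec, vecMulVec_apply, star_trivial, Pi.star_apply]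
    exact double_sum_sq v x
  rw [h]
  positivity

lemma qf_add (A B : Matrix (Fin n) (Fin n) ℝ) (x : EuclideanSpace ℝ (Fin n)) :
    qf (A + B) x = qf A x + qf B x := by
  unfold qf
  rw [map_add, LinearMap.add_apply, inner_add_right]

lemma inner_eq_sum (x y : EuclideanSpace ℝ (Fin n)) : ⟪x, y⟫ = ∑ i, x i * y i := by
  simp [PiLp.inner_apply, RCLike.inner_apply, mul_comm]

lemma qf_eq_dot (A : Matrix (Fin n) (Fin n) ℝ) (x : EuclideanSpace ℝ (Fin n)) :
    qf A x = ∑ i, x i * (A *ᵥ (WithLp.equiv 2 (Fin n → ℝ) x)) i := by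
  rw [qf, Matrix.toEuclideanLin_apply, inner_eq_sum]
  rfl

lemma qf_vecMulVec (v : Fin n → ℝ) (x : EuclideanSpace ℝ (Fin n)) :
    qf (vecMulVec v v) x = (∑ i, v i * x i) ^ 2 := by
  rw [qf_eq_dot]
  simp only [mulVec, vecMulVec_apply, dotProduct]
  exact double_sum_sq v x

lemma sum_eigenvalues_eq_trace {A : Matrix (Fin n) (Fin n) ℝ} (hA : A.IsHermitian) :
    ∑ i, hA.eigenvalues i = A.trace := by
  have h := hA.spectral_theorem
  have h1 : (star (hA.eigenvectorUnitary : Matrix (Fin n) (Fin n) ℝ)) *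
      (hA.eigenvectorUnitary : Matrix (Fin n) (Fin n) ℝ) = 1 :=
    Unitary.coe_star_mul_self _
  calc ∑ i, hA.eigenvalues i
      = (diagonal (RCLike.ofReal ∘ hA.eigenvalues) : Matrix (Fin n) (Fin n) ℝ).trace := by
        rw [trace_diagonal]
        simp
    _ = A.trace := by
        conv_rhs => rw [h]
        rw [Unitary.conjStarAlgAut_apply, trace_mul_cycle, h1, one_mul]

end Sec3

section Sec4
variable {n : ℕ}

lemma key_rankone {A M : Matrix (Fin n) (Fin n) ℝ} (hA : A.IsHermitian) (hM : M.IsHermitian)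
    (hpsd : A.PosSemidef) (v : Fin n → ℝ) (hMdef : M = A + vecMulVec v v) :
    ∑ i, (hM.eigenvalues i) ^ ((1:ℝ)/3) ≤
      ∑ i, (hA.eigenvalues i) ^ ((1:ℝ)/3) + (∑ i, v i ^ 2) ^ ((1:ℝ)/3) := by
  have hqM : ∀ x : EuclideanSpace ℝ (Fin n), qf M x = qf A x + (∑ i, v i * x i) ^ 2 := by
    intro x; rw [hMdef, qf_add, qf_vecMulVec]
  have hle : ∀ x, qf A x ≤ qf M x := fun x => by
    rw [hqM x]; nlinarith [sq_nonneg (∑ i, v i * x i)]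
  set v' : EuclideanSpace ℝ (Fin n) := (WithLp.equiv 2 (Fin n → ℝ)).symm v with hv'
  have hqM' : ∀ x, qf M x = qf A x + ⟪v', x⟫ ^ 2 := by
    intro x
    rw [hqM x, inner_eq_sum]
    rfl
  have h1 : ∀ k : Fin n, sortEig hA k ≤ sortEig hM k := sorted_le_of_qf_le hA hM hle
  have h2 : ∀ (k : Fin n) (hk : k.1 + 1 < n), sortEig hM k ≤ sortEig hA ⟨k.1+1, hk⟩ :=
    sorted_rankone_le hA hM v' hqM'
  have h0 : ∀ k : Fin n, 0 ≤ sortEig hA k := fun k => hpsd.eigenvalues_nonneg _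
  set aa : ℕ → ℝ := fun i => if h : i < n then sortEig hA ⟨i, h⟩ else 0 with haa
  set mm : ℕ → ℝ := fun i => if h : i < n then sortEig hM ⟨i, h⟩ else 0 with hmm
  have hpack := packB aa mm n
    (fun i hi => by simp only [haa, dif_pos hi]; exact h0 _)
    (fun i hi => by simp only [haa, hmm, dif_pos hi]; exact h1 _)
    (fun i hi => by
      have hi' : i < n := by omega
      simp only [haa, hmm, dif_pos hi, dif_pos hi']
      exact h2 ⟨i, hi'⟩ hi)
  have eA : ∑ i ∈ Finset.range n, aa i ^ ((1:ℝ)/3) = ∑ i, (hA.eigenvalues i) ^ ((1:ℝ)/3) := by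
    rw [← Fin.sum_univ_eq_sum_range (fun i => aa i ^ ((1:ℝ)/3)) n,
      ← sum_sortEig hA (fun t => t ^ ((1:ℝ)/3))]
    exact Finset.sum_congr rfl fun i _ => by simp only [haa, dif_pos i.isLt, Fin.eta]
  have eM : ∑ i ∈ Finset.range n, mm i ^ ((1:ℝ)/3) = ∑ i, (hM.eigenvalues i) ^ ((1:ℝ)/3) := by
    rw [← Fin.sum_univ_eq_sum_range (fun i => mm i ^ ((1:ℝ)/3)) n,
      ← sum_sortEig hM (fun t => t ^ ((1:ℝ)/3))]
    exact Finset.sum_congr rfl fun i _ => by simp only [hmm, dif_pos i.isLt, Fin.eta]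
  have eaa : ∑ i ∈ Finset.range n, aa i = A.trace := by
    rw [← Fin.sum_univ_eq_sum_range aa n, ← sum_eigenvalues_eq_trace hA,
      ← sum_sortEig hA (fun t => t)]
    exact Finset.sum_congr rfl fun i _ => by simp only [haa, dif_pos i.isLt, Fin.eta]
  have emm : ∑ i ∈ Finset.range n, mm i = M.trace := by
    rw [← Fin.sum_univ_eq_sum_range mm n, ← sum_eigenvalues_eq_trace hM,
      ← sum_sortEig hM (fun t => t)]
    exact Finset.sum_congr rfl fun i _ => by simp only [hmm, dif_pos i.isLt, Fin.eta]
  have etr : M.trace = A.trace + ∑ i, v i ^ 2 := by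
    rw [hMdef, trace_add]
    congr 1
    simp [Matrix.trace, Matrix.diag, vecMulVec_apply, sq]
  have eT : ∑ i ∈ Finset.range n, (mm i - aa i) = ∑ i, v i ^ 2 := by
    rw [Finset.sum_sub_distrib, eaa, emm, etr]
    ring
  rw [Finset.sum_sub_distrib, eA, eM, eT] at hpack
  linarith

lemma isHermitian_sum_vv {d : ℕ} (w : Fin d → Fin n → ℝ) (s : Finset (Fin d)) :
    (∑ j ∈ s, vecMulVec (w j) (w j)).IsHermitian := by
  show _ᴴ = _
  rw [conjTranspose_sum]
  exact Finset.sum_congr rfl fun j _ => isHermitian_vecMulVec (w j)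

lemma posSemidef_sum_vv {d : ℕ} (w : Fin d → Fin n → ℝ) (s : Finset (Fin d)) :
    (∑ j ∈ s, vecMulVec (w j) (w j)).PosSemidef := by
  classical
  induction s using Finset.cons_induction with
  | empty => simpa using Matrix.PosSemidef.zero
  | cons j t hj ih =>
    rw [Finset.sum_cons]
    exact (posSemidef_vecMulVec' (w j)).add ih

lemma key_sum {d : ℕ} (w : Fin d → (Fin n → ℝ)) (s : Finset (Fin d))
    {G : Matrix (Fin n) (Fin n) ℝ} (hG : G.IsHermitian)
    (hGdef : G = ∑ j ∈ s, vecMulVec (w j) (w j)) :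
    ∑ i, (hG.eigenvalues i) ^ ((1:ℝ)/3) ≤ ∑ j ∈ s, (∑ i, (w j i) ^ 2) ^ ((1:ℝ)/3) := by
  classical
  induction s using Finset.cons_induction generalizing G with
  | empty =>
    have hG0 : G = 0 := by simpa using hGdef
    have hz : ∀ i, hG.eigenvalues i = 0 := by
      intro i
      rw [hG.eigenvalues_eq]
      simp [hG0]
    simp [hz, Real.zero_rpow (by norm_num : ((1:ℝ)/3) ≠ 0)]
  | cons j t hj ih =>
    set A : Matrix (Fin n) (Fin n) ℝ := ∑ k ∈ t, vecMulVec (w k) (w k) with hAdef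
    have hA : A.IsHermitian := isHermitian_sum_vv w t
    have hpsd : A.PosSemidef := posSemidef_sum_vv w t
    have hMdef : G = A + vecMulVec (w j) (w j) := by
      rw [hGdef, Finset.sum_cons, add_comm]
    have hstep := key_rankone hA hG hpsd (w j) hMdef
    have hih := ih hA rfl
    rw [Finset.sum_cons]
    linarith

end Sec4

section Sec5a

lemma onb_sum_outer {d : ℕ} (b : OrthonormalBasis (Fin d) ℝ (EuclideanSpace ℝ (Fin d))) :
    ∑ j, vecMulVec (⇑(b j)) (⇑(b j)) = (1 : Matrix (Fin d) (Fin d) ℝ) := by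
  ext a c
  have h := b.sum_inner_mul_inner (EuclideanSpace.single a (1:ℝ)) (EuclideanSpace.single c (1:ℝ))
  simp only [EuclideanSpace.inner_single_left, EuclideanSpace.inner_single_right,
    starRingEnd_apply, star_trivial, one_mul, mul_one] at h
  rw [Matrix.sum_apply]
  simp only [vecMulVec_apply]
  have h' : ∑ x, (WithLp.equiv 2 (Fin d → ℝ)) (b x) a * (WithLp.equiv 2 (Fin d → ℝ)) (b x) c
      = EuclideanSpace.single a (1:ℝ) c := h
  rw [h]
  rcases eq_or_ne a c with rfl | hac
  · simp [EuclideanSpace.single_apply]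
  · simp [EuclideanSpace.single_apply, Matrix.one_apply_ne hac, Ne.symm hac]

lemma mul_vecMulVec' {d : ℕ} (B : Matrix (Fin d) (Fin d) ℝ) (u w : Fin d → ℝ) :
    B * vecMulVec u w = vecMulVec (B *ᵥ u) w := by
  ext a c
  simp only [Matrix.mul_apply, vecMulVec_apply, mulVec, dotProduct, Finset.sum_mul]
  exact Finset.sum_congr rfl fun k _ => by ring

lemma conj_vecMulVec {n d : ℕ} (V : Matrix (Fin n) (Fin d) ℝ) (u w : Fin d → ℝ) :
    V * (vecMulVec u w * Vᵀ) = vecMulVec (V *ᵥ u) (V *ᵥ w) := by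
  ext a c
  have h1 : (vecMulVec u w * Vᵀ) = vecMulVec u (V *ᵥ w) := by
    ext e f
    simp only [Matrix.mul_apply, vecMulVec_apply, Matrix.transpose_apply, mulVec, dotProduct,
      Finset.mul_sum]
    exact Finset.sum_congr rfl fun k _ => by ring
  rw [h1]
  simp only [Matrix.mul_apply, vecMulVec_apply, mulVec, dotProduct, Finset.sum_mul]
  exact Finset.sum_congr rfl fun k _ => by ring

lemma smul_vecMulVec {n : ℕ} (c : ℝ) (u w : Fin n → ℝ) :
    c • vecMulVec u w = vecMulVec (c • u) w := by
  ext a e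
  simp [vecMulVec_apply, Matrix.smul_apply]
  ring

lemma herm_eq_sum_outer {d : ℕ} {B : Matrix (Fin d) (Fin d) ℝ} (hB : B.IsHermitian) :
    B = ∑ j, hB.eigenvalues j • vecMulVec (⇑(hB.eigenvectorBasis j)) (⇑(hB.eigenvectorBasis j)) := by
  calc B = B * 1 := (Matrix.mul_one B).symm
    _ = B * ∑ j, vecMulVec (⇑(hB.eigenvectorBasis j)) (⇑(hB.eigenvectorBasis j)) := by
        rw [onb_sum_outer]
    _ = ∑ j, B * vecMulVec (⇑(hB.eigenvectorBasis j)) (⇑(hB.eigenvectorBasis j)) :=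
        by rw [Matrix.mul_sum]
    _ = ∑ j, hB.eigenvalues j •
          vecMulVec (⇑(hB.eigenvectorBasis j)) (⇑(hB.eigenvectorBasis j)) := by
        apply Finset.sum_congr rfl
        intro j _
        rw [mul_vecMulVec', hB.mulVec_eigenvectorBasis, ← smul_vecMulVec]

end Sec5a

/-- For any factorization `X = U Vᵀ`, the Schatten-2/3 quasi-norm of `X`
satisfies `(Σ_i σ_i(X)^(2/3))^(3/2) ≤ ‖U‖_* ‖V‖_F`. -/
theorem schatten_two_thirds_le_nuclear_mul_frobenius {m n d : ℕ}
    (X : Matrix (Fin m) (Fin n) ℝ) (U : Matrix (Fin m) (Fin d) ℝ)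
    (V : Matrix (Fin n) (Fin d) ℝ) (hX : X = U * Vᵀ) :
    (∑ i, singularValues X i ^ ((2 : ℝ) / 3)) ^ ((3 : ℝ) / 2) ≤
      nuclearNorm U * frobNorm V := by
  classical
  have hU : (Uᵀ * U).IsHermitian := Matrix.isHermitian_conjTranspose_mul_self U
  set κ : Fin d → ℝ := hU.eigenvalues with hκdef
  set sj : Fin d → (Fin d → ℝ) := fun j => ⇑(hU.eigenvectorBasis j) with hsjdef
  have hUpsd : (Uᵀ * U).PosSemidef := by
    have h := Matrix.posSemidef_conjTranspose_mul_self U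
    have hct : Uᴴ = Uᵀ := by ext i j; simp [Matrix.conjTranspose_apply]
    rwa [hct] at h
  have hκ : ∀ j, 0 ≤ κ j := fun j => hUpsd.eigenvalues_nonneg j
  set w : Fin d → (Fin n → ℝ) := fun j => Real.sqrt (κ j) • (V *ᵥ sj j) with hwdef
  -- decomposition of XᵀX
  have hX2 : Xᵀ * X = ∑ j, vecMulVec (w j) (w j) := by
    have h1 : Xᵀ * X = V * ((Uᵀ * U) * Vᵀ) := by
      rw [hX]
      simp only [Matrix.transpose_mul, Matrix.transpose_transpose, Matrix.mul_assoc]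
    rw [h1]
    conv_lhs => rw [herm_eq_sum_outer hU]
    rw [Matrix.sum_mul, Matrix.mul_sum]
    apply Finset.sum_congr rfl
    intro j _
    rw [Matrix.smul_mul, Matrix.mul_smul, conj_vecMulVec]
    ext a c
    simp only [Matrix.smul_apply, vecMulVec_apply, hwdef, Pi.smul_apply, smul_eq_mul]
    have hss : Real.sqrt (κ j) * Real.sqrt (κ j) = hU.eigenvalues j := Real.mul_self_sqrt (hκ j)
    conv_lhs => rw [← hss]
    ring
  have hG : (Xᵀ * X).IsHermitian := Matrix.isHermitian_conjTranspose_mul_self X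
  have hkey := key_sum w Finset.univ hG hX2
  have hXpsd : (Xᵀ * X).PosSemidef := by
    have h := Matrix.posSemidef_conjTranspose_mul_self X
    have hct : Xᴴ = Xᵀ := by ext i j; simp [Matrix.conjTranspose_apply]
    rwa [hct] at h
  have hσ : ∀ i, singularValues X i ^ ((2:ℝ)/3) = (hG.eigenvalues i) ^ ((1:ℝ)/3) := by
    intro i
    have h0 : 0 ≤ hG.eigenvalues i := hXpsd.eigenvalues_nonneg i
    have hs : singularValues X i = (hG.eigenvalues i) ^ ((1:ℝ)/2) := by
      rw [show singularValues X i = Real.sqrt (hG.eigenvalues i) from rfl, Real.sqrt_eq_rpow]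
    rw [hs, ← Real.rpow_mul h0]
    norm_num
  set cj : Fin d → ℝ := fun j => ∑ i, ((V *ᵥ sj j) i) ^ 2 with hcjdef
  have hc0 : ∀ j, 0 ≤ cj j := fun j => Finset.sum_nonneg fun i _ => sq_nonneg _
  have hwsum : ∀ j, ∑ i, (w j i) ^ 2 = κ j * cj j := by
    intro j
    simp only [hwdef, Pi.smul_apply, smul_eq_mul, mul_pow, hcjdef]
    rw [Finset.mul_sum]
    exact Finset.sum_congr rfl fun i _ => by rw [Real.sq_sqrt (hκ j)]
  set t : Fin d → ℝ := fun j => Real.sqrt (κ j) with htdef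
  have ht0 : ∀ j, 0 ≤ t j := fun j => Real.sqrt_nonneg _
  have hterm : ∀ j, (κ j * cj j) ^ ((1:ℝ)/3) = (t j ^ ((2:ℝ)/3)) * (cj j ^ ((1:ℝ)/3)) := by
    intro j
    have e : (κ j) ^ ((1:ℝ)/3) = t j ^ ((2:ℝ)/3) := by
      have h22 : t j ^ (2:ℕ) = κ j := Real.sq_sqrt (hκ j)
      rw [← h22, ← Real.rpow_natCast (t j) 2, ← Real.rpow_mul (ht0 j)]
      norm_num
    rw [Real.mul_rpow (hκ j) (hc0 j), e]
  have holder : ∑ j, (t j ^ ((2:ℝ)/3)) * (cj j ^ ((1:ℝ)/3)) ≤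
      (∑ j, t j) ^ ((2:ℝ)/3) * (∑ j, cj j) ^ ((1:ℝ)/3) := by
    have hpq : Real.HolderConjugate (3/2) 3 := ⟨by norm_num, by norm_num, by norm_num⟩
    have h := Real.inner_le_Lp_mul_Lq Finset.univ (fun j => t j ^ ((2:ℝ)/3))
      (fun j => cj j ^ ((1:ℝ)/3)) hpq
    have e1 : ∀ j : Fin d, |t j ^ ((2:ℝ)/3)| ^ ((3:ℝ)/2) = t j := by
      intro j
      rw [abs_of_nonneg (Real.rpow_nonneg (ht0 j) _), ← Real.rpow_mul (ht0 j)]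
      norm_num
    have e2 : ∀ j : Fin d, |cj j ^ ((1:ℝ)/3)| ^ ((3:ℝ)) = cj j := by
      intro j
      rw [abs_of_nonneg (Real.rpow_nonneg (hc0 j) _), ← Real.rpow_mul (hc0 j)]
      norm_num
    have e3 : ((1:ℝ) / (3/2)) = (2:ℝ)/3 := by norm_num
    have e4 : ((1:ℝ) / 3) = (1:ℝ)/3 := rfl
    calc ∑ j, (t j ^ ((2:ℝ)/3)) * (cj j ^ ((1:ℝ)/3))
        ≤ (∑ j, |t j ^ ((2:ℝ)/3)| ^ ((3:ℝ)/2)) ^ ((1:ℝ)/(3/2)) *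
          (∑ j, |cj j ^ ((1:ℝ)/3)| ^ ((3:ℝ))) ^ ((1:ℝ)/3) := by
          convert h using 3 <;> norm_num
      _ = (∑ j, t j) ^ ((2:ℝ)/3) * (∑ j, cj j) ^ ((1:ℝ)/3) := by
          rw [e3]
          congr 2
          · exact Finset.sum_congr rfl fun j _ => e1 j
          · exact Finset.sum_congr rfl fun j _ => e2 j
  -- Parseval
  have hrow : ∀ i, ∑ j, ((V *ᵥ sj j) i) ^ 2 = ∑ k, (V i k) ^ 2 := by
    intro i
    set x : EuclideanSpace ℝ (Fin d) := (WithLp.equiv 2 (Fin d → ℝ)).symm (fun k => V i k)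
      with hxdef
    have h := (hU.eigenvectorBasis).sum_inner_mul_inner x x
    have h1 : ∀ j, ⟪x, hU.eigenvectorBasis j⟫ = (V *ᵥ sj j) i := by
      intro j
      rw [inner_eq_sum]
      rfl
    have h1' : ∀ j, ⟪hU.eigenvectorBasis j, x⟫ = (V *ᵥ sj j) i := fun j => by
      rw [real_inner_comm]; exact h1 j
    have h2 : ⟪x, x⟫ = ∑ k, (V i k) ^ 2 := by
      rw [inner_eq_sum]
      refine Finset.sum_congr rfl fun k _ => ?_
      show V i k * V i k = V i k ^ 2
      ring
    calc ∑ j, ((V *ᵥ sj j) i) ^ 2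
        = ∑ j, ⟪x, hU.eigenvectorBasis j⟫ * ⟪hU.eigenvectorBasis j, x⟫ := by
          apply Finset.sum_congr rfl
          intro j _
          rw [h1 j, h1' j]
          ring
      _ = ⟪x, x⟫ := h
      _ = ∑ k, (V i k) ^ 2 := h2
  have hpar : ∑ j, cj j = ∑ i, ∑ k, (V i k) ^ 2 := by
    simp only [hcjdef]
    rw [Finset.sum_comm]
    exact Finset.sum_congr rfl fun i _ => hrow i
  -- put it together
  set C : ℝ := ∑ i, ∑ k, (V i k) ^ 2 with hCdef
  set N : ℝ := ∑ j, t j with hNdef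
  have hN0 : 0 ≤ N := Finset.sum_nonneg fun j _ => ht0 j
  have hC0 : 0 ≤ C := Finset.sum_nonneg fun i _ => Finset.sum_nonneg fun k _ => sq_nonneg _
  have main2 : ∑ i, singularValues X i ^ ((2:ℝ)/3) ≤ N ^ ((2:ℝ)/3) * C ^ ((1:ℝ)/3) := by
    calc ∑ i, singularValues X i ^ ((2:ℝ)/3)
        = ∑ i, (hG.eigenvalues i) ^ ((1:ℝ)/3) := Finset.sum_congr rfl fun i _ => hσ i
      _ ≤ ∑ j, (∑ i, (w j i) ^ 2) ^ ((1:ℝ)/3) := hkey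
      _ = ∑ j, (t j ^ ((2:ℝ)/3)) * (cj j ^ ((1:ℝ)/3)) := by
          apply Finset.sum_congr rfl
          intro j _
          rw [hwsum j, hterm j]
      _ ≤ N ^ ((2:ℝ)/3) * (∑ j, cj j) ^ ((1:ℝ)/3) := holder
      _ = N ^ ((2:ℝ)/3) * C ^ ((1:ℝ)/3) := by rw [hpar]
  have hL0 : 0 ≤ ∑ i, singularValues X i ^ ((2:ℝ)/3) :=
    Finset.sum_nonneg fun i _ => Real.rpow_nonneg (Real.sqrt_nonneg _) _
  have hnuc : nuclearNorm U = N := rfl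
  have hfrob : frobNorm V = C ^ ((1:ℝ)/2) := by
    rw [frobNorm, Real.sqrt_eq_rpow]
  calc (∑ i, singularValues X i ^ ((2:ℝ)/3)) ^ ((3:ℝ)/2)
      ≤ (N ^ ((2:ℝ)/3) * C ^ ((1:ℝ)/3)) ^ ((3:ℝ)/2) :=
        Real.rpow_le_rpow hL0 main2 (by norm_num)
    _ = N * C ^ ((1:ℝ)/2) := by
        rw [Real.mul_rpow (Real.rpow_nonneg hN0 _) (Real.rpow_nonneg hC0 _),
          ← Real.rpow_mul hN0, ← Real.rpow_mul hC0]
        norm_num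
    _ = nuclearNorm U * frobNorm V := by rw [hnuc, hfrob]
end

section
/- Let X ∈ ℝ^{m×n} be a real matrix with rank(X) = r, and let d be any integer with d ≥ r. Then the minimum over all U ∈ ℝ^{m×d}, V ∈ ℝ^{n×d} with X = UVᵀ of ‖U‖_* ‖V‖_* exists and equals the square of the Schatten-1/2 quasi-norm sum, i.e., min_{X=UVᵀ} ‖U‖_* ‖V‖_* = (Σ_i σ_i(X)^{1/2})². -/
open Matrix

namespace BiNuclearAux

open Matrix Polynomial Finset

variable {a b k l : Type*} [Fintype a] [DecidableEq a] [Fintype b] [DecidableEq b]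
  [Fintype k] [DecidableEq k] [Fintype l] [DecidableEq l]



variable {l k : Type*} [Fintype k] [DecidableEq k] [Fintype l] [DecidableEq l]

lemma real_conjT {α β : Type*} [Fintype α] [Fintype β] (A : Matrix α β ℝ) : Aᴴ = Aᵀ := by
  ext i j; simp [conjTranspose_apply]

lemma charpoly_conj (P P' A : Matrix k k ℝ) (h1 : P * P' = 1) :
    (P * A * P').charpoly = A.charpoly := by
  have hmap : ∀ (M N : Matrix k k ℝ), ((M * N).map (C : ℝ →+* ℝ[X]))
      = (M.map (C : ℝ →+* ℝ[X])) * (N.map (C : ℝ →+* ℝ[X])) := by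
    intro M N
    simpa [RingHom.mapMatrix_apply] using
      (map_mul ((C : ℝ →+* ℝ[X]).mapMatrix) M N)
  have hc : charmatrix (P * A * P')
      = (P.map (C : ℝ →+* ℝ[X])) * charmatrix A * (P'.map (C : ℝ →+* ℝ[X])) := by
    rw [charmatrix, charmatrix]
    rw [mul_sub, sub_mul]
    congr 1
    · -- scalar X = P.map C * scalar X * P'.map C
      have hcomm : (Matrix.scalar k (X : ℝ[X])) * (P.map (C : ℝ →+* ℝ[X]))
          = (P.map (C : ℝ →+* ℝ[X])) * (Matrix.scalar k (X : ℝ[X])) :=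
        Matrix.scalar_commute (X : ℝ[X]) (fun r' => Commute.all _ _) _
      have : (P.map (C : ℝ →+* ℝ[X])) * (Matrix.scalar k (X : ℝ[X])) * (P'.map (C : ℝ →+* ℝ[X]))
          = (Matrix.scalar k (X : ℝ[X])) := by
        rw [← hcomm, mul_assoc, ← hmap, h1]
        simp [Matrix.scalar_apply]
      exact this.symm
    · rw [RingHom.mapMatrix_apply, RingHom.mapMatrix_apply, hmap, hmap]
  have hdet : ∀ (M N : Matrix k k ℝ), (M.map (C : ℝ →+* ℝ[X])).det * (N.map (C : ℝ →+* ℝ[X])).det = ((M*N).map (C : ℝ →+* ℝ[X])).det := by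
    intro M N; rw [hmap, det_mul]
  rw [Matrix.charpoly, Matrix.charpoly, hc, det_mul, det_mul]
  rw [mul_comm ((P.map _).det), mul_assoc, hdet, h1]
  simp

lemma charpoly_diagonal (c : k → ℝ) :
    (diagonal c).charpoly = ∏ i, (X - C (c i)) := by
  have : charmatrix (diagonal c) = diagonal (fun i => X - C (c i)) := by
    ext i j
    by_cases h : i = j
    · subst h; simp
    · simp [h, diagonal_apply_ne _ h]
  rw [Matrix.charpoly, this, det_diagonal]

lemma charpoly_zero : (0 : Matrix k k ℝ).charpoly = X ^ (Fintype.card k) := by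
  rw [← diagonal_zero, charpoly_diagonal]
  simp




variable {k : Type*} [Fintype k] [DecidableEq k]

-- from stage1 (assume proved):
lemma evU_mul_transpose {A : Matrix k k ℝ} (hA : A.IsHermitian) :
    (hA.eigenvectorUnitary : Matrix k k ℝ) * (hA.eigenvectorUnitary : Matrix k k ℝ)ᵀ = 1 := by
  have := (Matrix.mem_unitaryGroup_iff).mp (hA.eigenvectorUnitary).2
  rwa [Matrix.star_eq_conjTranspose, real_conjT] at this

lemma transpose_mul_evU {A : Matrix k k ℝ} (hA : A.IsHermitian) :
    (hA.eigenvectorUnitary : Matrix k k ℝ)ᵀ * (hA.eigenvectorUnitary : Matrix k k ℝ) = 1 := by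
  have := (Matrix.mem_unitaryGroup_iff').mp (hA.eigenvectorUnitary).2
  rwa [Matrix.star_eq_conjTranspose, real_conjT] at this

lemma spectral_real {A : Matrix k k ℝ} (hA : A.IsHermitian) :
    A = (hA.eigenvectorUnitary : Matrix k k ℝ) * diagonal hA.eigenvalues
      * (hA.eigenvectorUnitary : Matrix k k ℝ)ᵀ := by
  have h := hA.spectral_theorem
  rw [RCLike.ofReal_real_eq_id, Function.id_comp] at h
  simp only [Unitary.conjStarAlgAut_apply, Unitary.coe_star] at h
  rwa [Matrix.star_eq_conjTranspose, real_conjT] at h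

lemma charpoly_eq_prod_eig {A : Matrix k k ℝ} (hA : A.IsHermitian) :
    A.charpoly = ∏ i, (X - C (hA.eigenvalues i)) := by
  conv_lhs => rw [spectral_real hA]
  rw [charpoly_conj _ _ _ (evU_mul_transpose hA), charpoly_diagonal]

lemma prod_X_sub_C_inj {f g : k → ℝ}
    (h : ∏ i, (X - C (f i)) = ∏ i, (X - C (g i))) :
    (univ.val.map f) = (univ.val.map g) := by
  have hf : ∏ i, (X - C (f i)) = ((univ.val.map f).map (fun a => X - C a)).prod := by
    rw [Multiset.map_map]; rfl
  have hg : ∏ i, (X - C (g i)) = ((univ.val.map g).map (fun a => X - C a)).prod := by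
    rw [Multiset.map_map]; rfl
  have := congrArg Polynomial.roots (hf ▸ hg ▸ h)
  rwa [Polynomial.roots_multiset_prod_X_sub_C, Polynomial.roots_multiset_prod_X_sub_C] at this

/-- eigenvalues of `E * diagonal c * Eᵀ` are `c` as a multiset; sums of `f` agree. -/
lemma sum_f_eig {A : Matrix k k ℝ} (hA : A.IsHermitian) (E : Matrix k k ℝ) (c : k → ℝ)
    (h1 : E * Eᵀ = 1) (hdec : A = E * diagonal c * Eᵀ) (f : ℝ → ℝ) :
    ∑ i, f (hA.eigenvalues i) = ∑ i, f (c i) := by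
  have hc : ∏ i, (X - C (hA.eigenvalues i)) = ∏ i, (X - C (c i)) := by
    rw [← charpoly_eq_prod_eig hA, hdec, charpoly_conj _ _ _ h1, charpoly_diagonal]
  have hm := prod_X_sub_C_inj hc
  calc ∑ i, f (hA.eigenvalues i) = ((univ.val.map hA.eigenvalues).map f).sum := by
        rw [Multiset.map_map]; rfl
    _ = ((univ.val.map c).map f).sum := by rw [hm]
    _ = ∑ i, f (c i) := by rw [Multiset.map_map]; rfl




variable {a b : Type*} [Fintype a] [DecidableEq a] [Fintype b] [DecidableEq b]

lemma charpoly_ABBA (A : Matrix a b ℝ) (B : Matrix b a ℝ) :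
    (A * B).charpoly * X ^ (Fintype.card b) = (B * A).charpoly * X ^ (Fintype.card a) := by
  classical
  let M₁ : Matrix (a ⊕ b) (a ⊕ b) ℝ := fromBlocks (A * B) 0 B 0
  let E : Matrix (a ⊕ b) (a ⊕ b) ℝ := fromBlocks 1 A 0 1
  let E' : Matrix (a ⊕ b) (a ⊕ b) ℝ := fromBlocks 1 (-A) 0 1
  have hEE' : E' * E = 1 := by
    simp [E, E', fromBlocks_multiply, ← fromBlocks_one]
  have hconj : E' * M₁ * E = fromBlocks 0 0 B (B * A) := by
    simp [E, E', M₁, fromBlocks_multiply, Matrix.mul_assoc]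
  have h1 : M₁.charpoly = (A * B).charpoly * X ^ (Fintype.card b) := by
    have := Matrix.charpoly_fromBlocks_zero₁₂ (A * B) B (0 : Matrix b b ℝ)
    rw [this, charpoly_zero]
  have h2 : M₁.charpoly = (B * A).charpoly * X ^ (Fintype.card a) := by
    have hc : M₁.charpoly = (fromBlocks 0 0 B (B * A)).charpoly := by
      rw [← hconj, charpoly_conj _ _ _ hEE']
    rw [hc, Matrix.charpoly_fromBlocks_zero₁₂ (0 : Matrix a a ℝ) B (B * A), charpoly_zero,
      mul_comm]
  rw [← h1, h2]




variable {a b k : Type*} [Fintype a] [DecidableEq a] [Fintype b] [DecidableEq b]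
  [Fintype k] [DecidableEq k]

lemma conv1 {c : Type*} [Fintype c] (g : c → ℝ) (N : ℕ) :
    (∏ i, (X - C (g i))) * X ^ N
      = (((univ.val.map g) + Multiset.replicate N 0).map (fun t => X - C t)).prod := by
  rw [Multiset.map_add, Multiset.prod_add, Multiset.map_map]
  have hrep : (Multiset.map (fun t => X - C t) (Multiset.replicate N (0:ℝ))).prod = X ^ N := by
    simp [Multiset.map_replicate, Multiset.prod_replicate]
  rw [hrep]
  rfl

/-- transfer of spectral sums between `WᵀW` and `WWᵀ` -/
lemma sum_f_AAT (W : Matrix a b ℝ) (h1 : (Wᵀ * W).IsHermitian) (h2 : (W * Wᵀ).IsHermitian)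
    (f : ℝ → ℝ) (hf : f 0 = 0) :
    ∑ i, f (h1.eigenvalues i) = ∑ j, f (h2.eigenvalues j) := by
  have hch := charpoly_ABBA W Wᵀ
  rw [charpoly_eq_prod_eig h1, charpoly_eq_prod_eig h2] at hch
  rw [conv1, conv1] at hch
  have hroots := congrArg Polynomial.roots hch
  rw [Polynomial.roots_multiset_prod_X_sub_C, Polynomial.roots_multiset_prod_X_sub_C] at hroots
  have := congrArg (fun m : Multiset ℝ => (m.map f).sum) hroots
  simp only [Multiset.map_add, Multiset.sum_add, Multiset.map_replicate, hf,
    Multiset.sum_replicate, smul_zero, add_zero] at this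
  calc ∑ i, f (h1.eigenvalues i) = ((univ.val.map h1.eigenvalues).map f).sum := by
        rw [Multiset.map_map]; rfl
    _ = ((univ.val.map h2.eigenvalues).map f).sum := by
        exact this.symm
    _ = ∑ j, f (h2.eigenvalues j) := by rw [Multiset.map_map]; rfl

/-- Cauchy–Schwarz, sqrt form -/
lemma cs_sqrt (f g : k → ℝ) :
    ∑ i, f i * g i ≤ Real.sqrt (∑ i, f i ^ 2) * Real.sqrt (∑ i, g i ^ 2) := by
  have h := Finset.sum_mul_sq_le_sq_mul_sq univ f g
  calc ∑ i, f i * g i ≤ |∑ i, f i * g i| := le_abs_self _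
    _ = Real.sqrt ((∑ i, f i * g i) ^ 2) := (Real.sqrt_sq_eq_abs _).symm
    _ ≤ Real.sqrt ((∑ i, f i ^ 2) * ∑ i, g i ^ 2) := Real.sqrt_le_sqrt h
    _ = _ := Real.sqrt_mul (Finset.sum_nonneg fun i _ => sq_nonneg _) _

lemma entry_formula (Q R : Matrix k k ℝ) (c : k → ℝ) (j : k) :
    (Rᵀ * (Q * diagonal c * Qᵀ) * R) j j = ∑ i, c i * ((Qᵀ * R) i j) ^ 2 := by
  have h : Rᵀ * (Q * diagonal c * Qᵀ) * R = (Qᵀ * R)ᵀ * (diagonal c * (Qᵀ * R)) := by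
    rw [transpose_mul, transpose_transpose]
    simp only [Matrix.mul_assoc]
  rw [h, mul_apply]
  congr 1; ext i
  rw [transpose_apply, diagonal_mul]
  ring

/-- Jensen / pinching tool -/
lemma jensen (Q R : Matrix k k ℝ) (hQ1 : Q * Qᵀ = 1) (hR1 : R * Rᵀ = 1)
    (c : k → ℝ) (hc : ∀ i, 0 ≤ c i) :
    ∑ i, Real.sqrt (c i) ≤ ∑ j, Real.sqrt ((Rᵀ * (Q * diagonal c * Qᵀ) * R) j j) := by
  set M := Qᵀ * R with hM
  have colsum : ∀ j, ∑ i, (M i j) ^ 2 = 1 := by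
    intro j
    have h2 : Mᵀ * M = 1 := by
      rw [hM, transpose_mul, transpose_transpose, Matrix.mul_assoc, ← Matrix.mul_assoc Q, hQ1,
        Matrix.one_mul, mul_eq_one_comm.mp hR1]
    have h3 : ∑ i, Mᵀ j i * M i j = (1 : Matrix k k ℝ) j j := by rw [← mul_apply, h2]
    simp only [transpose_apply, one_apply_eq] at h3
    rw [← h3]
    congr 1; ext i; ring
  have rowsum : ∀ i, ∑ j, (M i j) ^ 2 = 1 := by
    intro i
    have h2 : M * Mᵀ = 1 := by
      rw [hM, transpose_mul, transpose_transpose, Matrix.mul_assoc, ← Matrix.mul_assoc R, hR1,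
        Matrix.one_mul, mul_eq_one_comm.mp hQ1]
    have h3 : ∑ j, M i j * Mᵀ j i = (1 : Matrix k k ℝ) i i := by rw [← mul_apply, h2]
    simp only [transpose_apply, one_apply_eq] at h3
    rw [← h3]
    congr 1; ext j; ring
  have step1 : ∑ i, Real.sqrt (c i) = ∑ j, ∑ i, (M i j) ^ 2 * Real.sqrt (c i) := by
    rw [Finset.sum_comm]
    congr 1; ext i
    rw [← Finset.sum_mul, rowsum i, one_mul]
  rw [step1]
  apply Finset.sum_le_sum
  intro j _
  have hcs := cs_sqrt (fun i => |M i j|) (fun i => |M i j| * Real.sqrt (c i))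
  have e1 : ∀ i, |M i j| * (|M i j| * Real.sqrt (c i)) = (M i j) ^ 2 * Real.sqrt (c i) := by
    intro i; rw [← mul_assoc, abs_mul_abs_self]; ring
  have e2 : ∀ i, (|M i j| * Real.sqrt (c i)) ^ 2 = (M i j) ^ 2 * c i := by
    intro i; rw [mul_pow, sq_abs, Real.sq_sqrt (hc i)]
  have e3 : ∀ i, |M i j| ^ 2 = (M i j) ^ 2 := fun i => sq_abs _
  simp only [e1, e2, e3] at hcs
  rw [colsum j, Real.sqrt_one, one_mul] at hcs
  calc ∑ i, (M i j) ^ 2 * Real.sqrt (c i) ≤ Real.sqrt (∑ i, (M i j) ^ 2 * c i) := hcs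
    _ = Real.sqrt ((Rᵀ * (Q * diagonal c * Qᵀ) * R) j j) := by
        rw [entry_formula]
        congr 1
        apply Finset.sum_congr rfl
        intro i _; ring




variable {a b k : Type*} [Fintype a] [DecidableEq a] [Fintype b] [DecidableEq b]
  [Fintype k] [DecidableEq k]

section conjdiag

variable (Q : Matrix k k ℝ)

lemma conjdiag_mul (hQ2 : Qᵀ * Q = 1) (c d : k → ℝ) :
    (Q * diagonal c * Qᵀ) * (Q * diagonal d * Qᵀ)
      = Q * diagonal (fun i => c i * d i) * Qᵀ := by
  simp only [Matrix.mul_assoc]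
  rw [← Matrix.mul_assoc Qᵀ Q, hQ2, Matrix.one_mul, ← Matrix.mul_assoc (diagonal c),
    diagonal_mul_diagonal]

lemma conjdiag_sub (c d : k → ℝ) :
    (Q * diagonal c * Qᵀ) - (Q * diagonal d * Qᵀ) = Q * diagonal (fun i => c i - d i) * Qᵀ := by
  have h : diagonal (fun i => c i - d i) = diagonal c - diagonal d := (diagonal_sub c d).symm
  rw [h, Matrix.mul_sub, Matrix.sub_mul]

lemma conjdiag_one (hQ1 : Q * Qᵀ = 1) :
    Q * diagonal (fun _ : k => (1:ℝ)) * Qᵀ = 1 := by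
  rw [diagonal_one, Matrix.mul_one, hQ1]

lemma conjdiag_transpose (c : k → ℝ) : (Q * diagonal c * Qᵀ)ᵀ = Q * diagonal c * Qᵀ := by
  rw [transpose_mul, transpose_mul, transpose_transpose, diagonal_transpose, Matrix.mul_assoc]

lemma conjdiag_zero : Q * diagonal (fun _ : k => (0:ℝ)) * Qᵀ = 0 := by
  rw [diagonal_zero, Matrix.mul_zero, Matrix.zero_mul]

lemma trace_conjdiag (hQ2 : Qᵀ * Q = 1) (c : k → ℝ) :
    Matrix.trace (Q * diagonal c * Qᵀ) = ∑ i, c i := by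
  rw [Matrix.trace_mul_cycle, hQ2, Matrix.one_mul, Matrix.trace_diagonal]

lemma conjdiag_congr (c d : k → ℝ) (h : ∀ i, c i = d i) :
    Q * diagonal c * Qᵀ = Q * diagonal d * Qᵀ := by
  have : c = d := _root_.funext h
  rw [this]

end conjdiag

lemma trace_transpose_mul (M : Matrix a b ℝ) :
    Matrix.trace (Mᵀ * M) = ∑ j, ∑ i, (M i j) ^ 2 := by
  rw [Matrix.trace]
  apply Finset.sum_congr rfl
  intro j _
  rw [Matrix.diag_apply, mul_apply]
  apply Finset.sum_congr rfl
  intro i _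
  rw [transpose_apply]; ring

lemma trace_transpose_mul_nonneg (M : Matrix a b ℝ) : 0 ≤ Matrix.trace (Mᵀ * M) := by
  rw [trace_transpose_mul]
  exact Finset.sum_nonneg fun j _ => Finset.sum_nonneg fun i _ => sq_nonneg _

lemma trace_orth_inv (R : Matrix k k ℝ) (hR1 : R * Rᵀ = 1) (M : Matrix a k ℝ) :
    Matrix.trace ((M * R)ᵀ * (M * R)) = Matrix.trace (Mᵀ * M) := by
  rw [transpose_mul]
  rw [show Rᵀ * Mᵀ * (M * R) = Rᵀ * (Mᵀ * M) * R by simp only [Matrix.mul_assoc]]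
  rw [Matrix.trace_mul_cycle, ← Matrix.mul_assoc, hR1, Matrix.one_mul]

/-- matrices with `M * Mᵀ = 0` vanish -/
lemma eq_zero_of_self_mul_transpose (M : Matrix a b ℝ) (h : M * Mᵀ = 0) : M = 0 := by
  have := (Matrix.self_mul_conjTranspose_eq_zero (A := M)).mp
  rw [real_conjT] at this
  exact this h

/-- Polar-type decomposition with explicit eigen-data. -/
lemma polar_decomp (W : Matrix a b ℝ) :
    ∃ (Q : Matrix a a ℝ) (ν : a → ℝ) (P : Matrix a b ℝ),
      Q * Qᵀ = 1 ∧ Qᵀ * Q = 1 ∧ (∀ i, 0 ≤ ν i) ∧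
      W = (Q * diagonal (fun i => Real.sqrt (ν i)) * Qᵀ) * P ∧
      (P * Pᵀ) * (P * Pᵀ) = P * Pᵀ ∧ (P * Pᵀ)ᵀ = P * Pᵀ ∧
      (Pᵀ * P) * (Pᵀ * P) = Pᵀ * P ∧ (Pᵀ * P)ᵀ = Pᵀ * P ∧
      ∑ i, Real.sqrt (ν i)
        = ∑ j, Real.sqrt ((Matrix.isHermitian_conjTranspose_mul_self W).eigenvalues j) := by
  have hB : (W * Wᵀ).IsHermitian := Matrix.isHermitian_mul_conjTranspose_self W
  set ν := hB.eigenvalues with hν_def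
  set Q : Matrix a a ℝ := (hB.eigenvectorUnitary : Matrix a a ℝ) with hQ_def
  have hQ1 : Q * Qᵀ = 1 := evU_mul_transpose hB
  have hQ2 : Qᵀ * Q = 1 := transpose_mul_evU hB
  have hspec : W * Wᵀ = Q * diagonal ν * Qᵀ := spectral_real hB
  have hν : ∀ i, 0 ≤ ν i := fun i =>
    (Matrix.posSemidef_self_mul_conjTranspose W).eigenvalues_nonneg i
  set inv : a → ℝ := fun i => if ν i = 0 then 0 else (Real.sqrt (ν i))⁻¹ with hinv_def
  set ind : a → ℝ := fun i => if ν i = 0 then 0 else 1 with hind_def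
  set Sp : Matrix a a ℝ := Q * diagonal inv * Qᵀ with hSp_def
  set P : Matrix a b ℝ := Sp * W with hP_def
  set S : Matrix a a ℝ := Q * diagonal (fun i => Real.sqrt (ν i)) * Qᵀ with hS_def
  have hsqrt_ne : ∀ i, ν i ≠ 0 → Real.sqrt (ν i) ≠ 0 := by
    intro i h
    exact ne_of_gt (Real.sqrt_pos.mpr (lt_of_le_of_ne (hν i) (Ne.symm h)))
  -- π := Q diag ind Qᵀ absorbs W
  have hπW : (Q * diagonal ind * Qᵀ) * W = W := by
    have h1π : (1 : Matrix a a ℝ) - Q * diagonal ind * Qᵀ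
        = Q * diagonal (fun i => (1:ℝ) - ind i) * Qᵀ := by
      rw [← conjdiag_one Q hQ1, conjdiag_sub]
    have hM0 : (Q * diagonal (fun i => (1:ℝ) - ind i) * Qᵀ) * W = 0 := by
      apply eq_zero_of_self_mul_transpose
      have h2 : ((Q * diagonal (fun i => (1:ℝ) - ind i) * Qᵀ) * W)
            * ((Q * diagonal (fun i => (1:ℝ) - ind i) * Qᵀ) * W)ᵀ
          = (Q * diagonal (fun i => (1:ℝ) - ind i) * Qᵀ) * (W * Wᵀ)
            * (Q * diagonal (fun i => (1:ℝ) - ind i) * Qᵀ) := by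
        rw [transpose_mul, conjdiag_transpose]
        simp only [Matrix.mul_assoc]
      rw [h2, hspec, conjdiag_mul Q hQ2, conjdiag_mul Q hQ2]
      have hzz : ∀ i, ((1:ℝ) - ind i) * ν i * ((1:ℝ) - ind i) = (0:ℝ) := by
        intro i
        by_cases h : ν i = 0 <;> simp [hind_def, h]
      rw [conjdiag_congr Q _ (fun _ => (0:ℝ)) hzz, conjdiag_zero]
    have h3 : (1 - Q * diagonal ind * Qᵀ) * W = 0 := by rw [h1π]; exact hM0
    have h4 := sub_eq_zero.mp (by rw [Matrix.sub_mul, Matrix.one_mul] at h3; exact h3)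
    exact h4.symm
  have hPPt : P * Pᵀ = Q * diagonal ind * Qᵀ := by
    have : P * Pᵀ = Sp * (W * Wᵀ) * Sp := by
      rw [hP_def, transpose_mul, show Spᵀ = Sp from conjdiag_transpose Q inv]
      simp only [Matrix.mul_assoc]
    rw [this, hspec, hSp_def, conjdiag_mul Q hQ2, conjdiag_mul Q hQ2]
    apply conjdiag_congr
    intro i
    by_cases h : ν i = 0
    · simp [hinv_def, hind_def, h]
    · have hs := hsqrt_ne i h
      have : Real.sqrt (ν i) * Real.sqrt (ν i) = ν i := Real.mul_self_sqrt (hν i)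
      simp only [hinv_def, hind_def, if_neg h]
      rw [← this]
      field_simp
      rw [Real.sqrt_sq (Real.sqrt_nonneg _)]
  have hSpSp : Sp * Sp = Q * diagonal (fun i => inv i * inv i) * Qᵀ :=
    conjdiag_mul Q hQ2 inv inv
  have hPtP : Pᵀ * P = Wᵀ * (Q * diagonal (fun i => inv i * inv i) * Qᵀ) * W := by
    rw [hP_def, transpose_mul, show Spᵀ = Sp from conjdiag_transpose Q inv, ← hSpSp]
    simp only [Matrix.mul_assoc]
  refine ⟨Q, ν, P, hQ1, hQ2, hν, ?_, ?_, ?_, ?_, ?_, ?_⟩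
  · -- W = S * P
    have hSSp : S * Sp = Q * diagonal ind * Qᵀ := by
      rw [hS_def, hSp_def, conjdiag_mul Q hQ2]
      apply conjdiag_congr
      intro i
      by_cases h : ν i = 0
      · simp [hinv_def, hind_def, h]
      · simp [hinv_def, hind_def, h, mul_inv_cancel₀ (hsqrt_ne i h)]
    rw [hP_def, ← Matrix.mul_assoc, hSSp, hπW]
  · -- idempotent P Pᵀ
    rw [hPPt, conjdiag_mul Q hQ2]
    apply conjdiag_congr
    intro i
    by_cases h : ν i = 0 <;> simp [hind_def, h]
  · rw [hPPt]; exact conjdiag_transpose Q ind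
  · -- idempotent Pᵀ P
    rw [hPtP]
    have : Wᵀ * (Q * diagonal (fun i => inv i * inv i) * Qᵀ) * W
        * (Wᵀ * (Q * diagonal (fun i => inv i * inv i) * Qᵀ) * W)
        = Wᵀ * ((Q * diagonal (fun i => inv i * inv i) * Qᵀ) * (W * Wᵀ)
          * (Q * diagonal (fun i => inv i * inv i) * Qᵀ)) * W := by
      simp only [Matrix.mul_assoc]
    rw [this, hspec, conjdiag_mul Q hQ2, conjdiag_mul Q hQ2]
    have hpt : ∀ i, (inv i * inv i) * ν i * (inv i * inv i) = inv i * inv i := by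
      intro i
      by_cases h : ν i = 0
      · simp [hinv_def, h]
      · have hs := hsqrt_ne i h
        have h2 : Real.sqrt (ν i) * Real.sqrt (ν i) = ν i := Real.mul_self_sqrt (hν i)
        simp only [hinv_def, if_neg h]
        rw [← h2]
        field_simp
        rw [Real.sqrt_sq (Real.sqrt_nonneg _)]
    rw [conjdiag_congr Q _ _ hpt]
  · rw [hPtP, transpose_mul, transpose_mul, transpose_transpose,
      show (Q * diagonal (fun i => inv i * inv i) * Qᵀ)ᵀ = _ from conjdiag_transpose Q _]
    simp only [Matrix.mul_assoc]
  · -- trace identity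
    have := sum_f_AAT W (Matrix.isHermitian_conjTranspose_mul_self W) hB Real.sqrt Real.sqrt_zero
    exact this.symm




variable {a k : Type*} [Fintype a] [DecidableEq a] [Fintype k] [DecidableEq k]

lemma one_sub_idem (F : Matrix k k ℝ) (h1 : F * F = F) (h2 : Fᵀ = F) :
    (1 - F)ᵀ * (1 - F) = 1 - F := by
  rw [transpose_sub, transpose_one, h2]
  rw [Matrix.mul_sub, Matrix.sub_mul, Matrix.sub_mul, Matrix.mul_one, Matrix.mul_one,
    Matrix.one_mul, h1]
  abel

lemma trace_conj_nonneg {b : Type*} [Fintype b] [DecidableEq b] (Sh : Matrix k k ℝ) (hSh : Shᵀ = Sh)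
    (Z : Matrix b k ℝ) : 0 ≤ Matrix.trace (Sh * (Zᵀ * Z) * Sh) := by
  have h : Sh * (Zᵀ * Z) * Sh = (Z * Sh)ᵀ * (Z * Sh) := by
    rw [transpose_mul, hSh]
    simp only [Matrix.mul_assoc]
  rw [h]
  exact trace_transpose_mul_nonneg _

lemma trace_sandwich_le {b : Type*} [Fintype b] [DecidableEq b] (Sh : Matrix k k ℝ) (hSh : Shᵀ = Sh)
    (P : Matrix k b ℝ) (hcontr : 0 ≤ Matrix.trace (Sh * (1 - P * Pᵀ) * Sh)) :
    Matrix.trace ((Sh * P)ᵀ * (Sh * P)) ≤ Matrix.trace (Sh * Sh) := by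
  have h1 : Matrix.trace ((Sh * P)ᵀ * (Sh * P)) = Matrix.trace (Sh * (P * Pᵀ) * Sh) := by
    rw [Matrix.trace_mul_comm, transpose_mul, hSh]
    simp only [Matrix.mul_assoc]
  have h2 : Sh * (1 - P * Pᵀ) * Sh = Sh * Sh - Sh * (P * Pᵀ) * Sh := by
    rw [Matrix.mul_sub, Matrix.mul_one, Matrix.sub_mul]
  rw [h2, Matrix.trace_sub] at hcontr
  linarith [h1 ▸ hcontr]

/-- Main lower bound. -/
theorem lower_bound {m n d : ℕ} (X : Matrix (Fin m) (Fin n) ℝ) (U : Matrix (Fin m) (Fin d) ℝ)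
    (V : Matrix (Fin n) (Fin d) ℝ) (hX : X = U * Vᵀ)
    (hA : (Xᵀ * X).IsHermitian) (hU : (Uᵀ * U).IsHermitian) (hV : (Vᵀ * V).IsHermitian)
    (hApsd : (Xᵀ * X).PosSemidef) :
    (∑ i, Real.sqrt (Real.sqrt (hA.eigenvalues i))) ^ 2
      ≤ (∑ i, Real.sqrt (hU.eigenvalues i)) * (∑ i, Real.sqrt (hV.eigenvalues i)) := by
  classical
  set lamv := hA.eigenvalues with hlamv_def
  set QA : Matrix (Fin n) (Fin n) ℝ := (hA.eigenvectorUnitary : Matrix (Fin n) (Fin n) ℝ)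
    with hQA_def
  have hQA1 : QA * QAᵀ = 1 := evU_mul_transpose hA
  have hQA2 : QAᵀ * QA = 1 := transpose_mul_evU hA
  have hspecA : Xᵀ * X = QA * diagonal lamv * QAᵀ := spectral_real hA
  have hlam : ∀ i, 0 ≤ lamv i := fun i => hApsd.eigenvalues_nonneg i
  -- polar decompositions of U and V
  obtain ⟨Q1, ν, P1, hQ11, hQ12, hν, hUdec, hP1a, hP1b, hP1c, hP1d, hνtr⟩ := polar_decomp U
  obtain ⟨Q2, μ, P2, hQ21, hQ22, hμ, hVdec, hP2a, hP2b, hP2c, hP2d, hμtr⟩ := polar_decomp V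
  set S : Matrix (Fin m) (Fin m) ℝ := Q1 * diagonal (fun i => Real.sqrt (ν i)) * Q1ᵀ with hS_def
  set T : Matrix (Fin n) (Fin n) ℝ := Q2 * diagonal (fun i => Real.sqrt (μ i)) * Q2ᵀ with hT_def
  set Sh : Matrix (Fin m) (Fin m) ℝ := Q1 * diagonal (fun i => Real.sqrt (Real.sqrt (ν i)))
    * Q1ᵀ with hSh_def
  have hShSh : Sh * Sh = S := by
    rw [hSh_def, conjdiag_mul Q1 hQ12, hS_def]
    exact conjdiag_congr _ _ _ fun i => Real.mul_self_sqrt (Real.sqrt_nonneg _)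
  have hSht : Shᵀ = Sh := conjdiag_transpose Q1 _
  -- X polar pieces
  set inv : Fin n → ℝ := fun i => if lamv i = 0 then 0 else (Real.sqrt (lamv i))⁻¹ with hinv_def
  set Gp : Matrix (Fin n) (Fin n) ℝ := QA * diagonal inv * QAᵀ with hGp_def
  set P : Matrix (Fin m) (Fin n) ℝ := X * Gp with hP_def
  set G : Matrix (Fin n) (Fin n) ℝ := QA * diagonal (fun i => Real.sqrt (lamv i)) * QAᵀ
    with hG_def
  have hsqrt_ne : ∀ i, lamv i ≠ 0 → Real.sqrt (lamv i) ≠ 0 := fun i h =>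
    ne_of_gt (Real.sqrt_pos.mpr (lt_of_le_of_ne (hlam i) (Ne.symm h)))
  have hGpt : Gpᵀ = Gp := conjdiag_transpose QA _
  have hPtX : Pᵀ * X = G := by
    rw [hP_def, transpose_mul, hGpt, Matrix.mul_assoc, hspecA, hGp_def,
      conjdiag_mul QA hQA2, hG_def]
    apply conjdiag_congr
    intro i
    by_cases h : lamv i = 0
    · simp [hinv_def, h]
    · have h2 : Real.sqrt (lamv i) * Real.sqrt (lamv i) = lamv i := Real.mul_self_sqrt (hlam i)
      simp only [hinv_def, if_neg h]
      rw [← h2]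
      field_simp
      rw [Real.sqrt_sq (Real.sqrt_nonneg _), pow_two, mul_div_cancel_right₀ _ (hsqrt_ne i h)]
  -- P * Pᵀ is a symmetric idempotent
  have hPPt_eq : P * Pᵀ = X * (QA * diagonal (fun i => inv i * inv i) * QAᵀ) * Xᵀ := by
    rw [hP_def, transpose_mul, hGpt, hGp_def, ← conjdiag_mul QA hQA2]
    simp only [Matrix.mul_assoc]
  have hg2 : ∀ i : Fin n, (inv i * inv i) * lamv i * (inv i * inv i) = inv i * inv i := by
    intro i
    by_cases h : lamv i = 0
    · simp [hinv_def, h]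
    · have h2 : Real.sqrt (lamv i) * Real.sqrt (lamv i) = lamv i := Real.mul_self_sqrt (hlam i)
      have hs := hsqrt_ne i h
      simp only [hinv_def, if_neg h]
      rw [← h2]
      field_simp
      rw [Real.sqrt_sq (Real.sqrt_nonneg _)]
  have hPPa : (P * Pᵀ) * (P * Pᵀ) = P * Pᵀ := by
    rw [hPPt_eq]
    have e1 : X * (QA * diagonal (fun i => inv i * inv i) * QAᵀ) * Xᵀ
        * (X * (QA * diagonal (fun i => inv i * inv i) * QAᵀ) * Xᵀ)
        = X * ((QA * diagonal (fun i => inv i * inv i) * QAᵀ) * (Xᵀ * X)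
          * (QA * diagonal (fun i => inv i * inv i) * QAᵀ)) * Xᵀ := by
      simp only [Matrix.mul_assoc]
    rw [e1, hspecA, conjdiag_mul QA hQA2, conjdiag_mul QA hQA2,
      conjdiag_congr QA _ _ hg2]
  have hPPb : (P * Pᵀ)ᵀ = P * Pᵀ := by
    rw [hPPt_eq, transpose_mul, transpose_mul, transpose_transpose, conjdiag_transpose]
    simp only [Matrix.mul_assoc]
  -- the key factorization X = S * K * T
  set K : Matrix (Fin m) (Fin n) ℝ := P1 * P2ᵀ with hK_def
  have hXSKT : X = S * K * T := by
    rw [hX, hUdec, hVdec, hK_def]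
    rw [transpose_mul, show (Q2 * diagonal (fun i => Real.sqrt (μ i)) * Q2ᵀ)ᵀ = T from
      conjdiag_transpose Q2 _]
    simp only [Matrix.mul_assoc]
  -- Jensen basis R := Q2
  have hTQ2 : T * Q2 = Q2 * diagonal (fun i => Real.sqrt (μ i)) := by
    rw [hT_def, Matrix.mul_assoc, hQ22, Matrix.mul_one]
  set W₁ : Matrix (Fin m) (Fin n) ℝ := Sh * P * Q2 with hW1_def
  set W₂ : Matrix (Fin m) (Fin n) ℝ := Sh * K * Q2 with hW2_def
  have hkey : Q2ᵀ * G * Q2 = W₁ᵀ * W₂ * diagonal (fun i => Real.sqrt (μ i)) := by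
    rw [← hPtX, hXSKT, ← hShSh, hW1_def, hW2_def]
    rw [Matrix.transpose_mul (Sh * P) Q2, Matrix.transpose_mul Sh P, hSht]
    simp only [Matrix.mul_assoc]
    rw [hTQ2]
  have hE0 : ∀ j, (0:ℝ) ≤ ∑ i, (W₁ i j) ^ 2 := fun j => Finset.sum_nonneg fun i _ => sq_nonneg _
  have hF0 : ∀ j, (0:ℝ) ≤ ∑ i, (W₂ i j) ^ 2 := fun j => Finset.sum_nonneg fun i _ => sq_nonneg _
  set tS := ∑ i, Real.sqrt (ν i) with htS_def
  set tT := ∑ i, Real.sqrt (μ i) with htT_def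
  have htS0 : 0 ≤ tS := Finset.sum_nonneg fun i _ => Real.sqrt_nonneg _
  have htT0 : 0 ≤ tT := Finset.sum_nonneg fun i _ => Real.sqrt_nonneg _
  -- entrywise bound
  have hentry : ∀ j, (Q2ᵀ * G * Q2) j j
      ≤ (Real.sqrt (∑ i, (W₁ i j) ^ 2) * Real.sqrt (∑ i, (W₂ i j) ^ 2)) * Real.sqrt (μ j) := by
    intro j
    rw [hkey, Matrix.mul_diagonal]
    apply mul_le_mul_of_nonneg_right _ (Real.sqrt_nonneg _)
    rw [mul_apply]
    have hcs := cs_sqrt (fun i => W₁ i j) (fun i => W₂ i j)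
    simpa [transpose_apply] using hcs
  -- traces
  have htrShSh : Matrix.trace (Sh * Sh) = tS := by
    rw [hShSh, hS_def, trace_conjdiag Q1 hQ12]
  have hEsum : ∑ j, ∑ i, (W₁ i j) ^ 2 ≤ tS := by
    have h1 : ∑ j, ∑ i, (W₁ i j) ^ 2 = Matrix.trace (W₁ᵀ * W₁) := (trace_transpose_mul W₁).symm
    have h2 : Matrix.trace (W₁ᵀ * W₁) = Matrix.trace ((Sh * P)ᵀ * (Sh * P)) := by
      rw [hW1_def]
      exact trace_orth_inv Q2 hQ21 (Sh * P)
    have hcontr : 0 ≤ Matrix.trace (Sh * (1 - P * Pᵀ) * Sh) := by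
      rw [← one_sub_idem (P * Pᵀ) hPPa hPPb]
      exact trace_conj_nonneg Sh hSht _
    have h3 := trace_sandwich_le Sh hSht P hcontr
    rw [h1, h2, ← htrShSh] at *
    linarith
  have hFsum : ∑ j, ∑ i, (W₂ i j) ^ 2 ≤ tS := by
    have h1 : ∑ j, ∑ i, (W₂ i j) ^ 2 = Matrix.trace (W₂ᵀ * W₂) := (trace_transpose_mul W₂).symm
    have h2 : Matrix.trace (W₂ᵀ * W₂) = Matrix.trace ((Sh * K)ᵀ * (Sh * K)) := by
      rw [hW2_def]
      exact trace_orth_inv Q2 hQ21 (Sh * K)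
    have hKdec : 1 - K * Kᵀ = (1 - P1 * P1ᵀ) + P1 * (1 - P2ᵀ * P2) * P1ᵀ := by
      rw [hK_def, transpose_mul, transpose_transpose]
      rw [Matrix.mul_sub, Matrix.mul_one, Matrix.sub_mul]
      rw [show P1 * P2ᵀ * (P2 * P1ᵀ) = P1 * (P2ᵀ * P2) * P1ᵀ by simp only [Matrix.mul_assoc]]
      abel
    have hidem2 : (1 - P2ᵀ * P2) * (1 - P2ᵀ * P2) = 1 - P2ᵀ * P2 := by
      have h := one_sub_idem (P2ᵀ * P2) hP2c hP2d
      rwa [transpose_sub, transpose_one, hP2d] at h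
    have hcontr : 0 ≤ Matrix.trace (Sh * (1 - K * Kᵀ) * Sh) := by
      rw [hKdec, Matrix.mul_add, Matrix.add_mul, Matrix.trace_add]
      have hterm1 : 0 ≤ Matrix.trace (Sh * (1 - P1 * P1ᵀ) * Sh) := by
        rw [← one_sub_idem (P1 * P1ᵀ) hP1a hP1b]
        exact trace_conj_nonneg Sh hSht _
      have hterm2 : 0 ≤ Matrix.trace (Sh * (P1 * (1 - P2ᵀ * P2) * P1ᵀ) * Sh) := by
        have hZ : P1 * (1 - P2ᵀ * P2) * P1ᵀ
            = ((1 - P2ᵀ * P2) * P1ᵀ)ᵀ * ((1 - P2ᵀ * P2) * P1ᵀ) := by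
          rw [transpose_mul, transpose_transpose, transpose_sub, transpose_one, hP2d]
          rw [show P1 * (1 - P2ᵀ * P2) * ((1 - P2ᵀ * P2) * P1ᵀ)
            = P1 * ((1 - P2ᵀ * P2) * (1 - P2ᵀ * P2)) * P1ᵀ by simp only [Matrix.mul_assoc]]
          rw [hidem2]
        rw [hZ]
        exact trace_conj_nonneg Sh hSht _
      linarith
    have h3 := trace_sandwich_le Sh hSht K hcontr
    rw [h1, h2, ← htrShSh] at *
    linarith
  -- assembling the chain
  have chain1 : ∑ i, Real.sqrt (Real.sqrt (lamv i)) ≤ ∑ j, Real.sqrt ((Q2ᵀ * G * Q2) j j) := by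
    have h := jensen QA Q2 hQA1 hQ21 (fun i => Real.sqrt (lamv i))
      (fun i => Real.sqrt_nonneg _)
    rw [hG_def]
    exact h
  have chain2 : ∀ j, Real.sqrt ((Q2ᵀ * G * Q2) j j)
      ≤ Real.sqrt (Real.sqrt (μ j))
        * Real.sqrt (Real.sqrt (∑ i, (W₁ i j) ^ 2) * Real.sqrt (∑ i, (W₂ i j) ^ 2)) := by
    intro j
    calc Real.sqrt ((Q2ᵀ * G * Q2) j j)
        ≤ Real.sqrt ((Real.sqrt (∑ i, (W₁ i j) ^ 2) * Real.sqrt (∑ i, (W₂ i j) ^ 2))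
            * Real.sqrt (μ j)) := Real.sqrt_le_sqrt (hentry j)
      _ = Real.sqrt (Real.sqrt (μ j))
          * Real.sqrt (Real.sqrt (∑ i, (W₁ i j) ^ 2) * Real.sqrt (∑ i, (W₂ i j) ^ 2)) := by
          rw [mul_comm, Real.sqrt_mul (Real.sqrt_nonneg _)]
  have chain3 : ∑ j, Real.sqrt (Real.sqrt (μ j))
        * Real.sqrt (Real.sqrt (∑ i, (W₁ i j) ^ 2) * Real.sqrt (∑ i, (W₂ i j) ^ 2))
      ≤ Real.sqrt tT * Real.sqrt (∑ j, Real.sqrt (∑ i, (W₁ i j) ^ 2)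
          * Real.sqrt (∑ i, (W₂ i j) ^ 2)) := by
    have hcs := cs_sqrt (fun j => Real.sqrt (Real.sqrt (μ j)))
      (fun j => Real.sqrt (Real.sqrt (∑ i, (W₁ i j) ^ 2) * Real.sqrt (∑ i, (W₂ i j) ^ 2)))
    have e1 : ∀ j : Fin n, (Real.sqrt (Real.sqrt (μ j))) ^ 2 = Real.sqrt (μ j) :=
      fun j => Real.sq_sqrt (Real.sqrt_nonneg _)
    have e2 : ∀ j : Fin n, (Real.sqrt (Real.sqrt (∑ i, (W₁ i j) ^ 2)
        * Real.sqrt (∑ i, (W₂ i j) ^ 2))) ^ 2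
        = Real.sqrt (∑ i, (W₁ i j) ^ 2) * Real.sqrt (∑ i, (W₂ i j) ^ 2) :=
      fun j => Real.sq_sqrt (mul_nonneg (Real.sqrt_nonneg _) (Real.sqrt_nonneg _))
    simp only [e1, e2] at hcs
    exact hcs
  have chain4 : ∑ j, Real.sqrt (∑ i, (W₁ i j) ^ 2) * Real.sqrt (∑ i, (W₂ i j) ^ 2) ≤ tS := by
    have hcs := cs_sqrt (fun j => Real.sqrt (∑ i, (W₁ i j) ^ 2))
      (fun j => Real.sqrt (∑ i, (W₂ i j) ^ 2))
    have e1 : ∀ j : Fin n, (Real.sqrt (∑ i, (W₁ i j) ^ 2)) ^ 2 = ∑ i, (W₁ i j) ^ 2 :=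
      fun j => Real.sq_sqrt (hE0 j)
    have e2 : ∀ j : Fin n, (Real.sqrt (∑ i, (W₂ i j) ^ 2)) ^ 2 = ∑ i, (W₂ i j) ^ 2 :=
      fun j => Real.sq_sqrt (hF0 j)
    simp only [e1, e2] at hcs
    calc ∑ j, Real.sqrt (∑ i, (W₁ i j) ^ 2) * Real.sqrt (∑ i, (W₂ i j) ^ 2)
        ≤ Real.sqrt (∑ j, ∑ i, (W₁ i j) ^ 2) * Real.sqrt (∑ j, ∑ i, (W₂ i j) ^ 2) := hcs
      _ ≤ Real.sqrt tS * Real.sqrt tS := by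
          apply mul_le_mul (Real.sqrt_le_sqrt hEsum) (Real.sqrt_le_sqrt hFsum)
            (Real.sqrt_nonneg _) (Real.sqrt_nonneg _)
      _ = tS := Real.mul_self_sqrt htS0
  have final : ∑ i, Real.sqrt (Real.sqrt (lamv i)) ≤ Real.sqrt tT * Real.sqrt tS := by
    calc ∑ i, Real.sqrt (Real.sqrt (lamv i))
        ≤ ∑ j, Real.sqrt ((Q2ᵀ * G * Q2) j j) := chain1
      _ ≤ ∑ j, Real.sqrt (Real.sqrt (μ j))
          * Real.sqrt (Real.sqrt (∑ i, (W₁ i j) ^ 2) * Real.sqrt (∑ i, (W₂ i j) ^ 2)) :=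
          Finset.sum_le_sum fun j _ => chain2 j
      _ ≤ Real.sqrt tT * Real.sqrt (∑ j, Real.sqrt (∑ i, (W₁ i j) ^ 2)
          * Real.sqrt (∑ i, (W₂ i j) ^ 2)) := chain3
      _ ≤ Real.sqrt tT * Real.sqrt tS := by
          apply mul_le_mul_of_nonneg_left (Real.sqrt_le_sqrt chain4) (Real.sqrt_nonneg _)
  have hL0 : 0 ≤ ∑ i, Real.sqrt (Real.sqrt (lamv i)) :=
    Finset.sum_nonneg fun i _ => Real.sqrt_nonneg _
  have hsq : (∑ i, Real.sqrt (Real.sqrt (lamv i))) ^ 2 ≤ (Real.sqrt tT * Real.sqrt tS) ^ 2 :=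
    pow_le_pow_left₀ hL0 final 2
  have hrhs : (Real.sqrt tT * Real.sqrt tS) ^ 2 = tT * tS := by
    rw [mul_pow, Real.sq_sqrt htT0, Real.sq_sqrt htS0]
  have hνtr' : tS = ∑ i, Real.sqrt (hU.eigenvalues i) := hνtr
  have hμtr' : tT = ∑ i, Real.sqrt (hV.eigenvalues i) := hμtr
  calc (∑ i, Real.sqrt (Real.sqrt (lamv i))) ^ 2
      ≤ tT * tS := by rw [← hrhs]; exact hsq
    _ = (∑ i, Real.sqrt (hU.eigenvalues i)) * (∑ i, Real.sqrt (hV.eigenvalues i)) := by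
        rw [hνtr', hμtr']; ring




variable {k : Type*} [Fintype k] [DecidableEq k]

lemma eq_zero_of_transpose_mul_self {α β : Type*} [Fintype α] [Fintype β]
    (M : Matrix α β ℝ) (h : Mᵀ * M = 0) : M = 0 := by
  have := (Matrix.conjTranspose_mul_self_eq_zero (A := M)).mp
  rw [real_conjT] at this
  exact this h

/-- sqrt jumps into a sum with at most one nonzero (embedded-indicator) term -/
lemma sqrt_sum_ite {β : Type*} [Fintype β] {d : ℕ} (e : β ↪ Fin d) (g : β → ℝ)
    (hg : ∀ x, 0 ≤ g x) (kk : Fin d) :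
    Real.sqrt (∑ x, if e x = kk then g x else 0)
      = ∑ x, if e x = kk then Real.sqrt (g x) else 0 := by
  by_cases hex : ∃ x, e x = kk
  · obtain ⟨x₀, hx₀⟩ := hex
    have h1 : (∑ x, if e x = kk then g x else 0) = g x₀ := by
      rw [Finset.sum_eq_single x₀]
      · rw [if_pos hx₀]
      · intro x _ hx
        rw [if_neg]
        intro hekk
        exact hx (e.injective (hekk.trans hx₀.symm))
      · intro h; exact absurd (Finset.mem_univ x₀) h
    have h2 : (∑ x, if e x = kk then Real.sqrt (g x) else 0) = Real.sqrt (g x₀) := by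
      rw [Finset.sum_eq_single x₀]
      · rw [if_pos hx₀]
      · intro x _ hx
        rw [if_neg]
        intro hekk
        exact hx (e.injective (hekk.trans hx₀.symm))
      · intro h; exact absurd (Finset.mem_univ x₀) h
    rw [h1, h2]
  · push_neg at hex
    have h1 : (∑ x, if e x = kk then g x else 0) = 0 :=
      Finset.sum_eq_zero fun x _ => if_neg (hex x)
    have h2 : (∑ x, if e x = kk then Real.sqrt (g x) else 0) = 0 :=
      Finset.sum_eq_zero fun x _ => if_neg (hex x)
    rw [h1, h2, Real.sqrt_zero]

/-- Construction of an optimal factorization. -/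
theorem exists_factorization {m n d : ℕ} (X : Matrix (Fin m) (Fin n) ℝ)
    (hA : (Xᵀ * X).IsHermitian) (hApsd : (Xᵀ * X).PosSemidef)
    (hcard : Fintype.card {i : Fin n // hA.eigenvalues i ≠ 0} ≤ d) :
    ∃ (U : Matrix (Fin m) (Fin d) ℝ) (V : Matrix (Fin n) (Fin d) ℝ),
      X = U * Vᵀ ∧
      (∀ (hU : (Uᵀ * U).IsHermitian),
        ∑ i, Real.sqrt (hU.eigenvalues i)
          = ∑ i, Real.sqrt (Real.sqrt (hA.eigenvalues i))) ∧
      (∀ (hV : (Vᵀ * V).IsHermitian),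
        ∑ i, Real.sqrt (hV.eigenvalues i)
          = ∑ i, Real.sqrt (Real.sqrt (hA.eigenvalues i))) := by
  classical
  set lamv := hA.eigenvalues with hlamv_def
  set QA : Matrix (Fin n) (Fin n) ℝ := (hA.eigenvectorUnitary : Matrix (Fin n) (Fin n) ℝ)
    with hQA_def
  have hQA1 : QA * QAᵀ = 1 := evU_mul_transpose hA
  have hQA2 : QAᵀ * QA = 1 := transpose_mul_evU hA
  have hspecA : Xᵀ * X = QA * diagonal lamv * QAᵀ := spectral_real hA
  have hlam : ∀ i, 0 ≤ lamv i := fun i => hApsd.eigenvalues_nonneg i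
  have hcard' : Fintype.card {i : Fin n // lamv i ≠ 0} ≤ Fintype.card (Fin d) := by
    simpa using hcard
  obtain ⟨e⟩ := Function.Embedding.nonempty_of_card_le hcard'
  -- indicator matrix
  set J : Matrix (Fin n) (Fin d) ℝ :=
    Matrix.of (fun i kk => if h : lamv i ≠ 0 then (if e ⟨i, h⟩ = kk then (1:ℝ) else 0) else 0)
    with hJ_def
  have hJ_apply : ∀ i kk, J i kk
      = if h : lamv i ≠ 0 then (if e ⟨i, h⟩ = kk then (1:ℝ) else 0) else 0 := fun i kk => rfl
  set d1 : Fin n → ℝ := fun i => if lamv i = 0 then 0 else (Real.sqrt (Real.sqrt (lamv i)))⁻¹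
    with hd1_def
  set d2 : Fin n → ℝ := fun i => Real.sqrt (Real.sqrt (lamv i)) with hd2_def
  set U0 : Matrix (Fin m) (Fin d) ℝ := X * (QA * diagonal d1) * J with hU0_def
  set V0 : Matrix (Fin n) (Fin d) ℝ := QA * diagonal d2 * J with hV0_def
  have hq4 : ∀ i, lamv i ≠ 0 → Real.sqrt (Real.sqrt (lamv i)) ≠ 0 := by
    intro i h
    have : 0 < lamv i := lt_of_le_of_ne (hlam i) (Ne.symm h)
    positivity
  set ind : Fin n → ℝ := fun i => if lamv i = 0 then 0 else 1 with hind_def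
  -- J * Jᵀ = diagonal ind
  have hJJT : J * Jᵀ = diagonal ind := by
    ext i i'
    rw [mul_apply, diagonal_apply]
    by_cases hi : lamv i = 0
    · have hz : ∀ kk, J i kk = 0 := by
        intro kk; rw [hJ_apply, dif_neg (by simpa using hi)]
      rw [Finset.sum_eq_zero fun kk _ => by rw [transpose_apply, hz kk, zero_mul]]
      by_cases hii' : i = i'
      · rw [if_pos hii', hind_def]; simp [hi]
      · rw [if_neg hii']
    · by_cases hii' : i = i'
      · subst hii'
        rw [if_pos rfl, hind_def]
        simp only [if_neg hi]
        have : ∀ kk, J i kk * Jᵀ kk i = if e ⟨i, hi⟩ = kk then (1:ℝ) else 0 := by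
          intro kk
          rw [transpose_apply, hJ_apply, dif_pos hi]
          by_cases h : e ⟨i, hi⟩ = kk <;> simp [h]
        rw [Finset.sum_congr rfl fun kk _ => this kk]
        rw [Finset.sum_ite_eq univ (e ⟨i, hi⟩) (fun _ => (1:ℝ))]
        simp
      · rw [if_neg hii']
        apply Finset.sum_eq_zero
        intro kk _
        rw [transpose_apply, hJ_apply i kk, hJ_apply i' kk]
        by_cases hi' : lamv i' = 0
        · rw [dif_neg (show ¬ lamv i' ≠ 0 from by simpa using hi'), mul_zero]
        · rw [dif_pos hi, dif_pos hi']
          by_cases h1 : e ⟨i, hi⟩ = kk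
          · by_cases h2 : e ⟨i', hi'⟩ = kk
            · exfalso
              apply hii'
              have := e.injective (h1.trans h2.symm)
              exact congrArg Subtype.val this
            · rw [if_neg h2, mul_zero]
          · rw [if_neg h1, zero_mul]
  -- X = U0 * V0ᵀ
  have hfact : X = U0 * V0ᵀ := by
    have hV0t : V0ᵀ = Jᵀ * diagonal d2 * QAᵀ := by
      rw [hV0_def, transpose_mul, transpose_mul, diagonal_transpose, Matrix.mul_assoc]
    have e1 : U0 * V0ᵀ = X * (QA * (diagonal d1 * ((J * Jᵀ) * (diagonal d2 * QAᵀ)))) := by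
      rw [hU0_def, hV0t]
      simp only [Matrix.mul_assoc]
    rw [e1, hJJT]
    have e2 : diagonal d1 * (diagonal ind * (diagonal d2 * QAᵀ))
        = diagonal (fun i => d1 i * (ind i * d2 i)) * QAᵀ := by
      rw [← Matrix.mul_assoc (diagonal ind), diagonal_mul_diagonal,
        ← Matrix.mul_assoc (diagonal d1), diagonal_mul_diagonal]
    rw [e2]
    have e3 : (fun i => d1 i * (ind i * d2 i)) = ind := by
      funext i
      by_cases h : lamv i = 0
      · simp [hd1_def, hd2_def, hind_def, h]
      · simp only [hd1_def, hd2_def, hind_def, if_neg h]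
        rw [one_mul, inv_mul_cancel₀ (hq4 i h)]
    rw [e3]
    -- now goal : X = X * (QA * (diagonal ind * QAᵀ))
    have habs : X * (QA * diagonal ind * QAᵀ) = X := by
      have hz : X * (QA * diagonal (fun i => ind i - 1) * QAᵀ) = 0 := by
        apply eq_zero_of_transpose_mul_self
        have h1 : (X * (QA * diagonal (fun i => ind i - 1) * QAᵀ))ᵀ
            = (QA * diagonal (fun i => ind i - 1) * QAᵀ) * Xᵀ := by
          rw [transpose_mul, conjdiag_transpose]
        rw [h1]
        have h2 : QA * diagonal (fun i => ind i - 1) * QAᵀ * Xᵀ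
              * (X * (QA * diagonal (fun i => ind i - 1) * QAᵀ))
            = (QA * diagonal (fun i => ind i - 1) * QAᵀ) * (Xᵀ * X)
              * (QA * diagonal (fun i => ind i - 1) * QAᵀ) := by
          simp only [Matrix.mul_assoc]
        rw [h2, hspecA, conjdiag_mul QA hQA2, conjdiag_mul QA hQA2]
        rw [conjdiag_congr QA _ (fun _ => (0:ℝ)) ?_, conjdiag_zero]
        intro i
        by_cases h : lamv i = 0 <;> simp [hind_def, h]
      have h3 : QA * diagonal ind * QAᵀ - 1 = QA * diagonal (fun i => ind i - 1) * QAᵀ := by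
        rw [← conjdiag_one QA hQA1, conjdiag_sub]
      have h4 : X * (QA * diagonal ind * QAᵀ - 1) = 0 := by rw [h3]; exact hz
      rw [Matrix.mul_sub, Matrix.mul_one, sub_eq_zero] at h4
      exact h4
    simp only [Matrix.mul_assoc] at habs
    exact habs.symm
  -- diagonal forms of the Gram matrices
  set c : Fin n → ℝ := fun i => Real.sqrt (lamv i) with hc_def
  set μ0 : Fin d → ℝ := fun kk => ∑ i, c i * (J i kk) with hμ0_def
  have hJcJ : ∀ (c' : Fin n → ℝ),
      Jᵀ * diagonal c' * J = diagonal (fun kk => ∑ i, c' i * (J i kk)) := by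
    intro c'
    ext kk kk'
    rw [Matrix.mul_assoc, mul_apply, diagonal_apply]
    have hterm : ∀ i, Jᵀ kk i * (diagonal c' * J) i kk' = J i kk * (c' i * J i kk') := by
      intro i
      rw [transpose_apply, diagonal_mul]
    rw [Finset.sum_congr rfl fun i _ => hterm i]
    by_cases hkk : kk = kk'
    · subst hkk
      rw [if_pos rfl]
      apply Finset.sum_congr rfl
      intro i _
      rw [hJ_apply i kk]
      by_cases hi : lamv i ≠ 0
      · rw [dif_pos hi]
        by_cases h : e ⟨i, hi⟩ = kk
        · rw [if_pos h, one_mul, mul_one]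
        · rw [if_neg h, zero_mul, mul_zero]
      · rw [dif_neg hi, zero_mul, mul_zero]
    · rw [if_neg hkk]
      apply Finset.sum_eq_zero
      intro i _
      rw [hJ_apply i kk, hJ_apply i kk']
      by_cases hi : lamv i ≠ 0
      · rw [dif_pos hi, dif_pos hi]
        by_cases h1 : e ⟨i, hi⟩ = kk
        · by_cases h2 : e ⟨i, hi⟩ = kk'
          · exact absurd (h1.symm.trans h2) hkk
          · rw [if_neg h2, mul_zero, mul_zero]
        · rw [if_neg h1, zero_mul]
      · rw [dif_neg hi, zero_mul]
  have hV0gram : V0ᵀ * V0 = diagonal μ0 := by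
    have h1 : V0ᵀ * V0 = Jᵀ * (diagonal d2 * (QAᵀ * QA) * diagonal d2) * J := by
      rw [hV0_def, transpose_mul, transpose_mul, diagonal_transpose]
      simp only [Matrix.mul_assoc]
    rw [h1, hQA2, Matrix.mul_one, diagonal_mul_diagonal]
    have h2 : (fun i => d2 i * d2 i) = c := by
      funext i
      rw [hd2_def, hc_def, Real.mul_self_sqrt (Real.sqrt_nonneg _)]
    rw [show Jᵀ * diagonal (fun i => d2 i * d2 i) * J = Jᵀ * diagonal c * J from by rw [h2]]
    rw [hJcJ c]
  have hU0gram : U0ᵀ * U0 = diagonal μ0 := by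
    have h1 : U0ᵀ * U0 = Jᵀ * (diagonal d1 * (QAᵀ * (Xᵀ * X) * QA) * diagonal d1) * J := by
      rw [hU0_def, transpose_mul, transpose_mul, transpose_mul, diagonal_transpose]
      simp only [Matrix.mul_assoc]
    have h2 : QAᵀ * (Xᵀ * X) * QA = diagonal lamv := by
      rw [hspecA]
      rw [show QAᵀ * (QA * diagonal lamv * QAᵀ) * QA
        = (QAᵀ * QA) * diagonal lamv * (QAᵀ * QA) from by simp only [Matrix.mul_assoc]]
      rw [hQA2, Matrix.one_mul, Matrix.mul_one]
    rw [h1, h2, diagonal_mul_diagonal, diagonal_mul_diagonal]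
    have h3 : (fun i => d1 i * lamv i * d1 i) = c := by
      funext i
      by_cases h : lamv i = 0
      · simp [hd1_def, hc_def, h]
      · have hs : Real.sqrt (Real.sqrt (lamv i)) * Real.sqrt (Real.sqrt (lamv i))
            = Real.sqrt (lamv i) := Real.mul_self_sqrt (Real.sqrt_nonneg _)
        have hss : Real.sqrt (lamv i) * Real.sqrt (lamv i) = lamv i :=
          Real.mul_self_sqrt (hlam i)
        simp only [hd1_def, hc_def, if_neg h]
        rw [← hss, ← hs]
        have h4 := hq4 i h
        field_simp
        have h5 : Real.sqrt (Real.sqrt (Real.sqrt (lamv i)) ^ 4)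
            = Real.sqrt (Real.sqrt (lamv i)) ^ 2 := by
          rw [show (4:ℕ) = 2 * 2 from rfl, pow_mul, Real.sqrt_sq (by positivity)]
        rw [h5, Real.sqrt_sq (Real.sqrt_nonneg (Real.sqrt (lamv i)))]
        ring
    rw [show (fun i => d1 i * lamv i * d1 i) = c from h3]
    rw [hJcJ c]
  -- sum of sqrt of μ0 equals ∑ √√λ
  have hsum : ∑ kk, Real.sqrt (μ0 kk) = ∑ i, Real.sqrt (Real.sqrt (lamv i)) := by
    have hite : ∀ kk, μ0 kk = ∑ x : {i : Fin n // lamv i ≠ 0},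
        (if e x = kk then c x.1 else 0) := by
      intro kk
      have hb : μ0 kk = ∑ i, c i * J i kk := rfl
      rw [hb]
      have step0 : ∀ i, c i * J i kk
          = if h : lamv i ≠ 0 then (if e ⟨i, h⟩ = kk then c i else 0) else 0 := by
        intro i
        rw [hJ_apply i kk]
        by_cases h : lamv i ≠ 0
        · rw [dif_pos h, dif_pos h]
          by_cases h2 : e ⟨i, h⟩ = kk
          · rw [if_pos h2, if_pos h2, mul_one]
          · rw [if_neg h2, if_neg h2, mul_zero]
        · rw [dif_neg h, dif_neg h, mul_zero]
      rw [Finset.sum_congr rfl fun i _ => step0 i]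
      rw [← Finset.sum_filter_of_ne (p := fun i => lamv i ≠ 0) (fun i _ hne => by
        by_contra hnp
        exact hne (dif_neg (not_not_intro hnp)))]
      rw [Finset.sum_subtype (p := fun i => lamv i ≠ 0)
        (univ.filter (fun i => lamv i ≠ 0)) (fun i => by simp) _]
      apply Finset.sum_congr rfl
      intro x _
      rw [dif_pos x.2]
    have hsqrt : ∀ kk, Real.sqrt (μ0 kk) = ∑ x : {i : Fin n // lamv i ≠ 0},
        (if e x = kk then Real.sqrt (c x.1) else 0) := by
      intro kk
      rw [hite kk]
      exact sqrt_sum_ite e (fun x => c x.1) (fun x => Real.sqrt_nonneg _) kk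
    rw [Finset.sum_congr rfl fun kk _ => hsqrt kk]
    rw [Finset.sum_comm]
    have hinner : ∀ x : {i : Fin n // lamv i ≠ 0},
        (∑ kk, if e x = kk then Real.sqrt (c x.1) else 0) = Real.sqrt (c x.1) := by
      intro x
      rw [Finset.sum_ite_eq univ (e x) (fun _ => Real.sqrt (c x.1))]
      simp
    rw [Finset.sum_congr rfl fun x _ => hinner x]
    -- now : ∑ x : subtype, √(c x) = ∑ i, √√λ i
    rw [← Finset.sum_subtype (p := fun i => lamv i ≠ 0)
      (univ.filter (fun i => lamv i ≠ 0)) (fun i => by simp)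
      (fun i => Real.sqrt (c i))]
    rw [Finset.sum_filter_of_ne (p := fun i => lamv i ≠ 0) (fun i _ hne => by
      intro h0
      apply hne
      rw [hc_def]
      simp [h0])]
  refine ⟨U0, V0, hfact, ?_, ?_⟩
  · intro hU
    have := sum_f_eig hU 1 μ0 (by simp) (by simpa using hU0gram) Real.sqrt
    rw [this, hsum]
  · intro hV
    have := sum_f_eig hV 1 μ0 (by simp) (by simpa using hV0gram) Real.sqrt
    rw [this, hsum]



end BiNuclearAux

/-- For `X` of rank `r ≤ d`, the minimum of `‖U‖_* ‖V‖_*` over factorizations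
`X = U Vᵀ` exists and equals `(Σ_i σ_i(X)^(1/2))²`. -/
theorem biNuclear_eq_schatten_half {m n r d : ℕ} (X : Matrix (Fin m) (Fin n) ℝ)
    (hrank : X.rank = r) (hd : r ≤ d) :
    IsLeast {t : ℝ | ∃ (U : Matrix (Fin m) (Fin d) ℝ) (V : Matrix (Fin n) (Fin d) ℝ),
        X = U * Vᵀ ∧ t = nuclearNorm U * nuclearNorm V}
      ((∑ i, singularValues X i ^ ((1 : ℝ) / 2)) ^ 2) := by
  classical
  have hA : (Xᵀ * X).IsHermitian := Matrix.isHermitian_conjTranspose_mul_self X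
  have hApsd : (Xᵀ * X).PosSemidef := Matrix.posSemidef_conjTranspose_mul_self X
  have hconst : (∑ i, singularValues X i ^ ((1 : ℝ) / 2))
      = ∑ i, Real.sqrt (Real.sqrt (hA.eigenvalues i)) := by
    apply Finset.sum_congr rfl
    intro i _
    rw [show singularValues X i = Real.sqrt (hA.eigenvalues i) from rfl, ← Real.sqrt_eq_rpow]
  constructor
  · -- membership: the optimal factorization
    have hcard : Fintype.card {i : Fin n // hA.eigenvalues i ≠ 0} ≤ d := by
      have h1 : (Xᵀ * X).rank = Fintype.card {i : Fin n // hA.eigenvalues i ≠ 0} :=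
        hA.rank_eq_card_non_zero_eigs
      have h2 : (Xᵀ * X).rank = X.rank := Matrix.rank_conjTranspose_mul_self X
      omega
    obtain ⟨U0, V0, hfact, hUval, hVval⟩ := BiNuclearAux.exists_factorization X hA hApsd hcard
    refine ⟨U0, V0, hfact, ?_⟩
    have hU' : (U0ᵀ * U0).IsHermitian := Matrix.isHermitian_conjTranspose_mul_self U0
    have hV' : (V0ᵀ * V0).IsHermitian := Matrix.isHermitian_conjTranspose_mul_self V0
    have hnU : nuclearNorm U0 = ∑ i, Real.sqrt (hU'.eigenvalues i) := rfl
    have hnV : nuclearNorm V0 = ∑ i, Real.sqrt (hV'.eigenvalues i) := rfl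
    rw [hconst, hnU, hnV, hUval hU', hVval hV']
    ring
  · -- lower bound
    rintro t ⟨U, V, hXUV, ht⟩
    rw [hconst, ht]
    have hU' : (Uᵀ * U).IsHermitian := Matrix.isHermitian_conjTranspose_mul_self U
    have hV' : (Vᵀ * V).IsHermitian := Matrix.isHermitian_conjTranspose_mul_self V
    have hnU : nuclearNorm U = ∑ i, Real.sqrt (hU'.eigenvalues i) := rfl
    have hnV : nuclearNorm V = ∑ i, Real.sqrt (hV'.eigenvalues i) := rfl
    rw [hnU, hnV]
    exact BiNuclearAux.lower_bound X U V hXUV hA hU' hV' hApsd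
end

section
/- Let X ∈ ℝ^{m×n} be a real matrix and let U ∈ ℝ^{m×d}, V ∈ ℝ^{n×d} be any matrices with X = UVᵀ. Then the Schatten-1/2 quasi-norm of X satisfies (Σ_i σ_i(X)^{1/2})² ≤ ‖U‖_* ‖V‖_*. -/
open Matrix Finset

/-- Abel-type bound: if `M` is pointwise nonneg and decreasing and all prefix sums of `d`
are nonpositive, then `∑_{i<K} M i * d i ≤ M K * (∑_{i<K} d i)`. -/
lemma abel_bound (M dd : ℕ → ℝ) (hM : ∀ i j, i ≤ j → M j ≤ M i)
    (K : ℕ) (hD : ∀ k, k ≤ K → ∑ i ∈ range k, dd i ≤ 0) :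
    ∑ i ∈ range K, M i * dd i ≤ M K * ∑ i ∈ range K, dd i := by
  induction K with
  | zero => simp
  | succ K ih =>
    have hD' : ∀ k, k ≤ K → ∑ i ∈ range k, dd i ≤ 0 := fun k hk => hD k (hk.trans (Nat.le_succ K))
    have h1 := ih hD'
    have h2 : M K * ∑ i ∈ range (K+1), dd i ≤ M (K+1) * ∑ i ∈ range (K+1), dd i := by
      have := hD (K+1) le_rfl
      nlinarith [hM K (K+1) (Nat.le_succ K)]
    rw [Finset.sum_range_succ (f := fun i => M i * dd i), Finset.sum_range_succ (f := dd), mul_add]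
    rw [Finset.sum_range_succ, mul_add, mul_add] at h2
    linarith

/-- Core of weak majorization: positive case. -/
lemma weyl_pos (a b : ℕ → ℝ) (K : ℕ) (ha : ∀ i, i < K → 0 < a i) (hb : ∀ i, i < K → 0 < b i)
    (hadesc : ∀ i j, i ≤ j → a j ≤ a i)
    (hprod : ∀ k, k ≤ K → ∏ i ∈ range k, a i ≤ ∏ i ∈ range k, b i) :
    ∑ i ∈ range K, a i ≤ ∑ i ∈ range K, b i := by
  set dd : ℕ → ℝ := fun i => Real.log (a i) - Real.log (b i) with hdd
  have key : ∀ i, i < K → a i - b i ≤ a i * dd i := by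
    intro i hi
    have hai := ha i hi; have hbi := hb i hi
    have h1 : Real.log (b i / a i) + 1 ≤ b i / a i := Real.add_one_le_exp _ |>.trans_eq
      (Real.exp_log (by positivity)) |>.trans_eq rfl
    rw [Real.log_div (ne_of_gt hbi) (ne_of_gt hai)] at h1
    have := mul_le_mul_of_nonneg_left h1 hai.le
    rw [mul_div_cancel₀ _ (ne_of_gt hai)] at this
    simp only [hdd]
    nlinarith
  have hD : ∀ k, k ≤ K → ∑ i ∈ range k, dd i ≤ 0 := by
    intro k hk
    have hpa : (0:ℝ) < ∏ i ∈ range k, a i :=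
      Finset.prod_pos (fun i hi => ha i ((mem_range.mp hi).trans_le hk))
    have hpb : (0:ℝ) < ∏ i ∈ range k, b i :=
      Finset.prod_pos (fun i hi => hb i ((mem_range.mp hi).trans_le hk))
    have : Real.log (∏ i ∈ range k, a i) ≤ Real.log (∏ i ∈ range k, b i) :=
      Real.log_le_log hpa (hprod k hk)
    rw [Real.log_prod (fun i hi => ne_of_gt (ha i ((mem_range.mp hi).trans_le hk))),
        Real.log_prod (fun i hi => ne_of_gt (hb i ((mem_range.mp hi).trans_le hk)))] at this
    simp only [hdd, Finset.sum_sub_distrib]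
    linarith
  -- if a K could be negative... we need 0 ≤ M K; M := a; a is decreasing but a K may be ≤ 0?
  -- use M i := max (a i) 0
  have habel := abel_bound (fun i => max (a i) 0) dd
    (fun i j hij => max_le_max (hadesc i j hij) le_rfl) K hD
  have h1 : ∑ i ∈ range K, (a i - b i) ≤ ∑ i ∈ range K, (max (a i) 0) * dd i := by
    apply Finset.sum_le_sum
    intro i hi
    have hi' := mem_range.mp hi
    rw [max_eq_left (ha i hi').le]
    exact key i hi'
  have h2 : (max (a K) 0) * ∑ i ∈ range K, dd i ≤ 0 :=
    mul_nonpos_of_nonneg_of_nonpos (le_max_right _ _) (hD K le_rfl)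
  rw [Finset.sum_sub_distrib] at h1
  linarith

/-- Weak log-majorization implies weak majorization, for nonnegative decreasing sequences. -/
lemma weyl_majorization (a b : ℕ → ℝ) (n : ℕ)
    (ha0 : ∀ i, 0 ≤ a i) (hb0 : ∀ i, 0 ≤ b i)
    (hadesc : ∀ i j, i ≤ j → a j ≤ a i)
    (hprod : ∀ k, k ≤ n → ∏ i ∈ range k, a i ≤ ∏ i ∈ range k, b i) :
    ∑ i ∈ range n, a i ≤ ∑ i ∈ range n, b i := by
  classical
  have hex : ∃ k, k = n ∨ ¬ (0 < a k) ∨ ¬ (0 < b k) := ⟨n, Or.inl rfl⟩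
  set K := Nat.find hex with hK
  have hKspec := Nat.find_spec hex
  have hKmin : ∀ k, k < K → 0 < a k ∧ 0 < b k ∧ k ≠ n := by
    intro k hk
    have := Nat.find_min hex hk
    push_neg at this
    exact ⟨this.2.1, this.2.2, this.1⟩
  have hKn : K ≤ n := Nat.find_le (Or.inl rfl)
  have hcore : ∑ i ∈ range K, a i ≤ ∑ i ∈ range K, b i := by
    apply weyl_pos a b K (fun i hi => (hKmin i hi).1) (fun i hi => (hKmin i hi).2.1) hadesc
    exact fun k hk => hprod k (hk.trans hKn)
  by_cases hKeq : K = n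
  · rw [← hKeq]; exact hcore
  have hKlt : K < n := lt_of_le_of_ne hKn hKeq
  have haK : a K = 0 := by
    rcases hKspec with h | h | h
    · exact absurd h hKeq
    · exact le_antisymm (not_lt.mp h) (ha0 K)
    · have hbK : b K = 0 := le_antisymm (not_lt.mp h) (hb0 K)
      have hpb : ∏ i ∈ range (K+1), b i = 0 :=
        Finset.prod_eq_zero (Finset.self_mem_range_succ K) hbK
      have hpa : ∏ i ∈ range (K+1), a i ≤ 0 := by
        rw [← hpb]; exact hprod (K+1) hKlt
      have hpa0 : ∏ i ∈ range (K+1), a i = 0 :=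
        le_antisymm hpa (Finset.prod_nonneg (fun i _ => ha0 i))
      rw [Finset.prod_eq_zero_iff] at hpa0
      obtain ⟨j, hj, hja⟩ := hpa0
      exact le_antisymm (hja ▸ hadesc j K (Nat.lt_succ_iff.mp (mem_range.mp hj))) (ha0 K)
  have htail : ∀ i, K ≤ i → a i = 0 :=
    fun i hi => le_antisymm (haK ▸ hadesc K i hi) (ha0 i)
  have hsplit : ∑ i ∈ range n, a i = ∑ i ∈ range K, a i := by
    rw [← Finset.sum_range_add_sum_Ico a hKn]
    rw [Finset.sum_congr rfl (fun i hi => htail i (Finset.mem_Ico.mp hi).1)]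
    simp
  rw [hsplit]
  exact hcore.trans (Finset.sum_le_sum_of_subset_of_nonneg
      (Finset.range_subset_range.mpr hKn) (fun i _ _ => hb0 i))

lemma psd_det_nonneg {k : ℕ} {S : Matrix (Fin k) (Fin k) ℝ} (hS : S.PosSemidef) :
    0 ≤ S.det := by
  rw [hS.isHermitian.det_eq_prod_eigenvalues]
  have := fun i => hS.eigenvalues_nonneg i
  exact Finset.prod_nonneg fun i _ => by exact_mod_cast this i

/-- Key expansion lemma (Cauchy–Binet style): conjugating a nonnegative diagonal
matrix by `A` gives determinant at most `c * det (Aᵀ A)` whenever all `k`-subset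
products of the weights are at most `c`. -/
lemma det_conj_diag_le {d k : ℕ} (A : Matrix (Fin d) (Fin k) ℝ) (w : Fin d → ℝ)
    (c : ℝ) (hc0 : 0 ≤ c)
    (hc : ∀ T : Finset (Fin d), T.card = k → ∏ i ∈ T, w i ≤ c) :
    (Aᵀ * Matrix.diagonal w * A).det ≤ c * (Aᵀ * A).det := by
  classical
  set Φ : (Fin k → ℝ) [⋀^Fin k]→ₗ[ℝ] ℝ := Matrix.detRowAlternating with hΦ
  set I : Finset (Fin k → Fin d) := univ.filter Function.Injective with hI
  set ψ : (Fin k → Fin d) → ℝ := fun f => (∏ j, A (f j) j) * Φ (fun j => A (f j)) with hψ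
  set pC : Finset (Finset (Fin d)) := Finset.powersetCard k univ with hpC
  set cT : Finset (Fin d) → ℝ := fun T => ∑ f ∈ I.filter (fun f => univ.image f = T), ψ f with hcT
  -- the spine identity
  have spine : ∀ v : Fin d → ℝ,
      (Aᵀ * Matrix.diagonal v * A).det = ∑ T ∈ pC, (∏ i ∈ T, v i) * cT T := by
    intro v
    have hM : (Aᵀ * Matrix.diagonal v * A) =
        Matrix.of (fun j => ∑ i, (v i * A i j) • (A i)) := by
      ext j l
      simp only [Matrix.mul_apply, Matrix.transpose_apply, Matrix.diagonal_apply,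
        Matrix.of_apply, Finset.sum_apply, Pi.smul_apply, smul_eq_mul, mul_ite, mul_zero,
        ite_mul, zero_mul, Finset.sum_ite_eq', Finset.sum_ite_eq, Finset.mem_univ, if_true]
      exact Finset.sum_congr rfl fun i _ => by ring
    have h1 : (Aᵀ * Matrix.diagonal v * A).det
        = Φ (fun j => ∑ i, (v i * A i j) • (A i)) := by
      rw [hM]; rfl
    have hms : (Φ fun j => ∑ i : Fin d, (v i * A i j) • A i)
        = ∑ f : Fin k → Fin d, Φ fun j => (v (f j) * A (f j) j) • A (f j) :=
      Φ.toMultilinearMap.map_sum (g := fun j i => (v i * A i j) • A i)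
    rw [h1, hms]
    have h2 : ∀ f : Fin k → Fin d,
        (Φ fun j => (v (f j) * A (f j) j) • A (f j)) = (∏ j, v (f j)) * ψ f := by
      intro f
      have hsm : (Φ fun j => (v (f j) * A (f j) j) • A (f j))
          = (∏ j, (v (f j) * A (f j) j)) • Φ (fun j => A (f j)) :=
        Φ.toMultilinearMap.map_smul_univ _ _
      rw [hsm, Finset.prod_mul_distrib, smul_eq_mul, hψ]
      ring
    rw [Finset.sum_congr rfl fun f _ => h2 f]
    -- kill non-injective terms
    rw [← Finset.sum_filter_add_sum_filter_not univ Function.Injective]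
    have h3 : ∑ f ∈ univ.filter (fun f => ¬ Function.Injective f),
        (∏ j, v (f j)) * ψ f = 0 := by
      apply Finset.sum_eq_zero
      intro f hf
      have hni : ¬ Function.Injective f := (Finset.mem_filter.mp hf).2
      obtain ⟨x, y, hxy, hne⟩ := Function.not_injective_iff.mp hni
      have : Φ (fun j => A (f j)) = 0 :=
        Φ.map_eq_zero_of_eq _ (by rw [hxy]) hne
      simp [hψ, this]
    rw [h3, add_zero]
    -- group by image
    have hmaps : ∀ f ∈ I, univ.image f ∈ pC := by
      intro f hf
      have hinj : Function.Injective f := (Finset.mem_filter.mp hf).2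
      rw [hpC, Finset.mem_powersetCard]
      exact ⟨Finset.subset_univ _, by
        rw [Finset.card_image_of_injective _ hinj, Finset.card_univ, Fintype.card_fin]⟩
    rw [← Finset.sum_fiberwise_of_maps_to hmaps]
    apply Finset.sum_congr rfl
    intro T _
    rw [Finset.mul_sum]
    apply Finset.sum_congr rfl
    intro f hf
    have hf' := Finset.mem_filter.mp hf
    have hinj : Function.Injective f := (Finset.mem_filter.mp hf'.1).2
    have himg : univ.image f = T := hf'.2
    congr 1
    rw [← himg, Finset.prod_image (fun x _ y _ h => hinj h)]
  -- nonnegativity of cT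
  have hcT0 : ∀ T ∈ pC, 0 ≤ cT T := by
    intro T hT
    have hTcard : T.card = k := (Finset.mem_powersetCard.mp hT).2
    set v : Fin d → ℝ := fun i => if i ∈ T then (1:ℝ) else 0 with hv
    have hsp := spine v
    have hps : ∀ T' ∈ pC, (∏ i ∈ T', v i) * cT T' = if T' = T then cT T else 0 := by
      intro T' hT'
      have hT'card : T'.card = k := (Finset.mem_powersetCard.mp hT').2
      by_cases heq : T' = T
      · subst heq
        rw [if_pos rfl, Finset.prod_eq_one (fun i hi => by simp [hv, hi]), one_mul]
      · rw [if_neg heq]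
        have hnsub : ¬ T' ⊆ T := by
          intro hsub
          exact heq (Finset.eq_of_subset_of_card_le hsub (by rw [hTcard, hT'card]))
        obtain ⟨i, hiT', hiT⟩ := Finset.not_subset.mp hnsub
        rw [Finset.prod_eq_zero hiT' (by simp [hv, hiT]), zero_mul]
    rw [Finset.sum_congr rfl hps, Finset.sum_ite_eq' pC T (fun _ => cT T), if_pos hT] at hsp
    rw [← hsp]
    -- positivity via PSD
    have hvv : (Matrix.diagonal v) * (Matrix.diagonal v) = Matrix.diagonal v := by
      rw [Matrix.diagonal_mul_diagonal]
      have : (fun i => v i * v i) = v := by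
        funext i; by_cases hi : i ∈ T <;> simp [hv, hi]
      rw [this]
    have hvv' : Matrix.diagonal v * (Matrix.diagonal v * A) = Matrix.diagonal v * A := by
      rw [← Matrix.mul_assoc, hvv]
    have hform : Aᵀ * Matrix.diagonal v * A = (Matrix.diagonal v * A)ᵀ * (Matrix.diagonal v * A) := by
      simp only [Matrix.transpose_mul, Matrix.diagonal_transpose, Matrix.mul_assoc, hvv']
    rw [hform]
    have := Matrix.posSemidef_conjTranspose_mul_self (Matrix.diagonal v * A)
    rw [Matrix.conjTranspose_eq_transpose_of_trivial] at this
    exact psd_det_nonneg this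
  -- final
  have hone : (Aᵀ * A).det = ∑ T ∈ pC, cT T := by
    have := spine (fun _ => 1)
    simpa [Matrix.diagonal_one] using this
  rw [spine w, hone, Finset.mul_sum]
  apply Finset.sum_le_sum
  intro T hT
  exact mul_le_mul_of_nonneg_right (hc T (Finset.mem_powersetCard.mp hT).2) (hcT0 T hT)

lemma strictMono_fin_le_apply {k N : ℕ} (f : Fin k → Fin N) (hf : StrictMono f) :
    ∀ p (hp : p < k), p ≤ (f ⟨p, hp⟩ : ℕ) := by
  intro p
  induction p with
  | zero => intro hp; exact Nat.zero_le _
  | succ q ih =>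
    intro hp
    have hq : q < k := Nat.lt_of_succ_lt hp
    have h2 : f ⟨q, hq⟩ < f ⟨q+1, hp⟩ := hf (by simp [Fin.lt_def])
    exact Nat.succ_le_of_lt (lt_of_le_of_lt (ih hq) h2)

/-- A product over a `k`-subset of nonnegative weights is at most the product of the
`k` largest weights (given by a sorting permutation). -/
lemma subset_prod_le_sorted {N k : ℕ} (w : Fin N → ℝ) (hw : ∀ i, 0 ≤ w i)
    (π : Equiv.Perm (Fin N)) (hπ : ∀ i j : Fin N, i ≤ j → w (π j) ≤ w (π i))
    (T : Finset (Fin N)) (hT : T.card = k) (hk : k ≤ N) :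
    ∏ i ∈ T, w i ≤ ∏ j : Fin k, w (π (Fin.castLE hk j)) := by
  classical
  set S : Finset (Fin N) := T.image π.symm with hS
  have hScard : S.card = k := by
    rw [hS, Finset.card_image_of_injective _ π.symm.injective, hT]
  have h1 : ∏ i ∈ T, w i = ∏ s ∈ S, w (π s) := by
    rw [hS, Finset.prod_image (fun x _ y _ h => π.symm.injective h)]
    exact (Finset.prod_congr rfl fun x _ => by rw [Equiv.apply_symm_apply]).symm
  set ι := S.orderIsoOfFin hScard with hι
  have h2 : ∏ s ∈ S, w (π s) = ∏ j : Fin k, w (π (ι j)) := by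
    rw [← Finset.prod_coe_sort S (fun s => w (π s))]
    exact (Equiv.prod_comp ι.toEquiv (fun s : S => w (π s))).symm
  rw [h1, h2]
  apply Finset.prod_le_prod (fun j _ => hw _)
  intro j _
  apply hπ
  have hsm : StrictMono (fun j : Fin k => ((ι j : Fin N))) := by
    intro a b hab
    exact Subtype.coe_lt_coe.mpr (ι.strictMono hab)
  have := strictMono_fin_le_apply _ hsm j.1 j.2
  rw [Fin.le_def]
  simpa using this

lemma sqrt_prod' {α : Type*} (s : Finset α) (f : α → ℝ) (hf : ∀ i ∈ s, 0 ≤ f i) :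
    Real.sqrt (∏ i ∈ s, f i) = ∏ i ∈ s, Real.sqrt (f i) := by
  induction s using Finset.cons_induction with
  | empty => simp
  | cons a s ha ih =>
    rw [Finset.prod_cons, Finset.prod_cons, Real.sqrt_mul (hf a (Finset.mem_cons_self a s)),
      ih (fun i hi => hf i (Finset.mem_cons.mpr (Or.inr hi)))]

/-- Determinant of `x•1 - S` for a real symmetric matrix factors over eigenvalues. -/
lemma det_smul_one_sub_eq {p : ℕ} (S : Matrix (Fin p) (Fin p) ℝ) (hS : S.IsHermitian) (x : ℝ) :
    (x • (1 : Matrix (Fin p) (Fin p) ℝ) - S).det = ∏ i, (x - hS.eigenvalues i) := by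
  have hdiag := hS.conjStarAlgAut_star_eigenvectorUnitary
  rw [Unitary.conjStarAlgAut_star_apply] at hdiag
  rw [RCLike.ofReal_real_eq_id] at hdiag
  set W : Matrix (Fin p) (Fin p) ℝ := (hS.eigenvectorUnitary : Matrix (Fin p) (Fin p) ℝ) with hW
  have hWW : W * star W = 1 := (Matrix.mem_unitaryGroup_iff).mp hS.eigenvectorUnitary.2
  have hWW' : star W * W = 1 := (Matrix.mem_unitaryGroup_iff').mp hS.eigenvectorUnitary.2
  have key : star W * (x • (1 : Matrix (Fin p) (Fin p) ℝ) - S) * W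
      = Matrix.diagonal (fun i => x - hS.eigenvalues i) := by
    rw [Matrix.mul_sub, Matrix.sub_mul]
    have h1 : star W * (x • (1 : Matrix (Fin p) (Fin p) ℝ)) * W = x • 1 := by
      rw [Matrix.mul_smul, Matrix.mul_one, Matrix.smul_mul, hWW']
    rw [h1, hdiag]
    ext i j
    by_cases h : i = j <;>
      simp [Matrix.diagonal_apply, h, Matrix.one_apply, Matrix.sub_apply, Function.comp]
  have hdet : (star W * (x • (1 : Matrix (Fin p) (Fin p) ℝ) - S) * W).det
      = (x • (1 : Matrix (Fin p) (Fin p) ℝ) - S).det := by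
    rw [Matrix.det_mul, Matrix.det_mul, mul_comm, ← mul_assoc, ← Matrix.det_mul, hWW,
      Matrix.det_one, one_mul]
  rw [← hdet, key, Matrix.det_diagonal]
section PolyPart
open Polynomial

/-- The multisets of eigenvalues of `V Vᴴ` and `Vᴴ V` agree up to zero padding. -/
lemma eig_mul_comm_multiset {n d : ℕ} (V : Matrix (Fin n) (Fin d) ℝ)
    (hμ : (V * Vᴴ).IsHermitian) (hν : (Vᴴ * V).IsHermitian) :
    (Multiset.map hμ.eigenvalues Finset.univ.val) + Multiset.replicate d 0
      = (Multiset.map hν.eigenvalues Finset.univ.val) + Multiset.replicate n 0 := by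
  classical
  set μ := hμ.eigenvalues with hμdef
  set ν := hν.eigenvalues with hνdef
  -- pointwise determinant identity
  have hpt : ∀ x : ℝ, x ≠ 0 →
      (∏ i, (x - μ i)) * x ^ d = (∏ i, (x - ν i)) * x ^ n := by
    intro x hx
    set D : ℝ := (1 + Vᴴ * ((-x⁻¹) • V)).det with hD
    have e1 : (x • (1 : Matrix (Fin n) (Fin n) ℝ) - V * Vᴴ).det = x ^ n * D := by
      have h1 : x • (1 : Matrix (Fin n) (Fin n) ℝ) - V * Vᴴ
          = x • (1 + ((-x⁻¹) • V) * Vᴴ) := by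
        rw [smul_add, Matrix.smul_mul, smul_smul]
        rw [mul_neg, mul_inv_cancel₀ hx]
        rw [neg_smul, one_smul, ← sub_eq_add_neg]
      rw [h1, Matrix.det_smul, Fintype.card_fin, Matrix.det_one_add_mul_comm]
    have e2 : (x • (1 : Matrix (Fin d) (Fin d) ℝ) - Vᴴ * V).det = x ^ d * D := by
      have h1 : x • (1 : Matrix (Fin d) (Fin d) ℝ) - Vᴴ * V
          = x • (1 + Vᴴ * ((-x⁻¹) • V)) := by
        rw [smul_add, Matrix.mul_smul, smul_smul]
        rw [mul_neg, mul_inv_cancel₀ hx]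
        rw [neg_smul, one_smul, ← sub_eq_add_neg]
      rw [h1, Matrix.det_smul, Fintype.card_fin]
    have f1 := det_smul_one_sub_eq (V * Vᴴ) hμ x
    have f2 := det_smul_one_sub_eq (Vᴴ * V) hν x
    rw [f1] at e1; rw [f2] at e2
    rw [e1, e2]; ring
  -- polynomial identity
  set P : Polynomial ℝ := (∏ i, (X - C (μ i))) * X ^ d with hP
  set Q : Polynomial ℝ := (∏ i, (X - C (ν i))) * X ^ n with hQ
  have hPQ : P = Q := by
    apply Polynomial.eq_of_infinite_eval_eq
    apply Set.Infinite.mono (s := {x : ℝ | x ≠ 0})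
    · intro x hx
      have := hpt x hx
      simp only [Set.mem_setOf_eq, hP, hQ, eval_mul, eval_pow, eval_X, eval_prod, eval_sub,
        eval_C]
      exact this
    · exact Set.Finite.infinite_compl (Set.finite_singleton 0)
  -- take roots
  have hProots : P.roots = (Multiset.map μ Finset.univ.val) + Multiset.replicate d 0 := by
    have hm1 : (∏ i, (X - C (μ i)) : Polynomial ℝ).Monic :=
      monic_prod_of_monic _ _ (fun i _ => monic_X_sub_C _)
    have hm2 : ((X : Polynomial ℝ) ^ d).Monic := monic_X_pow d
    rw [hP, Polynomial.roots_mul (by exact (hm1.mul hm2).ne_zero)]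
    congr 1
    · rw [Finset.prod_eq_multiset_prod]
      have hmm : Multiset.map (fun i => X - C (μ i)) Finset.univ.val
          = Multiset.map (fun a => X - C a) (Multiset.map μ Finset.univ.val) := by
        rw [Multiset.map_map]; rfl
      rw [hmm]
      exact Polynomial.roots_multiset_prod_X_sub_C _
    · rw [Polynomial.roots_pow, Polynomial.roots_X, Multiset.nsmul_singleton]
  have hQroots : Q.roots = (Multiset.map ν Finset.univ.val) + Multiset.replicate n 0 := by
    have hm1 : (∏ i, (X - C (ν i)) : Polynomial ℝ).Monic :=
      monic_prod_of_monic _ _ (fun i _ => monic_X_sub_C _)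
    have hm2 : ((X : Polynomial ℝ) ^ n).Monic := monic_X_pow n
    rw [hQ, Polynomial.roots_mul (by exact (hm1.mul hm2).ne_zero)]
    congr 1
    · rw [Finset.prod_eq_multiset_prod]
      have hmm : Multiset.map (fun i => X - C (ν i)) Finset.univ.val
          = Multiset.map (fun a => X - C a) (Multiset.map ν Finset.univ.val) := by
        rw [Multiset.map_map]; rfl
      rw [hmm]
      exact Polynomial.roots_multiset_prod_X_sub_C _
    · rw [Polynomial.roots_pow, Polynomial.roots_X, Multiset.nsmul_singleton]
  rw [← hProots, ← hQroots, hPQ]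

/-- Sums of square roots of eigenvalues of `V Vᴴ` and `Vᴴ V` agree. -/
lemma sum_sqrt_eig_mul_comm {n d : ℕ} (V : Matrix (Fin n) (Fin d) ℝ)
    (hμ : (V * Vᴴ).IsHermitian) (hν : (Vᴴ * V).IsHermitian) :
    ∑ i, Real.sqrt (hμ.eigenvalues i) = ∑ i, Real.sqrt (hν.eigenvalues i) := by
  have h := eig_mul_comm_multiset V hμ hν
  have h2 := congrArg (fun s : Multiset ℝ => (s.map Real.sqrt).sum) h
  simp only [Multiset.map_add, Multiset.map_map, Multiset.map_replicate, Multiset.sum_add,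
    Multiset.sum_replicate, Real.sqrt_zero, smul_zero, add_zero] at h2
  rw [Finset.sum_eq_multiset_sum, Finset.sum_eq_multiset_sum]
  simpa using h2

end PolyPart

lemma compress_eq {n k : ℕ} (W S : Matrix (Fin n) (Fin n) ℝ) (ι : Fin k → Fin n) :
    ((W.submatrix id ι)ᵀ * S * (W.submatrix id ι)) = (Wᵀ * S * W).submatrix ι ι := by
  ext j l
  simp only [Matrix.mul_apply, Matrix.transpose_apply, Matrix.submatrix_apply, id_eq]

/-- Horn-type inequality: any `k`-subset product of eigenvalues of `XᴴX` (`X = UVᴴ`)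
is bounded by bounds on `k`-subset products of eigenvalues of `UᴴU` and `VVᴴ`. -/
lemma horn_step {m n d k : ℕ}
    (X : Matrix (Fin m) (Fin n) ℝ) (U : Matrix (Fin m) (Fin d) ℝ) (V : Matrix (Fin n) (Fin d) ℝ)
    (hX : X = U * Vᴴ)
    (hSX : (Xᴴ * X).IsHermitian) (hSU : (Uᴴ * U).IsHermitian) (hSμ : (V * Vᴴ).IsHermitian)
    (T : Finset (Fin n)) (hT : T.card = k)
    (cU cV : ℝ) (hcU0 : 0 ≤ cU) (hcV0 : 0 ≤ cV)
    (hcU : ∀ T' : Finset (Fin d), T'.card = k → ∏ i ∈ T', hSU.eigenvalues i ≤ cU)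
    (hcV : ∀ T' : Finset (Fin n), T'.card = k → ∏ i ∈ T', hSμ.eigenvalues i ≤ cV) :
    ∏ i ∈ T, hSX.eigenvalues i ≤ cU * cV := by
  classical
  have htr : ∀ {p q : ℕ} (M : Matrix (Fin p) (Fin q) ℝ), Mᴴ = Mᵀ :=
    fun M => Matrix.conjTranspose_eq_transpose_of_trivial M
  set lX := hSX.eigenvalues with hlX
  set lU := hSU.eigenvalues with hlU
  set lμ := hSμ.eigenvalues with hlμ
  set W : Matrix (Fin n) (Fin n) ℝ := (hSX.eigenvectorUnitary : Matrix (Fin n) (Fin n) ℝ)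
    with hWdef
  have hdiagX : Wᵀ * (Xᴴ * X) * W = Matrix.diagonal lX := by
    have h := hSX.conjStarAlgAut_star_eigenvectorUnitary
    rw [Unitary.conjStarAlgAut_star_apply] at h
    rwa [RCLike.ofReal_real_eq_id, Function.id_comp, Matrix.star_eq_conjTranspose, htr W] at h
  have hWW : Wᵀ * W = 1 := by
    have h := (Matrix.mem_unitaryGroup_iff').mp hSX.eigenvectorUnitary.2
    rwa [Matrix.star_eq_conjTranspose, htr W] at h
  set WU : Matrix (Fin d) (Fin d) ℝ := (hSU.eigenvectorUnitary : Matrix (Fin d) (Fin d) ℝ)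
    with hWUdef
  have hdiagU : Uᴴ * U = WU * Matrix.diagonal lU * WUᵀ := by
    have h := hSU.spectral_theorem
    rw [Unitary.conjStarAlgAut_apply] at h
    rwa [RCLike.ofReal_real_eq_id, Function.id_comp, Matrix.star_eq_conjTranspose, htr WU] at h
  have hWUWU : WU * WUᵀ = 1 := by
    have h := (Matrix.mem_unitaryGroup_iff).mp hSU.eigenvectorUnitary.2
    rwa [Matrix.star_eq_conjTranspose, htr WU] at h
  set W2 : Matrix (Fin n) (Fin n) ℝ := (hSμ.eigenvectorUnitary : Matrix (Fin n) (Fin n) ℝ)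
    with hW2def
  have hdiagμ : V * Vᴴ = W2 * Matrix.diagonal lμ * W2ᵀ := by
    have h := hSμ.spectral_theorem
    rw [Unitary.conjStarAlgAut_apply] at h
    rwa [RCLike.ofReal_real_eq_id, Function.id_comp, Matrix.star_eq_conjTranspose, htr W2] at h
  have hW2W2 : W2 * W2ᵀ = 1 := by
    have h := (Matrix.mem_unitaryGroup_iff).mp hSμ.eigenvectorUnitary.2
    rwa [Matrix.star_eq_conjTranspose, htr W2] at h
  set ι : Fin k → Fin n := fun j => T.orderEmbOfFin hT j with hι
  have hιinj : Function.Injective ι := fun a b h => (T.orderEmbOfFin hT).injective h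
  set E : Matrix (Fin n) (Fin k) ℝ := W.submatrix id ι with hE
  have hEE : Eᵀ * E = 1 := by
    have h := compress_eq W 1 ι
    rw [Matrix.mul_one, Matrix.mul_one, hWW] at h
    rw [hE, h]
    ext j l
    simp [Matrix.submatrix_apply, Matrix.one_apply, hιinj.eq_iff]
  have hcompX : Eᵀ * (Xᴴ * X) * E = Matrix.diagonal (fun j => lX (ι j)) := by
    rw [hE, compress_eq, hdiagX]
    ext j l
    simp [Matrix.submatrix_apply, Matrix.diagonal_apply, hιinj.eq_iff]
  have hdetX : ∏ i ∈ T, lX i = (Eᵀ * (Xᴴ * X) * E).det := by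
    rw [hcompX, Matrix.det_diagonal]
    have hTim : Finset.image ι Finset.univ = T := by
      ext x
      simp only [Finset.mem_image, Finset.mem_univ, true_and]
      constructor
      · rintro ⟨j, rfl⟩; exact Finset.orderEmbOfFin_mem T hT j
      · intro hx
        have : x ∈ Set.range (T.orderEmbOfFin hT) := by
          rw [Finset.range_orderEmbOfFin]; exact hx
        exact this
    rw [← hTim, Finset.prod_image (fun a _ b _ h => hιinj h)]
  set G : Matrix (Fin d) (Fin k) ℝ := Vᴴ * E with hG
  have hGT : Gᵀ = Eᵀ * V := by
    rw [hG, Matrix.transpose_mul, htr V, Matrix.transpose_transpose]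
  have hXX : Xᴴ * X = V * ((Uᴴ * U) * Vᴴ) := by
    rw [hX, Matrix.conjTranspose_mul, Matrix.conjTranspose_conjTranspose]
    simp only [Matrix.mul_assoc]
  have hM1 : Eᵀ * (Xᴴ * X) * E = Gᵀ * ((Uᴴ * U) * G) := by
    rw [hXX, hGT, hG]
    simp only [Matrix.mul_assoc]
  set A : Matrix (Fin d) (Fin k) ℝ := WUᵀ * G with hA
  have hAT : Aᵀ = Gᵀ * WU := by rw [hA, Matrix.transpose_mul, Matrix.transpose_transpose]
  have hM2 : Gᵀ * ((Uᴴ * U) * G) = Aᵀ * Matrix.diagonal lU * A := by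
    rw [hdiagU, hAT, hA]
    simp only [Matrix.mul_assoc]
  have hAA : Aᵀ * A = Gᵀ * G := by
    rw [hAT, hA, Matrix.mul_assoc, ← Matrix.mul_assoc WU, hWUWU, Matrix.one_mul]
  have hGG : Gᵀ * G = Eᵀ * (V * Vᴴ) * E := by
    rw [hGT, hG]
    simp only [Matrix.mul_assoc]
  set B : Matrix (Fin n) (Fin k) ℝ := W2ᵀ * E with hB
  have hBT : Bᵀ = Eᵀ * W2 := by rw [hB, Matrix.transpose_mul, Matrix.transpose_transpose]
  have hM4 : Eᵀ * (V * Vᴴ) * E = Bᵀ * Matrix.diagonal lμ * B := by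
    rw [hdiagμ, hBT, hB]
    simp only [Matrix.mul_assoc]
  have hBB : Bᵀ * B = 1 := by
    rw [hBT, hB, Matrix.mul_assoc, ← Matrix.mul_assoc W2, hW2W2, Matrix.one_mul, hEE]
  have d1 : (Aᵀ * Matrix.diagonal lU * A).det ≤ cU * (Aᵀ * A).det :=
    det_conj_diag_le A lU cU hcU0 hcU
  have d2 : (Bᵀ * Matrix.diagonal lμ * B).det ≤ cV * (Bᵀ * B).det :=
    det_conj_diag_le B lμ cV hcV0 hcV
  calc ∏ i ∈ T, lX i = (Eᵀ * (Xᴴ * X) * E).det := hdetX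
    _ = (Aᵀ * Matrix.diagonal lU * A).det := by rw [hM1, hM2]
    _ ≤ cU * (Aᵀ * A).det := d1
    _ = cU * (Bᵀ * Matrix.diagonal lμ * B).det := by rw [hAA, hGG, hM4]
    _ ≤ cU * (cV * (Bᵀ * B).det) := mul_le_mul_of_nonneg_left d2 hcU0
    _ = cU * cV := by rw [hBB, Matrix.det_one, mul_one]



open Matrix

/-- For any factorization `X = U Vᵀ`, the Schatten-1/2 quasi-norm of `X`
satisfies `(Σ_i σ_i(X)^(1/2))² ≤ ‖U‖_* ‖V‖_*`. -/
theorem schatten_half_le_nuclear_mul_nuclear {m n d : ℕ}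
    (X : Matrix (Fin m) (Fin n) ℝ) (U : Matrix (Fin m) (Fin d) ℝ)
    (V : Matrix (Fin n) (Fin d) ℝ) (hX : X = U * Vᵀ) :
    (∑ i, singularValues X i ^ ((1 : ℝ) / 2)) ^ 2 ≤ nuclearNorm U * nuclearNorm V := by
  classical
  have htr : ∀ {p q : ℕ} (M : Matrix (Fin p) (Fin q) ℝ), Mᴴ = Mᵀ :=
    fun M => Matrix.conjTranspose_eq_transpose_of_trivial M
  have hX' : X = U * Vᴴ := by rw [hX, htr V]
  have hSX : (Xᴴ * X).IsHermitian := Matrix.isHermitian_conjTranspose_mul_self X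
  have hSU : (Uᴴ * U).IsHermitian := Matrix.isHermitian_conjTranspose_mul_self U
  have hSV : (Vᴴ * V).IsHermitian := Matrix.isHermitian_conjTranspose_mul_self V
  have hSμ : (V * Vᴴ).IsHermitian := Matrix.isHermitian_mul_conjTranspose_self V
  set lX := hSX.eigenvalues with hlX
  set lU := hSU.eigenvalues with hlU
  set lμ := hSμ.eigenvalues with hlμ
  have hlX0 : ∀ i, 0 ≤ lX i := fun i =>
    (Matrix.posSemidef_conjTranspose_mul_self X).eigenvalues_nonneg i
  have hlU0 : ∀ i, 0 ≤ lU i := fun i =>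
    (Matrix.posSemidef_conjTranspose_mul_self U).eigenvalues_nonneg i
  have hlμ0 : ∀ i, 0 ≤ lμ i := fun i =>
    (Matrix.posSemidef_self_mul_conjTranspose V).eigenvalues_nonneg i
  -- descending sorting permutations
  set πX : Equiv.Perm (Fin n) := Fin.revPerm.trans (Tuple.sort lX) with hπX
  set πU : Equiv.Perm (Fin d) := Fin.revPerm.trans (Tuple.sort lU) with hπU
  set πμ : Equiv.Perm (Fin n) := Fin.revPerm.trans (Tuple.sort lμ) with hπμ
  have hπXd : ∀ i j : Fin n, i ≤ j → lX (πX j) ≤ lX (πX i) := by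
    intro i j hij
    have hm := Tuple.monotone_sort lX
    have h2 : Fin.rev j ≤ Fin.rev i := Fin.rev_le_rev.mpr hij
    simpa [hπX, Equiv.trans_apply] using hm h2
  have hπUd : ∀ i j : Fin d, i ≤ j → lU (πU j) ≤ lU (πU i) := by
    intro i j hij
    have hm := Tuple.monotone_sort lU
    have h2 : Fin.rev j ≤ Fin.rev i := Fin.rev_le_rev.mpr hij
    simpa [hπU, Equiv.trans_apply] using hm h2
  have hπμd : ∀ i j : Fin n, i ≤ j → lμ (πμ j) ≤ lμ (πμ i) := by
    intro i j hij
    have hm := Tuple.monotone_sort lμ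
    have h2 : Fin.rev j ≤ Fin.rev i := Fin.rev_le_rev.mpr hij
    simpa [hπμ, Equiv.trans_apply] using hm h2
  -- padded ℕ-indexed sequences
  set aseq : ℕ → ℝ :=
    fun i => if h : i < n then Real.sqrt (Real.sqrt (lX (πX ⟨i, h⟩))) else 0 with haseq
  set useq : ℕ → ℝ :=
    fun i => if h : i < d then Real.sqrt (Real.sqrt (lU (πU ⟨i, h⟩))) else 0 with huseq
  set eseq : ℕ → ℝ :=
    fun i => if h : i < n then Real.sqrt (Real.sqrt (lμ (πμ ⟨i, h⟩))) else 0 with heseq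
  have ha0 : ∀ i, 0 ≤ aseq i := by
    intro i; simp only [haseq]; split
    · exact Real.sqrt_nonneg _
    · exact le_rfl
  have hu0 : ∀ i, 0 ≤ useq i := by
    intro i; simp only [huseq]; split
    · exact Real.sqrt_nonneg _
    · exact le_rfl
  have he0 : ∀ i, 0 ≤ eseq i := by
    intro i; simp only [heseq]; split
    · exact Real.sqrt_nonneg _
    · exact le_rfl
  -- descending property of padded sequences
  have hdesc : ∀ (N : ℕ) (w : Fin N → ℝ), (∀ i j : Fin N, i ≤ j → w j ≤ w i) →
      (∀ i, 0 ≤ w i) → ∀ i j : ℕ, i ≤ j →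
      (if h : j < N then w ⟨j, h⟩ else 0) ≤ (if h : i < N then w ⟨i, h⟩ else 0) := by
    intro N w hw hw0 i j hij
    by_cases hj : j < N
    · rw [dif_pos hj, dif_pos (lt_of_le_of_lt hij hj)]
      exact hw ⟨i, lt_of_le_of_lt hij hj⟩ ⟨j, hj⟩ hij
    · rw [dif_neg hj]
      by_cases hi : i < N
      · rw [dif_pos hi]; exact hw0 _
      · rw [dif_neg hi]
  have haD : ∀ i j : ℕ, i ≤ j → aseq j ≤ aseq i := by
    intro i j hij
    exact hdesc n (fun t => Real.sqrt (Real.sqrt (lX (πX t))))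
      (fun a b hab => Real.sqrt_le_sqrt (Real.sqrt_le_sqrt (hπXd a b hab)))
      (fun t => Real.sqrt_nonneg _) i j hij
  have huD : ∀ i j : ℕ, i ≤ j → useq j ≤ useq i := by
    intro i j hij
    exact hdesc d (fun t => Real.sqrt (Real.sqrt (lU (πU t))))
      (fun a b hab => Real.sqrt_le_sqrt (Real.sqrt_le_sqrt (hπUd a b hab)))
      (fun t => Real.sqrt_nonneg _) i j hij
  have heD : ∀ i j : ℕ, i ≤ j → eseq j ≤ eseq i := by
    intro i j hij
    exact hdesc n (fun t => Real.sqrt (Real.sqrt (lμ (πμ t))))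
      (fun a b hab => Real.sqrt_le_sqrt (Real.sqrt_le_sqrt (hπμd a b hab)))
      (fun t => Real.sqrt_nonneg _) i j hij
  -- prefix products of aseq as 4th roots
  have hLa : ∀ k (hk : k ≤ n), ∏ i ∈ Finset.range k, aseq i
      = Real.sqrt (Real.sqrt (∏ j : Fin k, lX (πX (Fin.castLE hk j)))) := by
    intro k hk
    have h1 : ∀ j : Fin k, aseq j = Real.sqrt (Real.sqrt (lX (πX (Fin.castLE hk j)))) := by
      intro j
      simp only [haseq]
      rw [dif_pos (lt_of_lt_of_le j.2 hk)]
      rfl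
    rw [← Fin.prod_univ_eq_prod_range, Finset.prod_congr rfl (fun j _ => h1 j),
      ← sqrt_prod' _ _ (fun j _ => Real.sqrt_nonneg _),
      ← sqrt_prod' _ _ (fun j _ => hlX0 _)]
  have hLu : ∀ k (hk : k ≤ d), ∏ i ∈ Finset.range k, useq i
      = Real.sqrt (Real.sqrt (∏ j : Fin k, lU (πU (Fin.castLE hk j)))) := by
    intro k hk
    have h1 : ∀ j : Fin k, useq j = Real.sqrt (Real.sqrt (lU (πU (Fin.castLE hk j)))) := by
      intro j
      simp only [huseq]
      rw [dif_pos (lt_of_lt_of_le j.2 hk)]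
      rfl
    rw [← Fin.prod_univ_eq_prod_range, Finset.prod_congr rfl (fun j _ => h1 j),
      ← sqrt_prod' _ _ (fun j _ => Real.sqrt_nonneg _),
      ← sqrt_prod' _ _ (fun j _ => hlU0 _)]
  have hLe : ∀ k (hk : k ≤ n), ∏ i ∈ Finset.range k, eseq i
      = Real.sqrt (Real.sqrt (∏ j : Fin k, lμ (πμ (Fin.castLE hk j)))) := by
    intro k hk
    have h1 : ∀ j : Fin k, eseq j = Real.sqrt (Real.sqrt (lμ (πμ (Fin.castLE hk j)))) := by
      intro j
      simp only [heseq]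
      rw [dif_pos (lt_of_lt_of_le j.2 hk)]
      rfl
    rw [← Fin.prod_univ_eq_prod_range, Finset.prod_congr rfl (fun j _ => h1 j),
      ← sqrt_prod' _ _ (fun j _ => Real.sqrt_nonneg _),
      ← sqrt_prod' _ _ (fun j _ => hlμ0 _)]
  -- the key prefix inequality
  have hkey : ∀ k, k ≤ n → ∏ i ∈ Finset.range k, aseq i
      ≤ ∏ i ∈ Finset.range k, (useq i * eseq i) := by
    intro k hk
    set T : Finset (Fin n) := Finset.image (fun j => πX (Fin.castLE hk j)) Finset.univ with hT
    have hinj : Function.Injective (fun j : Fin k => πX (Fin.castLE hk j)) :=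
      fun a b hab => Fin.castLE_injective hk (πX.injective hab)
    have hTcard : T.card = k := by
      rw [hT, Finset.card_image_of_injective _ hinj]
      simp
    have hTprod : ∏ i ∈ T, lX i = ∏ j : Fin k, lX (πX (Fin.castLE hk j)) := by
      rw [hT, Finset.prod_image (fun a _ b _ h => hinj h)]
    set cV : ℝ := ∏ j : Fin k, lμ (πμ (Fin.castLE hk j)) with hcV
    have hcV0 : 0 ≤ cV := Finset.prod_nonneg (fun j _ => hlμ0 _)
    have hcVb : ∀ T' : Finset (Fin n), T'.card = k → ∏ i ∈ T', lμ i ≤ cV :=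
      fun T' hT' => subset_prod_le_sorted lμ hlμ0 πμ hπμd T' hT' hk
    rw [Finset.prod_mul_distrib]
    by_cases hkd : k ≤ d
    · set cU : ℝ := ∏ j : Fin k, lU (πU (Fin.castLE hkd j)) with hcU
      have hcU0 : 0 ≤ cU := Finset.prod_nonneg (fun j _ => hlU0 _)
      have hcUb : ∀ T' : Finset (Fin d), T'.card = k → ∏ i ∈ T', lU i ≤ cU :=
        fun T' hT' => subset_prod_le_sorted lU hlU0 πU hπUd T' hT' hkd
      have hP := horn_step X U V hX' hSX hSU hSμ T hTcard cU cV hcU0 hcV0 hcUb hcVb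
      rw [hTprod] at hP
      rw [hLa k hk, hLu k hkd, hLe k hk]
      calc Real.sqrt (Real.sqrt (∏ j : Fin k, lX (πX (Fin.castLE hk j))))
          ≤ Real.sqrt (Real.sqrt (cU * cV)) := Real.sqrt_le_sqrt (Real.sqrt_le_sqrt hP)
        _ = Real.sqrt (Real.sqrt cU) * Real.sqrt (Real.sqrt cV) := by
            rw [Real.sqrt_mul hcU0, Real.sqrt_mul (Real.sqrt_nonneg _)]
    · -- k > d : both sides vanish
      have hdk : d < k := not_le.mp hkd
      have hcUb : ∀ T' : Finset (Fin d), T'.card = k → ∏ i ∈ T', lU i ≤ 0 := by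
        intro T' hT'
        exfalso
        have h2 := Finset.card_le_univ T'
        simp only [hT', Finset.card_univ, Fintype.card_fin] at h2
        omega
      have hP := horn_step X U V hX' hSX hSU hSμ T hTcard 0 cV le_rfl hcV0 hcUb hcVb
      rw [zero_mul, hTprod] at hP
      have hP0 : ∏ j : Fin k, lX (πX (Fin.castLE hk j)) = 0 :=
        le_antisymm hP (Finset.prod_nonneg (fun j _ => hlX0 _))
      have hu_d : ∏ i ∈ Finset.range k, useq i = 0 := by
        apply Finset.prod_eq_zero (Finset.mem_range.mpr hdk)
        simp only [huseq]
        rw [dif_neg (lt_irrefl d)]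
      rw [hLa k hk, hP0, hu_d, Real.sqrt_zero, Real.sqrt_zero, zero_mul]
  -- weak majorization
  have hbD : ∀ i j : ℕ, i ≤ j → useq j * eseq j ≤ useq i * eseq i :=
    fun i j hij => mul_le_mul (huD i j hij) (heD i j hij) (he0 j) (hu0 i)
  have hwey := weyl_majorization aseq (fun i => useq i * eseq i) n ha0
    (fun i => mul_nonneg (hu0 i) (he0 i)) haD hkey
  -- identify the left sum
  have hsum_a : ∑ i, singularValues X i ^ ((1 : ℝ) / 2) = ∑ i ∈ Finset.range n, aseq i := by
    have h1 : ∀ i : Fin n, singularValues X i ^ ((1 : ℝ) / 2)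
        = Real.sqrt (Real.sqrt (lX i)) := by
      intro i
      rw [show singularValues X i = Real.sqrt (lX i) from rfl, Real.sqrt_eq_rpow (Real.sqrt (lX i))]
    rw [Finset.sum_congr rfl (fun i _ => h1 i), ← Equiv.sum_comp πX (fun i => Real.sqrt (Real.sqrt (lX i))),
      ← Fin.sum_univ_eq_sum_range]
    apply Finset.sum_congr rfl
    intro j _
    simp only [haseq]
    rw [dif_pos j.2]
  -- bound sum of useq squares by nuclear norm of U
  have hsq_u : ∀ i : ℕ, useq i ^ 2 = if h : i < d then Real.sqrt (lU (πU ⟨i, h⟩)) else 0 := by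
    intro i
    simp only [huseq]
    split
    · exact Real.sq_sqrt (Real.sqrt_nonneg _)
    · norm_num
  have hsum_u : ∑ i ∈ Finset.range n, useq i ^ 2 ≤ nuclearNorm U := by
    have hsub : ∑ i ∈ Finset.range n, useq i ^ 2 ≤ ∑ i ∈ Finset.range (max n d), useq i ^ 2 :=
      Finset.sum_le_sum_of_subset_of_nonneg
        (Finset.range_subset_range.mpr (le_max_left n d))
        (fun i _ _ => sq_nonneg _)
    have heq : ∑ i ∈ Finset.range (max n d), useq i ^ 2 = ∑ i ∈ Finset.range d, useq i ^ 2 := by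
      apply (Finset.sum_subset (Finset.range_subset_range.mpr (le_max_right n d)) _).symm
      intro x _ hx
      rw [hsq_u x, dif_neg (fun hc => hx (Finset.mem_range.mpr hc))]
    have heq2 : ∑ i ∈ Finset.range d, useq i ^ 2 = nuclearNorm U := by
      rw [← Fin.sum_univ_eq_sum_range]
      have h1 : ∀ j : Fin d, useq j ^ 2 = Real.sqrt (lU (πU j)) := by
        intro j
        rw [hsq_u j, dif_pos j.2]
      rw [Finset.sum_congr rfl (fun j _ => h1 j),
        Equiv.sum_comp πU (fun i => Real.sqrt (lU i))]
      rfl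
    rw [← heq2, ← heq]
    exact hsub
  -- sum of eseq squares equals nuclear norm of V
  have hsq_e : ∀ i : ℕ, eseq i ^ 2 = if h : i < n then Real.sqrt (lμ (πμ ⟨i, h⟩)) else 0 := by
    intro i
    simp only [heseq]
    split
    · exact Real.sq_sqrt (Real.sqrt_nonneg _)
    · norm_num
  have hsum_e : ∑ i ∈ Finset.range n, eseq i ^ 2 = nuclearNorm V := by
    rw [← Fin.sum_univ_eq_sum_range]
    have h1 : ∀ j : Fin n, eseq j ^ 2 = Real.sqrt (lμ (πμ j)) := by
      intro j
      rw [hsq_e j, dif_pos j.2]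
    rw [Finset.sum_congr rfl (fun j _ => h1 j),
      Equiv.sum_comp πμ (fun i => Real.sqrt (lμ i))]
    exact sum_sqrt_eig_mul_comm V hSμ hSV
  -- Cauchy–Schwarz
  have hbnn : 0 ≤ ∑ i ∈ Finset.range n, useq i * eseq i :=
    Finset.sum_nonneg (fun i _ => mul_nonneg (hu0 i) (he0 i))
  have hCS : ∑ i ∈ Finset.range n, useq i * eseq i
      ≤ Real.sqrt (∑ i ∈ Finset.range n, useq i ^ 2)
        * Real.sqrt (∑ i ∈ Finset.range n, eseq i ^ 2) := by
    have h := Finset.sum_mul_sq_le_sq_mul_sq (Finset.range n) useq eseq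
    have h2 := Real.sqrt_le_sqrt h
    rwa [Real.sqrt_sq hbnn, Real.sqrt_mul (Finset.sum_nonneg (fun i _ => sq_nonneg _))] at h2
  -- put it all together
  have hNU0 : 0 ≤ nuclearNorm U := Finset.sum_nonneg (fun i _ => Real.sqrt_nonneg _)
  have hNV0 : 0 ≤ nuclearNorm V := Finset.sum_nonneg (fun i _ => Real.sqrt_nonneg _)
  have hfin : ∑ i, singularValues X i ^ ((1 : ℝ) / 2)
      ≤ Real.sqrt (nuclearNorm U) * Real.sqrt (nuclearNorm V) := by
    rw [hsum_a]
    refine hwey.trans (hCS.trans ?_)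
    exact mul_le_mul (Real.sqrt_le_sqrt hsum_u) (le_of_eq (by rw [hsum_e]))
      (Real.sqrt_nonneg _) (Real.sqrt_nonneg _)
  have hann : 0 ≤ ∑ i, singularValues X i ^ ((1 : ℝ) / 2) :=
    Finset.sum_nonneg (fun i _ => Real.rpow_nonneg (Real.sqrt_nonneg _) _)
  calc (∑ i, singularValues X i ^ ((1 : ℝ) / 2)) ^ 2
      ≤ (Real.sqrt (nuclearNorm U) * Real.sqrt (nuclearNorm V)) ^ 2 :=
        pow_le_pow_left₀ hann hfin 2
    _ = nuclearNorm U * nuclearNorm V := by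
        rw [mul_pow, Real.sq_sqrt hNU0, Real.sq_sqrt hNV0]
end

section
/- Let X ∈ ℝ^{m×n} be a real matrix with rank(X) = r. Then there exist matrices U ∈ ℝ^{m×r} and V ∈ ℝ^{n×r} with X = UVᵀ such that ‖U‖_* ‖V‖_* = (Σ_i σ_i(X)^{1/2})², i.e., the square of the Schatten-1/2 quasi-norm sum is attained by some factorization. -/
open Matrix

open Polynomial Finset

lemma charpoly_similar' {k : ℕ} (P A Q : Matrix (Fin k) (Fin k) ℝ) (h1 : P * Q = 1) :
    (P * A * Q).charpoly = A.charpoly := by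
  have hm : ∀ M N : Matrix (Fin k) (Fin k) ℝ,
      (C : ℝ →+* ℝ[X]).mapMatrix (M * N) = C.mapMatrix M * C.mapMatrix N :=
    fun M N => map_mul _ M N
  have key : charmatrix (P * A * Q) = C.mapMatrix P * charmatrix A * C.mapMatrix Q := by
    unfold charmatrix
    rw [mul_sub, sub_mul]
    congr 1
    · rw [mul_assoc, (Matrix.scalar_commute (X : ℝ[X]) (Commute.all X) (C.mapMatrix Q)).eq,
        ← mul_assoc, ← hm, h1, _root_.map_one, one_mul]
    · rw [← hm, ← hm]
  rw [Matrix.charpoly, Matrix.charpoly, key, det_mul, det_mul]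
  have hd : (C.mapMatrix P).det * (C.mapMatrix Q).det = 1 := by
    rw [← det_mul, ← hm, h1, _root_.map_one, det_one]
  calc (C.mapMatrix P).det * (charmatrix A).det * (C.mapMatrix Q).det
      = (C.mapMatrix P).det * (C.mapMatrix Q).det * (charmatrix A).det := by ring
    _ = (charmatrix A).det := by rw [hd, one_mul]

lemma charpoly_isHermitian' {k : ℕ} {A : Matrix (Fin k) (Fin k) ℝ} (hA : A.IsHermitian) :
    A.charpoly = ∏ i, (X - C (hA.eigenvalues i)) := by
  conv_lhs => rw [hA.spectral_theorem, Unitary.conjStarAlgAut_apply]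
  rw [charpoly_similar' _ _ _ (Matrix.mem_unitaryGroup_iff.mp (hA.eigenvectorUnitary).2),
    Matrix.charpoly_of_upperTriangular _ (Matrix.blockTriangular_diagonal _)]
  simp

lemma sum_fun_eigenvalues_diagonal {k : ℕ} (g : ℝ → ℝ) (w : Fin k → ℝ)
    {A : Matrix (Fin k) (Fin k) ℝ} (hA : A.IsHermitian) (hAw : A = diagonal w) :
    ∑ i, g (hA.eigenvalues i) = ∑ i, g (w i) := by
  have h2 : A.charpoly = ∏ i, (X - C (w i)) := by
    rw [hAw, Matrix.charpoly_of_upperTriangular _ (Matrix.blockTriangular_diagonal _)]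
    simp
  have hms : (Finset.univ.val.map hA.eigenvalues) = Finset.univ.val.map w := by
    have h3 := (charpoly_isHermitian' hA).symm.trans h2
    have e1 : (∏ i, (X - C (hA.eigenvalues i)))
        = (Multiset.map (fun a => X - C a) (Multiset.map hA.eigenvalues univ.val)).prod := by
      rw [Multiset.map_map, Finset.prod_eq_multiset_prod]; rfl
    have e2 : (∏ i, (X - C (w i)))
        = (Multiset.map (fun a => X - C a) (Multiset.map w univ.val)).prod := by
      rw [Multiset.map_map, Finset.prod_eq_multiset_prod]; rfl
    rw [e1, e2] at h3
    have := congrArg Polynomial.roots h3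
    rwa [roots_multiset_prod_X_sub_C, roots_multiset_prod_X_sub_C] at this
  have e1 : ∑ i, g (hA.eigenvalues i)
      = (Multiset.map g (Multiset.map hA.eigenvalues univ.val)).sum := by
    rw [Multiset.map_map, Finset.sum_eq_multiset_sum]; rfl
  have e2 : ∑ i, g (w i) = (Multiset.map g (Multiset.map w univ.val)).sum := by
    rw [Multiset.map_map, Finset.sum_eq_multiset_sum]; rfl
  rw [e1, e2, hms]

lemma star_mul_self_mul_eq_diagonal' {k : ℕ} {A : Matrix (Fin k) (Fin k) ℝ}
    (hA : A.IsHermitian) :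
    star (hA.eigenvectorUnitary : Matrix (Fin k) (Fin k) ℝ) * A
      * (hA.eigenvectorUnitary : Matrix (Fin k) (Fin k) ℝ)
      = diagonal (RCLike.ofReal ∘ hA.eigenvalues) := by
  have h := hA.spectral_theorem
  rw [Unitary.conjStarAlgAut_apply] at h
  have hU : star (hA.eigenvectorUnitary : Matrix (Fin k) (Fin k) ℝ)
      * (hA.eigenvectorUnitary : Matrix (Fin k) (Fin k) ℝ) = 1 := Unitary.coe_star_mul_self _
  set U := (hA.eigenvectorUnitary : Matrix (Fin k) (Fin k) ℝ)
  set D : Matrix (Fin k) (Fin k) ℝ := diagonal (RCLike.ofReal ∘ hA.eigenvalues)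
  calc star U * A * U = star U * (U * D * star U) * U := by rw [← h]
    _ = D := by
      simp only [Matrix.mul_assoc, hU, Matrix.mul_one]
      rw [← Matrix.mul_assoc, hU, Matrix.one_mul]

/-- For `X` of rank `r`, there is a factorization `X = U Vᵀ` with
`U : m×r`, `V : n×r` attaining `‖U‖_* ‖V‖_* = (Σ_i σ_i(X)^(1/2))²`. -/
theorem schatten_half_attained {m n r : ℕ} (X : Matrix (Fin m) (Fin n) ℝ)
    (hrank : X.rank = r) :
    ∃ (U : Matrix (Fin m) (Fin r) ℝ) (V : Matrix (Fin n) (Fin r) ℝ),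
      X = U * Vᵀ ∧
      nuclearNorm U * nuclearNorm V =
        (∑ i, singularValues X i ^ ((1 : ℝ) / 2)) ^ 2 := by
  classical
  set hA := Matrix.isHermitian_conjTranspose_mul_self X with hhA
  set eig := hA.eigenvalues with heig
  set Q : Matrix (Fin n) (Fin n) ℝ := (hA.eigenvectorUnitary : Matrix (Fin n) (Fin n) ℝ)
    with hQdef
  have hstar : ∀ {a b : ℕ} (M : Matrix (Fin a) (Fin b) ℝ), Mᴴ = Mᵀ := by
    intro a b M; ext i j; simp [conjTranspose_apply]
  have hQQt : Q * Qᵀ = 1 := by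
    have := Matrix.mem_unitaryGroup_iff.mp (hA.eigenvectorUnitary).2
    rwa [← hstar Q]
  have hQtQ : Qᵀ * Q = 1 := by
    have := Matrix.mem_unitaryGroup_iff'.mp (hA.eigenvectorUnitary).2
    rwa [← hstar Q]
  have hsQ : star Q = Qᵀ := by rw [Matrix.star_eq_conjTranspose, hstar]
  have hdiagQ : Qᵀ * (Xᴴ * X) * Q = diagonal eig := by
    have h := star_mul_self_mul_eq_diagonal' hA
    rw [hsQ] at h
    rw [h, heig, RCLike.ofReal_real_eq_id, Function.id_comp]
  have eign : ∀ i, 0 ≤ eig i := fun i =>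
    (Matrix.posSemidef_conjTranspose_mul_self X).eigenvalues_nonneg i
  have hcard : Fintype.card {i // eig i ≠ 0} = r := by
    rw [← hA.rank_eq_card_non_zero_eigs, Matrix.rank_conjTranspose_mul_self, hrank]
  let e : Fin r ≃ {i // eig i ≠ 0} := (Fintype.equivFinOfCardEq hcard).symm
  set d : Fin r → ℝ := fun j => eig (e j) with hddef
  have hd : ∀ j, 0 < d j := fun j => lt_of_le_of_ne (eign _) (Ne.symm (e j).2)
  set Y : Matrix (Fin m) (Fin n) ℝ := X * Q with hYdef
  have hYY : ∀ a b, ∑ i, Y i a * Y i b = diagonal eig a b := by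
    intro a b
    have h1 : Yᵀ * Y = diagonal eig := by
      rw [hYdef, transpose_mul, ← hstar X, ← Matrix.mul_assoc,
        Matrix.mul_assoc Qᵀ Xᴴ X, hdiagQ]
    have := congrFun (congrFun h1 a) b
    simpa [mul_apply, transpose_apply] using this
  have hQQ : ∀ a b, ∑ i, Q i a * Q i b = (1 : Matrix (Fin n) (Fin n) ℝ) a b := by
    intro a b
    have := congrFun (congrFun hQtQ a) b
    simpa [mul_apply, transpose_apply] using this
  have hYcol : ∀ l, eig l = 0 → ∀ i, Y i l = 0 := by
    intro l hl i
    have h0 : ∑ i, Y i l * Y i l = 0 := by rw [hYY l l, diagonal_apply_eq, hl]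
    have := (Finset.sum_eq_zero_iff_of_nonneg
      (fun i _ => mul_self_nonneg (Y i l))).mp h0 i (mem_univ i)
    exact mul_self_eq_zero.mp this
  have hsum : ∀ f : Fin n → ℝ, (∀ l, eig l = 0 → f l = 0) →
      ∑ l, f l = ∑ j, f (e j) := by
    intro f hf
    have h1 : ∑ l, f l = ∑ l ∈ Finset.univ.filter (fun l => eig l ≠ 0), f l := by
      refine (Finset.sum_filter_of_ne ?_).symm
      intro x _ hx
      intro hc
      exact hx (hf x hc)
    have h2 : ∑ l ∈ Finset.univ.filter (fun l => eig l ≠ 0), f l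
        = ∑ t : {l // eig l ≠ 0}, f t :=
      Finset.sum_subtype _ (by simp) f
    have h3 : ∑ j, f (e j) = ∑ t : {l // eig l ≠ 0}, f t :=
      Equiv.sum_comp e (fun t => f t)
    rw [h1, h2, ← h3]
  set U : Matrix (Fin m) (Fin r) ℝ :=
    Matrix.of (fun i j => Y i (e j) * (d j) ^ (-(1/4) : ℝ)) with hUdef
  set V : Matrix (Fin n) (Fin r) ℝ :=
    Matrix.of (fun i j => Q i (e j) * (d j) ^ ((1/4) : ℝ)) with hVdef
  have ecoe_inj : ∀ {j j' : Fin r}, ((e j : Fin n) = (e j' : Fin n)) → j = j' := by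
    intro j j' h
    exact e.injective (Subtype.ext h)
  -- X = U * Vᵀ
  have hXUV : X = U * Vᵀ := by
    have hX : X = Y * Qᵀ := by
      rw [hYdef, Matrix.mul_assoc, hQQt, Matrix.mul_one]
    ext i k
    rw [mul_apply]
    have hrhs : ∀ j : Fin r, U i j * Vᵀ j k = Y i (e j) * Q k (e j) := by
      intro j
      have hc : d j ^ (-(1/4) : ℝ) * d j ^ ((1/4) : ℝ) = 1 := by
        rw [← Real.rpow_add (hd j)]; norm_num
      simp only [hUdef, hVdef, transpose_apply, Matrix.of_apply]
      calc Y i (e j) * d j ^ (-(1/4) : ℝ) * (Q k (e j) * d j ^ ((1/4) : ℝ))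
          = Y i (e j) * Q k (e j) * (d j ^ (-(1/4) : ℝ) * d j ^ ((1/4) : ℝ)) := by ring
        _ = Y i (e j) * Q k (e j) := by rw [hc, mul_one]
    rw [Finset.sum_congr rfl (fun j _ => hrhs j)]
    have hlhs : X i k = ∑ l, Y i l * Q k l := by
      rw [hX, mul_apply]; simp [transpose_apply]
    rw [hlhs]
    exact hsum (fun l => Y i l * Q k l) (fun l hl => by show Y i l * Q k l = 0; rw [hYcol l hl i, zero_mul])
  -- Uᴴ U and Vᴴ V are diagonal
  have hUtU : Uᴴ * U = diagonal (fun j => Real.sqrt (d j)) := by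
    ext j j'
    rw [mul_apply]
    simp only [conjTranspose_apply, star_trivial, hUdef, Matrix.of_apply]
    have hterm : ∀ i, Y i (e j) * d j ^ (-(1/4) : ℝ) * (Y i (e j') * d j' ^ (-(1/4) : ℝ))
        = Y i (e j) * Y i (e j') * (d j ^ (-(1/4) : ℝ) * d j' ^ (-(1/4) : ℝ)) :=
      fun i => by ring
    rw [Finset.sum_congr rfl (fun i _ => hterm i), ← Finset.sum_mul, hYY]
    by_cases h : j = j'
    · subst h
      rw [diagonal_apply_eq, diagonal_apply_eq]
      show eig (e j) * (d j ^ (-(1/4) : ℝ) * d j ^ (-(1/4) : ℝ)) = Real.sqrt (d j)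
      rw [← Real.rpow_add (hd j)]
      have : eig (e j) = d j ^ (1 : ℝ) := by rw [Real.rpow_one]
      rw [this, ← Real.rpow_add (hd j), Real.sqrt_eq_rpow]
      norm_num
    · have hne : (e j : Fin n) ≠ (e j' : Fin n) := fun hc => h (ecoe_inj hc)
      rw [diagonal_apply_ne _ hne, diagonal_apply_ne _ h, zero_mul]
  have hVtV : Vᴴ * V = diagonal (fun j => Real.sqrt (d j)) := by
    ext j j'
    rw [mul_apply]
    simp only [conjTranspose_apply, star_trivial, hVdef, Matrix.of_apply]
    have hterm : ∀ i, Q i (e j) * d j ^ ((1/4) : ℝ) * (Q i (e j') * d j' ^ ((1/4) : ℝ))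
        = Q i (e j) * Q i (e j') * (d j ^ ((1/4) : ℝ) * d j' ^ ((1/4) : ℝ)) :=
      fun i => by ring
    rw [Finset.sum_congr rfl (fun i _ => hterm i), ← Finset.sum_mul, hQQ]
    by_cases h : j = j'
    · subst h
      rw [one_apply_eq, diagonal_apply_eq, one_mul, ← Real.rpow_add (hd j),
        Real.sqrt_eq_rpow]
      norm_num
    · have hne : (e j : Fin n) ≠ (e j' : Fin n) := fun hc => h (ecoe_inj hc)
      rw [one_apply_ne hne, diagonal_apply_ne _ h, zero_mul]
  have hnormU : nuclearNorm U = ∑ j, Real.sqrt (Real.sqrt (d j)) := by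
    unfold nuclearNorm singularValues
    exact sum_fun_eigenvalues_diagonal Real.sqrt _ _ hUtU
  have hnormV : nuclearNorm V = ∑ j, Real.sqrt (Real.sqrt (d j)) := by
    unfold nuclearNorm singularValues
    exact sum_fun_eigenvalues_diagonal Real.sqrt _ _ hVtV
  have hRHS : ∑ i, singularValues X i ^ ((1 : ℝ) / 2) = ∑ j, Real.sqrt (Real.sqrt (d j)) := by
    have h1 : ∀ i, singularValues X i ^ ((1 : ℝ) / 2) = Real.sqrt (Real.sqrt (eig i)) := by
      intro i
      have h0 : singularValues X i = Real.sqrt (eig i) := rfl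
      rw [h0, ← Real.sqrt_eq_rpow]
    rw [Finset.sum_congr rfl (fun i _ => h1 i)]
    exact hsum (fun l => Real.sqrt (Real.sqrt (eig l)))
      (fun l hl => by show Real.sqrt (Real.sqrt (eig l)) = 0; rw [hl, Real.sqrt_zero, Real.sqrt_zero])
  refine ⟨U, V, hXUV, ?_⟩
  rw [hnormU, hnormV, hRHS, sq]
end
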